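/- arXiv:1101.4553 — 6 statements merged into one kernel-verified Lean document; each statement's English description precedes it below -/
import Mathlib

section
/- Let (n_k)_{k≥0} be a strictly increasing sequence of positive integers such that n_{k+1}/n_k → ∞ as k → ∞. Then there exists a compact perfect subset K of 𝕋 with the following two properties: (i) for every ε > 0 there exists a compact perfect subset K_ε of K such that sup_{k≥0} |λ^{n_k} − 1| ≤ ε for every λ ∈ K_ε; (ii) λ^{n_k} tends to 1 uniformly on K, i.e. sup_{λ∈K} |λ^{n_k} − 1| → 0 as k → ∞. -/
open Filter Topology
open Complex Real

namespace P34
variable (N : ℕ → ℕ) (ε : ℕ → Bool)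

noncomputable def tk : ℕ → ℝ
  | 0 => 0
  | (k+1) => (round ((N k : ℝ) * tk k) : ℝ) / N k + (if ε k then 2 / (N (k+1) : ℝ) else 0)

variable {N} in
lemma N_pos (hN1 : ∀ k, 1 ≤ N k) (k : ℕ) : (0:ℝ) < N k := by
  exact_mod_cast hN1 k

variable {N} in
lemma N_le (hN : ∀ k, (100:ℝ) * N k ≤ N (k+1)) (hN1 : ∀ k, 1 ≤ N k) (m k : ℕ) :
    (N m : ℝ) * 100 ^ k ≤ N (m + k) := by
  induction k with
  | zero => simp
  | succ k ih =>
    have h := hN (m + k)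
    calc (N m : ℝ) * 100 ^ (k+1) = ((N m : ℝ) * 100 ^ k) * 100 := by ring
    _ ≤ (N (m+k) : ℝ) * 100 := by nlinarith
    _ ≤ N (m + (k+1)) := by rw [show m + (k+1) = (m+k)+1 by ring]; nlinarith [hN (m+k)]

variable {N} in
lemma inv_N_le (hN : ∀ k, (100:ℝ) * N k ≤ N (k+1)) (hN1 : ∀ k, 1 ≤ N k) (m k : ℕ) :
    (1:ℝ) / N (m + k) ≤ (1/100) ^ k * (1 / N m) := by
  have h1 := N_le hN hN1 m k
  have h2 := N_pos hN1 m
  have h3 := N_pos hN1 (m + k)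
  have h4 : (0:ℝ) < 100 ^ k := by positivity
  have he : ((1:ℝ)/100) ^ k * (1 / N m) = 1 / (100 ^ k * N m) := by
    rw [div_pow, one_pow, div_mul_div_comm, one_mul]
  rw [he]
  apply one_div_le_one_div_of_le (by positivity)
  nlinarith

variable {N ε} in
lemma d_bound (hN : ∀ k, (100:ℝ) * N k ≤ N (k+1)) (hN1 : ∀ k, 1 ≤ N k) (k : ℕ) :
    |tk N ε (k+1) - tk N ε k| ≤ (3/5) / N k := by
  have hk := N_pos hN1 k
  have hk1 := N_pos hN1 (k+1)
  have h1 : |(round ((N k : ℝ) * tk N ε k) : ℝ) / N k - tk N ε k| ≤ 1 / (2 * N k) := by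
    have := abs_sub_round ((N k : ℝ) * tk N ε k)
    rw [show (round ((N k : ℝ) * tk N ε k) : ℝ) / N k - tk N ε k
        = ((round ((N k : ℝ) * tk N ε k) : ℝ) - (N k : ℝ) * tk N ε k) / N k by field_simp]
    rw [abs_div, abs_of_pos hk, div_le_div_iff₀ hk (by positivity)]
    rw [abs_sub_comm] at this
    nlinarith
  have h2 : |(if ε k then 2 / (N (k+1):ℝ) else 0)| ≤ 2 / (100 * N k) := by
    have hle : (2:ℝ) / (N (k+1)) ≤ 2 / (100 * N k) := by
      apply div_le_div_of_nonneg_left (by norm_num) (by positivity) (hN k)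
    rcases Bool.eq_false_or_eq_true (ε k) with h | h
    · rw [h, if_pos rfl, _root_.abs_of_nonneg (by positivity : (0:ℝ) ≤ 2 / (N (k+1):ℝ))]
      exact hle
    · simp [h]; positivity
  calc |tk N ε (k+1) - tk N ε k|
      = |((round ((N k : ℝ) * tk N ε k) : ℝ) / N k - tk N ε k)
        + (if ε k then 2 / (N (k+1):ℝ) else 0)| := by rw [tk]; ring_nf
    _ ≤ 1 / (2 * N k) + 2 / (100 * N k) := le_trans (abs_add_le _ _) (add_le_add h1 h2)
    _ ≤ (3/5) / N k := by rw [div_add_div _ _ (by positivity) (by positivity),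
        div_le_div_iff₀ (by positivity) hk]; ring_nf; nlinarith

noncomputable def tl : ℝ := ∑' k, (tk N ε (k+1) - tk N ε k)

variable {N ε} in
lemma summable_geo_bound (m : ℕ) (hN : ∀ k, (100:ℝ) * N k ≤ N (k+1)) (hN1 : ∀ k, 1 ≤ N k) :
    Summable (fun k => tk N ε (k+1+m) - tk N ε (k+m)) := by
  apply Summable.of_norm_bounded (g := fun k => (3/5) * (1/100)^k * (1/ N m))
  · exact (summable_geometric_of_lt_one (by norm_num) (by norm_num)).mul_left _ |>.mul_right _
  · intro k
    have h1 := d_bound hN hN1 (k := k + m) (ε := ε)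
    have h2 := inv_N_le hN hN1 m k
    rw [Real.norm_eq_abs]
    calc |tk N ε (k+1+m) - tk N ε (k+m)| = |tk N ε ((k+m)+1) - tk N ε (k+m)| := by ring_nf
    _ ≤ (3/5) / N (k+m) := h1
    _ = (3/5) * (1 / N (k + m)) := by ring
    _ ≤ (3/5) * ((1/100)^k * (1/N m)) := by
        have : (1:ℝ) / N (k+m) ≤ (1/100)^k * (1/N m) := by rw [Nat.add_comm k m]; exact h2
        nlinarith
    _ = (3/5) * (1/100)^k * (1/ N m) := by ring

variable {N ε} in
lemma summable_d (hN : ∀ k, (100:ℝ) * N k ≤ N (k+1)) (hN1 : ∀ k, 1 ≤ N k) :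
    Summable (fun k => tk N ε (k+1) - tk N ε k) := by
  simpa using summable_geo_bound (ε := ε) 0 hN hN1

variable {N ε} in
lemma tail_bound (hN : ∀ k, (100:ℝ) * N k ≤ N (k+1)) (hN1 : ∀ k, 1 ≤ N k) (m : ℕ) :
    |tl N ε - tk N ε m| ≤ (2/3) / N m := by
  have hsum := summable_d (ε := ε) hN hN1
  have htel : ∑ i ∈ Finset.range m, (tk N ε (i+1) - tk N ε i) = tk N ε m := by
    rw [Finset.sum_range_sub (f := tk N ε)]; simp [tk]
  have h := Summable.sum_add_tsum_nat_add m hsum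
  have hdiff : tl N ε - tk N ε m = ∑' k, (tk N ε (k+m+1) - tk N ε (k+m)) := by
    rw [tl, ← h, htel]
    ring
  rw [hdiff]
  have hgeo : Summable (fun k => (3/5) * (1/100:ℝ)^k * (1/ N m)) :=
    (summable_geometric_of_lt_one (by norm_num) (by norm_num)).mul_left _ |>.mul_right _
  have hs2' : Summable (fun k => ‖tk N ε (k+m+1) - tk N ε (k+m)‖) := by
    have := summable_norm_iff.mpr (summable_geo_bound (ε := ε) m hN hN1)
    simpa [show ∀ k, k+1+m = k+m+1 from fun k => by ring] using this
  have hb1 : |∑' k, (tk N ε (k+m+1) - tk N ε (k+m))| ≤ ∑' k, ‖tk N ε (k+m+1) - tk N ε (k+m)‖ :=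
    norm_tsum_le_tsum_norm hs2'
  have hb2 : ∑' k, ‖tk N ε (k+m+1) - tk N ε (k+m)‖ ≤ ∑' k, (3/5) * (1/100:ℝ)^k * (1/ N m) := by
    refine Summable.tsum_le_tsum ?_ hs2' hgeo
    intro k
    have h1 := d_bound hN hN1 (k := k + m) (ε := ε)
    have h2 := inv_N_le hN hN1 m k
    have hp := N_pos hN1 (k+m)
    rw [Real.norm_eq_abs]
    calc |tk N ε (k+m+1) - tk N ε (k+m)| ≤ (3/5) / N (k+m) := h1
    _ = (3/5) * (1 / N (k + m)) := by ring
    _ ≤ (3/5) * ((1/100)^k * (1/N m)) := by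
        have : (1:ℝ) / N (k+m) ≤ (1/100)^k * (1/N m) := by rw [Nat.add_comm k m]; exact h2
        nlinarith
    _ = (3/5) * (1/100)^k * (1/ N m) := by ring
  refine le_trans (le_trans hb1 hb2) ?_
  have heq : (∑' k, (3/5) * (1/100:ℝ)^k * (1/ (N m:ℝ))) = (3/5) * (1 - 1/100:ℝ)⁻¹ * (1/(N m:ℝ)) := by
    rw [tsum_mul_right, tsum_mul_left, tsum_geometric_of_lt_one (by norm_num) (by norm_num)]
  rw [heq]
  have := N_pos hN1 m
  rw [div_eq_mul_one_div (2/3 : ℝ) ((N m:ℝ))]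
  have h13 : (0:ℝ) ≤ 1/(N m:ℝ) := by positivity
  nlinarith

variable {N} in
lemma tk_congr {ε ε' : ℕ → Bool} (m : ℕ) (h : ∀ i < m, ε i = ε' i) :
    tk N ε m = tk N ε' m := by
  induction m with
  | zero => rfl
  | succ m ih =>
    have h1 : tk N ε m = tk N ε' m := ih (fun i hi => h i (Nat.lt_succ_of_lt hi))
    rw [tk, tk, h1, h m (Nat.lt_succ_self m)]

variable {N} in
lemma tk_zero {ε : ℕ → Bool} (m : ℕ) (h : ∀ i < m, ε i = false) :
    tk N ε m = 0 := by
  induction m with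
  | zero => rfl
  | succ m ih =>
    rw [tk, ih (fun i hi => h i (Nat.lt_succ_of_lt hi)), h m (Nat.lt_succ_self m)]
    simp

variable {N ε} in
lemma dist_int (hN : ∀ k, (100:ℝ) * N k ≤ N (k+1)) (hN1 : ∀ k, 1 ≤ N k) (j : ℕ) :
    |(N j : ℝ) * tl N ε - (round ((N j : ℝ) * tk N ε j) : ℤ)| ≤ (8/3) * N j / N (j+1) := by
  have hj := N_pos hN1 j
  have hj1 := N_pos hN1 (j+1)
  have htail := tail_bound (ε := ε) hN hN1 (j+1)
  have hkey : (N j : ℝ) * tk N ε (j+1)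
      = (round ((N j : ℝ) * tk N ε j) : ℤ) + (N j : ℝ) * (if ε j then 2 / (N (j+1):ℝ) else 0) := by
    rw [tk, mul_add]
    congr 1
    field_simp
  have hif : |(N j : ℝ) * (if ε j then 2 / (N (j+1):ℝ) else 0)| ≤ 2 * N j / N (j+1) := by
    rcases Bool.eq_false_or_eq_true (ε j) with h | h
    · rw [h, if_pos rfl, _root_.abs_of_nonneg (by positivity)]; exact le_of_eq (by ring)
    · rw [h, if_neg (by simp)]; simp; positivity
  have hsplit : (N j : ℝ) * tl N ε - (round ((N j : ℝ) * tk N ε j) : ℤ)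
      = (N j : ℝ) * (tl N ε - tk N ε (j+1))
        + (N j : ℝ) * (if ε j then 2 / (N (j+1):ℝ) else 0) := by
    rw [mul_sub]; linarith [hkey]
  calc |(N j : ℝ) * tl N ε - (round ((N j : ℝ) * tk N ε j) : ℤ)|
      = |(N j : ℝ) * (tl N ε - tk N ε (j+1))
        + (N j : ℝ) * (if ε j then 2 / (N (j+1):ℝ) else 0)| := by rw [hsplit]
    _ ≤ |(N j : ℝ) * (tl N ε - tk N ε (j+1))|
        + |(N j : ℝ) * (if ε j then 2 / (N (j+1):ℝ) else 0)| := abs_add_le _ _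
    _ ≤ (N j : ℝ) * ((2/3) / N (j+1)) + 2 * N j / N (j+1) := by
        refine add_le_add ?_ hif
        rw [abs_mul, _root_.abs_of_pos hj]
        exact mul_le_mul_of_nonneg_left htail (le_of_lt hj)
    _ = (8/3) * N j / N (j+1) := by field_simp; ring
    
variable {N} in
lemma tl_sep (hN : ∀ k, (100:ℝ) * N k ≤ N (k+1)) (hN1 : ∀ k, 1 ≤ N k)
    {ε ε' : ℕ → Bool} (m : ℕ) (hagree : ∀ i < m, ε i = ε' i) (hdiff : ε m ≠ ε' m) :
    (2/3) / N (m+1) ≤ |tl N ε - tl N ε'| := by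
  have hm1 := N_pos hN1 (m+1)
  have h1 : tk N ε m = tk N ε' m := tk_congr m hagree
  have h2 : |tk N ε (m+1) - tk N ε' (m+1)| = 2 / N (m+1) := by
    have hd : tk N ε (m+1) - tk N ε' (m+1)
        = (if ε m then 2/(N (m+1):ℝ) else 0) - (if ε' m then 2/(N (m+1):ℝ) else 0) := by
      rw [tk, tk, h1]; ring
    rcases Bool.eq_false_or_eq_true (ε m) with h | h
    · have h' : ε' m = false := by revert hdiff; rw [h]; cases ε' m <;> simp
      rw [hd, h, h', if_pos rfl, if_neg (by simp), sub_zero,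
        _root_.abs_of_nonneg (by positivity)]
    · have h' : ε' m = true := by revert hdiff; rw [h]; cases ε' m <;> simp
      rw [hd, h, h', if_neg (by simp), if_pos rfl, zero_sub, abs_neg,
        _root_.abs_of_nonneg (by positivity)]
  have t1 := tail_bound (ε := ε) hN hN1 (m+1)
  have t2 := tail_bound (ε := ε') hN hN1 (m+1)
  have habs : |tk N ε (m+1) - tk N ε' (m+1)|
      ≤ |tl N ε - tl N ε'| + |tl N ε - tk N ε (m+1)| + |tl N ε' - tk N ε' (m+1)| := by
    rw [show tk N ε (m+1) - tk N ε' (m+1)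
      = -(tl N ε - tk N ε (m+1)) + (tl N ε - tl N ε') + (tl N ε' - tk N ε' (m+1)) by ring]
    refine le_trans (abs_add_le _ _) ?_
    have := abs_add_le (-(tl N ε - tk N ε (m+1))) (tl N ε - tl N ε')
    rw [abs_neg] at this
    linarith [abs_neg (tl N ε - tk N ε (m+1))]
  rw [h2] at habs
  have : 2 / (N (m+1):ℝ) - (2/3)/N (m+1) - (2/3)/N (m+1) ≤ |tl N ε - tl N ε'| := by linarith
  refine le_trans ?_ this
  rw [div_sub_div_same, div_sub_div_same, div_le_div_iff₀ hm1 hm1]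
  nlinarith

variable {N} in
lemma tl_abs (hN : ∀ k, (100:ℝ) * N k ≤ N (k+1)) (hN1 : ∀ k, 1 ≤ N k)
    {ε : ℕ → Bool} {m : ℕ} (h : ∀ i < m, ε i = false) : |tl N ε| ≤ (2/3) / N m := by
  have := tail_bound (ε := ε) hN hN1 m
  rwa [tk_zero m h, sub_zero] at this

variable {N} in
lemma tl_close (hN : ∀ k, (100:ℝ) * N k ≤ N (k+1)) (hN1 : ∀ k, 1 ≤ N k)
    {ε ε' : ℕ → Bool} (m : ℕ) (hagree : ∀ i < m, ε i = ε' i) :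
    |tl N ε - tl N ε'| ≤ (4/3) / N m := by
  have h1 : tk N ε m = tk N ε' m := tk_congr m hagree
  have t1 := tail_bound (ε := ε) hN hN1 m
  have t2 := tail_bound (ε := ε') hN hN1 m
  rw [h1] at t1
  calc |tl N ε - tl N ε'|
      = |(tl N ε - tk N ε' m) - (tl N ε' - tk N ε' m)| := by ring_nf
    _ ≤ |tl N ε - tk N ε' m| + |tl N ε' - tk N ε' m| := abs_sub _ _
    _ ≤ (2/3) / N m + (2/3) / N m := add_le_add t1 t2
    _ = (4/3) / N m := by ring

variable {N} in
lemma continuous_tk (m : ℕ) : Continuous (fun ε : ℕ → Bool => tk N ε m) := by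
  apply IsLocallyConstant.continuous
  rw [IsLocallyConstant.iff_exists_open]
  intro ε
  refine ⟨{ε' | ∀ i < m, ε' i = ε i}, ?_, fun i _ => rfl, fun ε' h => tk_congr m h⟩
  have hexp : {ε' : ℕ → Bool | ∀ i < m, ε' i = ε i}
      = ⋂ i ∈ Finset.range m, (fun ε' : ℕ → Bool => ε' i) ⁻¹' {ε i} := by
    ext ε'; simp [Finset.mem_range]
  rw [hexp]
  exact isOpen_biInter_finset fun i _ =>
    (continuous_apply i).isOpen_preimage _ (isOpen_discrete _)

variable {N} in
lemma continuous_tl (hN : ∀ k, (100:ℝ) * N k ≤ N (k+1)) (hN1 : ∀ k, 1 ≤ N k) :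
    Continuous (tl N) := by
  have hunif : TendstoUniformly (fun m (ε : ℕ → Bool) => tk N ε m) (tl N) atTop := by
    rw [Metric.tendstoUniformly_iff]
    intro δ hδ
    have h0 : Tendsto (fun m => ((1:ℝ)/100)^m) atTop (nhds 0) :=
      tendsto_pow_atTop_nhds_zero_of_lt_one (by norm_num) (by norm_num)
    filter_upwards [h0.eventually (gt_mem_nhds hδ)] with m hm ε
    have ht := tail_bound (ε := ε) hN hN1 m
    have hinv : (1:ℝ) / N m ≤ (1/100)^m := by
      have := inv_N_le hN hN1 0 m
      rw [Nat.zero_add] at this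
      refine this.trans ?_
      have h1 : (1:ℝ) ≤ N 0 := by exact_mod_cast hN1 0
      have : (1:ℝ)/(N 0:ℝ) ≤ 1 := by
        rw [div_le_one (by linarith)]; exact h1
      nlinarith [pow_pos (show (0:ℝ) < 1/100 by norm_num) m]
    rw [dist_comm, Real.dist_eq]
    have hNm := N_pos hN1 m
    calc |tk N ε m - tl N ε| = |tl N ε - tk N ε m| := abs_sub_comm _ _
      _ ≤ (2/3) / N m := ht
      _ = (2/3) * (1 / N m) := by ring
      _ < δ := by nlinarith [pow_pos (show (0:ℝ) < 1/100 by norm_num) m]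
  exact hunif.continuous (Filter.Eventually.of_forall (continuous_tk)).frequently

open Real in
noncomputable def Phi (ε : ℕ → Bool) : ℂ := Complex.exp ((2 * π * tl N ε : ℝ) * Complex.I)

open Real in
lemma exp_two_pi_eq {a b : ℝ} (hab : |a - b| < 1)
    (h : Complex.exp ((2 * π * a : ℝ) * Complex.I) = Complex.exp ((2 * π * b : ℝ) * Complex.I)) :
    a = b := by
  rw [Complex.exp_eq_exp_iff_exists_int] at h
  obtain ⟨k, hk⟩ := h
  have hI : ((2 * π * a : ℝ) : ℂ) = ((2 * π * b : ℝ) : ℂ) + (k : ℂ) * (2 * π) := by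
    have h2 : ((2 * π * a : ℝ) : ℂ) * Complex.I
        = (((2 * π * b : ℝ) : ℂ) + (k:ℂ) * (2 * π)) * Complex.I := by
      rw [hk]; ring
    exact mul_right_cancel₀ Complex.I_ne_zero h2
  have hr : (2 * π * a : ℝ) = 2 * π * b + k * (2 * π) := by
    exact_mod_cast hI
  have hone : a - b = k := by
    have hπ := Real.pi_pos
    have : 2 * π * (a - b) = 2 * π * k := by ring_nf; ring_nf at hr; linarith
    have := mul_left_cancel₀ (show (2:ℝ) * π ≠ 0 by positivity) this
    exact this
  have hk1 : |(k:ℝ)| < 1 := hone ▸ hab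
  have hk0 : k = 0 := by
    have h2 : ((|k| : ℤ) : ℝ) < 1 := by rwa [Int.cast_abs]
    have h3 : |k| < 1 := by exact_mod_cast h2
    exact Int.abs_lt_one_iff.mp h3
  rw [hk0, Int.cast_zero] at hone
  linarith

open Real in
lemma exp_pow (x : ℝ) (p : ℕ) :
    (Complex.exp ((x:ℝ) * Complex.I)) ^ p = Complex.exp (((p * x : ℝ)) * Complex.I) := by
  rw [← Complex.exp_nat_mul]
  congr 1
  push_cast
  ring

open Real in
lemma exp_sub_one_bound (s : ℝ) (A : ℤ) (δ : ℝ) (hs : |s - A| ≤ δ) (hδ : 2 * π * δ ≤ 1) :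
    ‖Complex.exp ((2 * π * s : ℝ) * Complex.I) - 1‖ ≤ 4 * π * δ := by
  have hπ := Real.pi_pos
  have hδ0 : 0 ≤ δ := le_trans (abs_nonneg _) hs
  have hsplit : ((2 * π * s : ℝ) : ℂ) * Complex.I
      = ((2 * π * (s - A) : ℝ) : ℂ) * Complex.I + (A : ℂ) * (2 * π * Complex.I) := by
    push_cast; ring
  rw [hsplit, Complex.exp_add, Complex.exp_int_mul_two_pi_mul_I, mul_one]
  have habs : ‖(((2 * π * (s - A) : ℝ) : ℂ) * Complex.I)‖ = |2 * π * (s - A)| := by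
    rw [norm_mul, Complex.norm_I, mul_one, Complex.norm_real, Real.norm_eq_abs]
  have hle1 : ‖(((2 * π * (s - A) : ℝ) : ℂ) * Complex.I)‖ ≤ 1 := by
    rw [habs, abs_mul, _root_.abs_of_pos (by positivity : (0:ℝ) < 2 * π)]
    nlinarith
  have := Complex.norm_exp_sub_one_le hle1
  refine this.trans ?_
  rw [habs, abs_mul, _root_.abs_of_pos (by positivity : (0:ℝ) < 2 * π)]
  nlinarith

def S (m₀ : ℕ) : Set (ℕ → Bool) := {ε | ∀ i < m₀, ε i = false}

open Real

variable {N} in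
lemma norm_Phi (ε : ℕ → Bool) : ‖Phi N ε‖ = 1 := by
  rw [Phi, Complex.norm_exp_ofReal_mul_I]

variable {N} in
lemma continuous_Phi (hN : ∀ k, (100:ℝ) * N k ≤ N (k+1)) (hN1 : ∀ k, 1 ≤ N k) :
    Continuous (Phi N) :=
  Complex.continuous_exp.comp
    ((Complex.continuous_ofReal.comp (continuous_const.mul (continuous_tl hN hN1))).mul
      continuous_const)

variable {N} in
lemma injective_Phi (hN : ∀ k, (100:ℝ) * N k ≤ N (k+1)) (hN1 : ∀ k, 1 ≤ N k)
    (hN2 : (2:ℝ) ≤ N 0) : Function.Injective (Phi N) := by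
  intro ε ε' hΦ
  by_contra hne
  have hex : ∃ m, ε m ≠ ε' m := by
    by_contra hc
    push_neg at hc
    exact hne (funext hc)
  classical
  let m := Nat.find hex
  have hdm : ε m ≠ ε' m := Nat.find_spec hex
  have hagree : ∀ i < m, ε i = ε' i := fun i hi => not_ne_iff.mp (Nat.find_min hex hi)
  have hsep := tl_sep hN hN1 m hagree hdm
  have hm1 := N_pos hN1 (m+1)
  have htlne : tl N ε ≠ tl N ε' := by
    intro hteq
    rw [hteq, sub_self, abs_zero] at hsep
    have : (0:ℝ) < (2/3) / N (m+1) := by positivity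
    linarith
  have ha := tl_abs hN hN1 (ε := ε) (m := 0) (fun i hi => absurd hi (Nat.not_lt_zero i))
  have hb := tl_abs hN hN1 (ε := ε') (m := 0) (fun i hi => absurd hi (Nat.not_lt_zero i))
  have hd : |tl N ε - tl N ε'| < 1 := by
    have h23 : (2/3 : ℝ) / N 0 ≤ 1/3 := by
      rw [div_le_iff₀ (by linarith)]
      nlinarith
    have := abs_sub (tl N ε) (tl N ε')
    linarith [abs_sub_abs_le_abs_sub (tl N ε) (tl N ε'),
      abs_sub (tl N ε) (tl N ε')]
  exact htlne (exp_two_pi_eq hd hΦ)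

variable {N} in
lemma dist_Phi (hN : ∀ k, (100:ℝ) * N k ≤ N (k+1)) (hN1 : ∀ k, 1 ≤ N k)
    {ε ε' : ℕ → Bool} {δ : ℝ} (h : |tl N ε - tl N ε'| ≤ δ) (hδ : 2 * π * δ ≤ 1) :
    ‖Phi N ε - Phi N ε'‖ ≤ 4 * π * δ := by
  have hfac : Phi N ε - Phi N ε'
      = Phi N ε' * (Complex.exp ((2 * π * (tl N ε - tl N ε') : ℝ) * Complex.I) - 1) := by
    rw [Phi, Phi, mul_sub, mul_one, ← Complex.exp_add]
    congr 2
    push_cast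
    ring
  rw [hfac, norm_mul, norm_Phi, one_mul]
  exact exp_sub_one_bound (tl N ε - tl N ε') 0 δ (by simpa using h) hδ

instance : CompactSpace (ℕ → Bool) := inferInstance

variable {N} in
lemma isCompact_S_image (hN : ∀ k, (100:ℝ) * N k ≤ N (k+1)) (hN1 : ∀ k, 1 ≤ N k) (m₀ : ℕ) :
    IsCompact (Phi N '' S m₀) := by
  refine IsCompact.image ?_ (continuous_Phi hN hN1)
  refine IsClosed.isCompact ?_
  have hexp : S m₀ = ⋂ i ∈ Finset.range m₀, (fun ε' : ℕ → Bool => ε' i) ⁻¹' {false} := by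
    ext ε'; simp [S, Finset.mem_range]
  rw [hexp]
  exact isClosed_biInter fun i _ =>
    IsClosed.preimage (continuous_apply i) (isClosed_discrete {false})

variable {N} in
lemma perfect_S_image (hN : ∀ k, (100:ℝ) * N k ≤ N (k+1)) (hN1 : ∀ k, 1 ≤ N k)
    (hN2 : (2:ℝ) ≤ N 0) (m₀ : ℕ) : Perfect (Phi N '' S m₀) := by
  constructor
  · exact (isCompact_S_image hN hN1 m₀).isClosed
  · rw [preperfect_iff_nhds]
    rintro x ⟨ε, hεS, rfl⟩ U hU
    obtain ⟨r, hr, hball⟩ := Metric.mem_nhds_iff.mp hU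
    have h0 : Tendsto (fun m => ((1:ℝ)/100)^m) atTop (nhds 0) :=
      tendsto_pow_atTop_nhds_zero_of_lt_one (by norm_num) (by norm_num)
    have hrpos : (0:ℝ) < min (r / (8*π)) (1/(8*π)) := by
      have := Real.pi_pos
      apply lt_min <;> positivity
    obtain ⟨m, hm⟩ := ((h0.eventually (gt_mem_nhds hrpos)).and
      (eventually_ge_atTop m₀)).exists
    obtain ⟨hmlt, hmm₀⟩ := hm
    classical
    set ε'' : ℕ → Bool := Function.update ε m (!(ε m)) with hε''
    have hupd_ne : ε'' m ≠ ε m := by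
      rw [hε'', Function.update_self]
      exact Bool.not_ne_self (ε m)
    have hagree : ∀ i < m, ε'' i = ε i := fun i hi => by
      rw [hε'', Function.update_of_ne (by omega)]
    have hS'' : ε'' ∈ S m₀ := fun i hi => by
      rw [hε'', Function.update_of_ne (by omega)]
      exact hεS i hi
    have hclose := tl_close hN hN1 (ε := ε'') (ε' := ε) m hagree
    have hNm := N_pos hN1 m
    have hinv : (1:ℝ) / N m ≤ (1/100)^m := by
      have := inv_N_le hN hN1 0 m
      rw [Nat.zero_add] at this
      refine this.trans ?_
      have h1 : (1:ℝ) ≤ N 0 := by exact_mod_cast hN1 0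
      have h2 : (1:ℝ)/(N 0:ℝ) ≤ 1 := by rw [div_le_one (by linarith)]; exact h1
      nlinarith [pow_pos (show (0:ℝ) < 1/100 by norm_num) m]
    have hπ := Real.pi_pos
    have hδsmall : 2 * π * ((4/3) / N m) ≤ 1 := by
      have h1 : ((1:ℝ)/100)^m < 1/(8*π) := lt_of_lt_of_le hmlt (min_le_right _ _)
      have hx : (1:ℝ)/N m < 1/(8*π) := lt_of_le_of_lt hinv h1
      have h2 : (8*π/3) * ((1:ℝ)/N m) < (8*π/3) * (1/(8*π)) :=
        mul_lt_mul_of_pos_left hx (by positivity)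
      have h3 : (8*π/3) * ((1:ℝ)/(8*π)) = 1/3 := by field_simp
      have h4 : 2*π*((4/3:ℝ)/ (N m:ℝ)) = (8*π/3) * (1/(N m:ℝ)) := by ring
      linarith
    have hdist := dist_Phi hN hN1 hclose hδsmall
    have hlt : 4 * π * ((4/3) / N m) < r := by
      have h1 : ((1:ℝ)/100)^m < r/(8*π) := lt_of_lt_of_le hmlt (min_le_left _ _)
      have hx : (1:ℝ)/N m < r/(8*π) := lt_of_le_of_lt hinv h1
      have h2 : (16*π/3) * ((1:ℝ)/N m) < (16*π/3) * (r/(8*π)) :=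
        mul_lt_mul_of_pos_left hx (by positivity)
      have h3 : (16*π/3) * (r/(8*π)) = (2/3)*r := by field_simp; ring
      have h4 : 4*π*((4/3:ℝ)/ (N m:ℝ)) = (16*π/3) * (1/(N m:ℝ)) := by ring
      linarith
    refine ⟨Phi N ε'', ⟨?_, ⟨ε'', hS'', rfl⟩⟩, ?_⟩
    · apply hball
      rw [Metric.mem_ball, dist_eq_norm]
      linarith
    · intro hcon
      have := injective_Phi hN hN1 hN2 hcon
      exact hupd_ne (by rw [this])

variable {N} in
lemma ratio_le (hN : ∀ k, (100:ℝ) * N k ≤ N (k+1)) (hN1 : ∀ k, 1 ≤ N k) (j : ℕ) :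
    (N j : ℝ) / N (j+1) ≤ 1/100 := by
  have hj1 := N_pos hN1 (j+1)
  rw [div_le_div_iff₀ hj1 (by norm_num)]
  linarith [hN j]

variable {N} in
lemma pow_bound (hN : ∀ k, (100:ℝ) * N k ≤ N (k+1)) (hN1 : ∀ k, 1 ≤ N k)
    (ε' : ℕ → Bool) (j : ℕ) :
    ‖Phi N ε' ^ (N j) - 1‖ ≤ (32 * π / 3) * ((N j : ℝ) / N (j+1)) := by
  have hd := dist_int (ε := ε') hN hN1 j
  have hπ := Real.pi_pos
  have hπ4 := Real.pi_le_four
  have hj := N_pos hN1 j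
  have hj1 := N_pos hN1 (j+1)
  have hrat := ratio_le hN hN1 j
  have hrat0 : (0:ℝ) ≤ (N j : ℝ) / N (j+1) := by positivity
  have hside : 2 * π * ((8/3) * N j / N (j+1)) ≤ 1 := by
    have he : (8/3:ℝ) * N j / N (j+1) = (8/3) * ((N j:ℝ) / N (j+1)) := by ring
    rw [he]
    nlinarith
  have hmain := exp_sub_one_bound ((N j:ℝ) * tl N ε')
    (round ((N j:ℝ) * tk N ε' j)) ((8/3) * N j / N (j+1)) hd hside
  have hpow : Phi N ε' ^ (N j)
      = Complex.exp ((2 * π * ((N j:ℝ) * tl N ε') : ℝ) * Complex.I) := by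
    rw [Phi, exp_pow]
    congr 2
    push_cast
    ring
  rw [hpow]
  refine hmain.trans (le_of_eq ?_)
  ring

variable {N} in
lemma pow_bound0 (hN : ∀ k, (100:ℝ) * N k ≤ N (k+1)) (hN1 : ∀ k, 1 ≤ N k)
    {ε' : ℕ → Bool} {p m : ℕ} (hS : ∀ i < m+1, ε' i = false) (hp : (p:ℝ) ≤ N m) :
    ‖Phi N ε' ^ p - 1‖ ≤ (8 * π / 3) * ((N m : ℝ) / N (m+1)) := by
  have htl := tl_abs hN hN1 (m := m+1) hS
  have hπ := Real.pi_pos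
  have hπ4 := Real.pi_le_four
  have hm := N_pos hN1 m
  have hm1 := N_pos hN1 (m+1)
  have hrat := ratio_le hN hN1 m
  have hd : |(p:ℝ) * tl N ε' - ((0:ℤ):ℝ)| ≤ (2/3) * N m / N (m+1) := by
    rw [Int.cast_zero, sub_zero, abs_mul, Nat.abs_cast]
    calc (p:ℝ) * |tl N ε'| ≤ (N m:ℝ) * ((2/3)/N (m+1)) :=
      mul_le_mul hp htl (abs_nonneg _) (le_of_lt hm)
    _ = (2/3) * N m / N (m+1) := by ring
  have hside : 2 * π * ((2/3) * N m / N (m+1)) ≤ 1 := by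
    have he : (2/3:ℝ) * N m / N (m+1) = (2/3) * ((N m:ℝ) / N (m+1)) := by ring
    rw [he]
    nlinarith
  have hmain := exp_sub_one_bound ((p:ℝ) * tl N ε') 0 ((2/3) * N m / N (m+1)) hd hside
  have hpow : Phi N ε' ^ p
      = Complex.exp ((2 * π * ((p:ℝ) * tl N ε') : ℝ) * Complex.I) := by
    rw [Phi, exp_pow]
    congr 2
    push_cast
    ring
  rw [hpow]
  refine hmain.trans (le_of_eq ?_)
  ring

end P34

/-- Proposition 3.4: if `n_{k+1}/n_k → ∞`, there is a nonempty compact perfect subset `K`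
of the unit circle such that (i) for every `ε > 0` there is a nonempty compact perfect
subset `K_ε` of `K` with `sup_k |λ^{n_k} - 1| ≤ ε` for every `λ ∈ K_ε`, and
(ii) `λ^{n_k} → 1` uniformly on `K`. -/
theorem exists_perfect_set_of_ratio_tendsto_atTop
    (n : ℕ → ℕ) (hmono : StrictMono n) (hpos : ∀ k, 0 < n k)
    (hratio : Tendsto (fun k => (n (k + 1) : ℝ) / (n k : ℝ)) atTop atTop) :
    ∃ K : Set ℂ, K ⊆ {z : ℂ | ‖z‖ = 1} ∧ IsCompact K ∧ Perfect K ∧ K.Nonempty ∧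
      (∀ ε > (0 : ℝ), ∃ Kε : Set ℂ, Kε ⊆ K ∧ IsCompact Kε ∧ Perfect Kε ∧ Kε.Nonempty ∧
        ∀ z ∈ Kε, ∀ k, ‖z ^ (n k) - 1‖ ≤ ε) ∧
      TendstoUniformlyOn (fun k (z : ℂ) => z ^ (n k)) (fun _ => 1) atTop K := by
  classical
  obtain ⟨K₁, hK₁⟩ := Filter.eventually_atTop.mp (hratio.eventually_ge_atTop 100)
  set K₀ := max K₁ 1 with hK₀def
  set N : ℕ → ℕ := fun k => n (K₀ + k) with hNdef
  have hN1 : ∀ k, 1 ≤ N k := fun k => hpos _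
  have hN : ∀ k, (100:ℝ) * N k ≤ N (k+1) := by
    intro k
    have h := hK₁ (K₀ + k) (le_trans (le_max_left _ _) (Nat.le_add_right _ _))
    have hpos' : (0:ℝ) < n (K₀ + k) := by exact_mod_cast hpos _
    rw [le_div_iff₀ hpos'] at h
    have he : K₀ + (k+1) = K₀ + k + 1 := by ring
    simp only [hNdef, he]
    linarith
  have hN2 : (2:ℝ) ≤ N 0 := by
    have h1 : n 0 < n K₀ := hmono (lt_of_lt_of_le Nat.zero_lt_one (le_max_right _ _))
    have h2 := hpos 0
    have : 2 ≤ n K₀ := by omega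
    have he : N 0 = n K₀ := by simp [hNdef]
    rw [he]
    exact_mod_cast this
  -- a helper: ratio bound from an eventual ratio lower bound
  have hratio_le : ∀ (C : ℝ) (J : ℕ), 0 < C → (∀ i ≥ J, C ≤ (n (i+1):ℝ) / n i) →
      ∀ j, J ≤ K₀ + j → (N j : ℝ) / N (j+1) ≤ 1 / C := by
    intro C J hC hJ j hj
    have h := hJ (K₀ + j) hj
    have hpos' : (0:ℝ) < n (K₀ + j) := by exact_mod_cast hpos _
    have hpos'' : (0:ℝ) < n (K₀ + j + 1) := by exact_mod_cast hpos _
    rw [le_div_iff₀ hpos'] at h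
    have he : K₀ + (j+1) = K₀ + j + 1 := by ring
    simp only [hNdef, he]
    rw [div_le_div_iff₀ hpos'' hC]
    linarith
  refine ⟨P34.Phi N '' P34.S 0, ?_, P34.isCompact_S_image hN hN1 0,
    P34.perfect_S_image hN hN1 hN2 0,
    ⟨P34.Phi N (fun _ => false), ⟨fun _ => false, fun i hi => rfl, rfl⟩⟩, ?_, ?_⟩
  · rintro z ⟨ε, -, rfl⟩
    exact P34.norm_Phi ε
  · -- (i)
    intro εr hεr
    have hπ := Real.pi_pos
    set C : ℝ := max 100 ((32 * π / 3) / εr) with hCdef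
    have hC : (0:ℝ) < C := lt_of_lt_of_le (by norm_num) (le_max_left _ _)
    have hCεr : (32 * π / 3) / C ≤ εr := by
      rw [div_le_iff₀ hC]
      have h1 : (32 * π / 3) / εr ≤ C := le_max_right _ _
      rw [div_le_iff₀ hεr] at h1
      linarith
    obtain ⟨J₁, hJ₁⟩ := Filter.eventually_atTop.mp (hratio.eventually_ge_atTop C)
    set m := J₁ with hm
    have hrat : ∀ j, m ≤ j → (N j : ℝ) / N (j+1) ≤ 1 / C := by
      intro j hj
      exact hratio_le C J₁ hC hJ₁ j (by omega)
    refine ⟨P34.Phi N '' P34.S (m+1), Set.image_mono (fun ε hε i hi => absurd hi (Nat.not_lt_zero i)), 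
      P34.isCompact_S_image hN hN1 (m+1), P34.perfect_S_image hN hN1 hN2 (m+1),
      ⟨P34.Phi N (fun _ => false), ⟨fun _ => false, fun i hi => rfl, rfl⟩⟩, ?_⟩
    rintro z ⟨ε, hεS, rfl⟩ k
    have hbound : ∀ x : ℝ, 0 ≤ x → x ≤ 1 / C → (32 * π / 3) * x ≤ εr := by
      intro x hx0 hx
      calc (32 * π / 3) * x ≤ (32 * π / 3) * (1/C) := by nlinarith
      _ = (32 * π / 3) / C := by ring
      _ ≤ εr := hCεr
    by_cases hk : k ≤ K₀ + m
    · -- small powers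
      have hple : (n k : ℝ) ≤ N m := by
        have : n k ≤ n (K₀ + m) := hmono.monotone (by omega)
        exact_mod_cast this
      have h := P34.pow_bound0 hN hN1 (ε' := ε) (p := n k) (m := m) hεS hple
      refine h.trans ?_
      have h8 : (8 * π / 3) * ((N m : ℝ) / N (m+1)) ≤ (32 * π / 3) * ((N m : ℝ) / N (m+1)) := by
        have : (0:ℝ) ≤ (N m : ℝ) / N (m+1) := by positivity
        nlinarith
      exact h8.trans (hbound _ (by positivity) (hrat m le_rfl))
    · -- large powers
      push_neg at hk
      set j := k - K₀ with hj
      have hkj : k = K₀ + j := by omega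
      have hjm : m + 1 ≤ j := by omega
      have hnk : n k = N j := by rw [hNdef, hkj]
      rw [hnk]
      refine (P34.pow_bound hN hN1 ε j).trans ?_
      exact hbound _ (by positivity) (hrat j (by omega))
  · -- (ii)
    rw [Metric.tendstoUniformlyOn_iff]
    intro δ hδ
    have hπ := Real.pi_pos
    set C : ℝ := max 100 ((32 * π / 3) / (δ/2)) with hCdef
    have hC : (0:ℝ) < C := lt_of_lt_of_le (by norm_num) (le_max_left _ _)
    have hCδ : (32 * π / 3) / C ≤ δ/2 := by
      rw [div_le_iff₀ hC]
      have h1 : (32 * π / 3) / (δ/2) ≤ C := le_max_right _ _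
      rw [div_le_iff₀ (by linarith)] at h1
      linarith
    obtain ⟨J₁, hJ₁⟩ := Filter.eventually_atTop.mp (hratio.eventually_ge_atTop C)
    filter_upwards [Filter.eventually_ge_atTop (K₀ + J₁)] with k hk
    rintro z ⟨ε, -, rfl⟩
    set j := k - K₀ with hj
    have hkj : k = K₀ + j := by omega
    have hnk : n k = N j := by rw [hNdef, hkj]
    have hrat : (N j : ℝ) / N (j+1) ≤ 1 / C := hratio_le C J₁ hC hJ₁ j (by omega)
    have hb := P34.pow_bound hN hN1 ε j
    have : ‖P34.Phi N ε ^ (n k) - 1‖ ≤ δ/2 := by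
      rw [hnk]
      refine hb.trans ?_
      calc (32 * π / 3) * ((N j : ℝ) / N (j+1)) ≤ (32 * π / 3) * (1/C) := by
            have : (0:ℝ) ≤ (N j : ℝ) / N (j+1) := by positivity
            nlinarith
        _ = (32 * π / 3) / C := by ring
        _ ≤ δ/2 := hCδ
    rw [dist_comm, dist_eq_norm]
    calc ‖P34.Phi N ε ^ (n k) - 1‖ ≤ δ/2 := this
      _ < δ := by linarith
end

section
/- Let (n_k)_{k≥0} be a strictly increasing sequence of positive integers. The following assertions are equivalent: (i) there exists a compact perfect subset K of 𝕋 such that λ^{n_k} tends to 1 uniformly on K; (ii) there exists a compact perfect subset K of 𝕋 such that λ^{n_k} tends to 1 uniformly on K and, for every ε > 0, there exists λ ∈ K \ {1} with sup_{k≥0} |λ^{n_k} − 1| ≤ ε. -/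
open Filter Topology

/-- Fact 3.6: there exists a nonempty compact perfect subset `K` of the unit circle on which
`λ^{n_k} → 1` uniformly if and only if there exists such a set which moreover satisfies:
for every `ε > 0` there is `λ ∈ K \ {1}` with `sup_k |λ^{n_k} - 1| ≤ ε`. -/
theorem exists_perfect_uniform_iff_exists_perfect_uniform_with_small_points
    (n : ℕ → ℕ) (hmono : StrictMono n) (hpos : ∀ k, 0 < n k) :
    (∃ K : Set ℂ, K ⊆ {z : ℂ | ‖z‖ = 1} ∧ IsCompact K ∧ Perfect K ∧ K.Nonempty ∧
      TendstoUniformlyOn (fun k (z : ℂ) => z ^ (n k)) (fun _ => 1) atTop K)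
    ↔
    (∃ K : Set ℂ, K ⊆ {z : ℂ | ‖z‖ = 1} ∧ IsCompact K ∧ Perfect K ∧ K.Nonempty ∧
      TendstoUniformlyOn (fun k (z : ℂ) => z ^ (n k)) (fun _ => 1) atTop K ∧
      ∀ ε > (0 : ℝ), ∃ z ∈ K, z ≠ 1 ∧ ∀ k, ‖z ^ (n k) - 1‖ ≤ ε) := by
  constructor
  · rintro ⟨K, hsub, hcomp, hperf, ⟨z₀, hz₀⟩, hunif⟩
    have hz₀norm : ‖z₀‖ = 1 := hsub hz₀
    have hz₀ne : z₀ ≠ 0 := by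
      intro h; rw [h] at hz₀norm; simp at hz₀norm
    have hinv : z₀⁻¹ ≠ 0 := inv_ne_zero hz₀ne
    set e : ℂ ≃ₜ ℂ := Homeomorph.mulLeft₀ z₀⁻¹ hinv with he
    have he_apply : ∀ z : ℂ, e z = z₀⁻¹ * z := fun z => rfl
    set K' : Set ℂ := e '' K with hK'
    have h1K' : (1 : ℂ) ∈ K' := by
      refine ⟨z₀, hz₀, ?_⟩
      rw [he_apply, inv_mul_cancel₀ hz₀ne]
    -- subset of circle
    have hsub' : K' ⊆ {z : ℂ | ‖z‖ = 1} := by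
      rintro _ ⟨w, hw, rfl⟩
      have : ‖w‖ = 1 := hsub hw
      rw [Set.mem_setOf_eq, he_apply, norm_mul, norm_inv, hz₀norm, this, inv_one, one_mul]
    -- compact
    have hcomp' : IsCompact K' := hcomp.image e.continuous
    -- perfect
    have hperf' : Perfect K' := by
      constructor
      · exact e.isClosedMap K hperf.1
      · rintro _ ⟨w, hw, rfl⟩
        have hacc : AccPt w (𝓟 K) := hperf.2 w hw
        have := hacc.map (f := e) e.continuous.continuousAt e.injective
        rwa [Filter.map_principal] at this
    -- uniform convergence on K'
    have hunif' : TendstoUniformlyOn (fun k (z : ℂ) => z ^ (n k)) (fun _ => 1) atTop K' := by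
      rw [Metric.tendstoUniformlyOn_iff] at hunif ⊢
      intro ε hε
      filter_upwards [hunif (ε / 2) (by linarith)] with k hk
      rintro _ ⟨w, hw, rfl⟩
      have h1 : dist (1 : ℂ) (z₀ ^ n k) < ε / 2 := hk z₀ hz₀
      have h2 : dist (1 : ℂ) (w ^ n k) < ε / 2 := hk w hw
      rw [dist_eq_norm] at h1 h2 ⊢
      have hz₀pow : ‖(z₀ ^ n k)⁻¹‖ = 1 := by
        rw [norm_inv, norm_pow, hz₀norm, one_pow, inv_one]
      have key : (1 : ℂ) - (e w) ^ n k = (z₀ ^ n k)⁻¹ * ((z₀ ^ n k - 1) + (1 - w ^ n k)) := by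
        rw [he_apply]
        field_simp [mul_pow, inv_pow]
        rw [div_pow, sub_mul, div_mul_cancel₀ _ (pow_ne_zero _ hz₀ne)]; ring
      calc ‖(1 : ℂ) - (e w) ^ n k‖
          = ‖(z₀ ^ n k)⁻¹‖ * ‖(z₀ ^ n k - 1) + (1 - w ^ n k)‖ := by rw [key, norm_mul]
        _ = ‖(z₀ ^ n k - 1) + (1 - w ^ n k)‖ := by rw [hz₀pow, one_mul]
        _ ≤ ‖z₀ ^ n k - 1‖ + ‖1 - w ^ n k‖ := norm_add_le _ _
        _ = ‖1 - z₀ ^ n k‖ + ‖1 - w ^ n k‖ := by rw [norm_sub_rev]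
        _ < ε / 2 + ε / 2 := by linarith
        _ = ε := by ring
    refine ⟨K', hsub', hcomp', hperf', ⟨1, h1K'⟩, hunif', ?_⟩
    -- small points
    intro ε hε
    have := (Metric.tendstoUniformlyOn_iff.mp hunif') ε hε
    rw [eventually_atTop] at this
    obtain ⟨N, hN⟩ := this
    -- near 1, the finitely many first powers are small
    have hev : ∀ᶠ z in 𝓝 (1 : ℂ), ∀ k ∈ Finset.range N, ‖z ^ n k - 1‖ ≤ ε := by
      rw [eventually_all_finset]
      intro k _
      have hcont : ContinuousAt (fun z : ℂ => z ^ n k) 1 := (continuous_pow (n k)).continuousAt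
      have : Tendsto (fun z : ℂ => z ^ n k) (𝓝 1) (𝓝 1) := by
        simpa [ContinuousAt] using hcont
      have := this (Metric.closedBall_mem_nhds (1 : ℂ) hε)
      filter_upwards [this] with z hz
      simpa [Metric.mem_closedBall, dist_eq_norm] using hz
    have hacc : AccPt (1 : ℂ) (𝓟 K') := hperf'.2 1 h1K'
    rw [accPt_iff_nhds] at hacc
    obtain ⟨y, ⟨hyU, hyK⟩, hyne⟩ := hacc _ hev
    refine ⟨y, hyK, hyne, fun k => ?_⟩
    rcases lt_or_ge k N with hk | hk
    · exact hyU k (Finset.mem_range.mpr hk)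
    · have := hN k hk y hyK
      rw [dist_eq_norm, norm_sub_rev] at this
      linarith
  · rintro ⟨K, h1, h2, h3, h4, h5, _⟩
    exact ⟨K, h1, h2, h3, h4, h5⟩
end

section
/- Let (n_k)_{k≥0} be a strictly increasing sequence of positive integers such that n_k divides n_{k+1} for every k ≥ 0 and limsup_{k→∞} n_{k+1}/n_k = +∞. Then there exists a compact perfect subset K of 𝕋 containing the point 1 such that λ^{n_k} tends to 1 uniformly on K, i.e. sup_{λ∈K} |λ^{n_k} − 1| → 0 as k → ∞. -/
open Filter Topology

namespace PerfectCircleAux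

/-- indicator of a boolean -/
def bb : Bool → ℝ := fun v => if v then 1 else 0

lemma bb_nonneg (v : Bool) : 0 ≤ bb v := by cases v <;> simp [bb]
lemma bb_le_one (v : Bool) : bb v ≤ 1 := by cases v <;> simp [bb]

lemma hgeom : Summable (fun j : ℕ => (1/4:ℝ)^(j+1)) := by
  have := (summable_geometric_of_lt_one (by norm_num : (0:ℝ) ≤ 1/4) (by norm_num)).mul_right
    (1/4 : ℝ)
  simpa [pow_succ] using this

lemma div_le_div_of_nonneg_right' {a b c : ℝ} (h : a ≤ b) (hc : 0 < c) : a / c ≤ b / c := by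
  apply div_le_div_of_nonneg_right h hc.le

lemma hgeom_sum : ∑' j : ℕ, (1/4:ℝ)^(j+1) = 1/3 := by
  have h1 : ∀ j : ℕ, (1/4:ℝ)^(j+1) = (1/4)^j * (1/4) := fun j => pow_succ _ _
  rw [tsum_congr h1, tsum_mul_right,
    tsum_geometric_of_lt_one (by norm_num : (0:ℝ) ≤ 1/4) (by norm_num)]
  norm_num

variable (m : ℕ → ℕ)

/-- the parameter map into the reals -/
noncomputable def tt (ε : ℕ → Bool) : ℝ := ∑' j, bb (ε j) / m j

variable (hm : ∀ j, (4:ℝ)^(j+1) ≤ m j)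

include hm

lemma m_pos (j : ℕ) : (0:ℝ) < m j := lt_of_lt_of_le (by positivity) (hm j)

lemma inv_m_le (j : ℕ) : (1:ℝ) / m j ≤ (1/4)^(j+1) := by
  rw [div_le_iff₀ (m_pos m hm j)]
  calc (1:ℝ) = (1/4)^(j+1) * 4^(j+1) := by rw [← mul_pow]; norm_num
    _ ≤ (1/4)^(j+1) * m j := by
        apply mul_le_mul_of_nonneg_left (hm j) (by positivity)

lemma term_nonneg (ε : ℕ → Bool) (j : ℕ) : 0 ≤ bb (ε j) / m j :=
  div_nonneg (bb_nonneg _) (m_pos m hm j).le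

lemma term_le (ε : ℕ → Bool) (j : ℕ) : bb (ε j) / m j ≤ (1/4)^(j+1) := by
  refine le_trans ?_ (inv_m_le m hm j)
  exact div_le_div_of_nonneg_right' (bb_le_one _) (m_pos m hm j)

lemma summable_term (ε : ℕ → Bool) : Summable (fun j => bb (ε j) / m j) :=
  Summable.of_nonneg_of_le (term_nonneg m hm ε) (term_le m hm ε) hgeom

lemma tt_continuous : Continuous (tt m) := by
  apply continuous_tsum (u := fun j : ℕ => (1/4:ℝ)^(j+1))
  · intro j
    exact (continuous_of_discreteTopology (f := fun v : Bool => bb v / m j)).comp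
      (continuous_apply j)
  · exact hgeom
  · intro j ε
    rw [Real.norm_of_nonneg (term_nonneg m hm ε j)]
    exact term_le m hm ε j

/-- the parameter map into the circle -/
noncomputable def ff (ε : ℕ → Bool) : ℂ :=
  Complex.exp ((2 * Real.pi * tt m ε : ℝ) * Complex.I)

omit hm in
lemma ff_norm (ε : ℕ → Bool) : ‖ff m ε‖ = 1 := by
  rw [ff, Complex.norm_exp_ofReal_mul_I]

lemma ff_continuous : Continuous (ff m) := by
  apply Complex.continuous_exp.comp
  exact (Complex.continuous_ofReal.comp ((continuous_const.mul (tt_continuous m hm)))).mul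
    continuous_const

omit hm in
lemma exp_diff (a b : ℝ) (hab : |a - b| ≤ 1) :
    ‖Complex.exp ((a:ℝ) * Complex.I) - Complex.exp ((b:ℝ) * Complex.I)‖
      ≤ 2 * |a - b| := by
  have h1 : Complex.exp ((a:ℝ) * Complex.I) - Complex.exp ((b:ℝ) * Complex.I)
      = Complex.exp ((b:ℝ) * Complex.I) * (Complex.exp (((a - b : ℝ):ℂ) * Complex.I) - 1) := by
    rw [mul_sub, ← Complex.exp_add, mul_one]
    push_cast
    ring_nf
  rw [h1, norm_mul, Complex.norm_exp_ofReal_mul_I, one_mul]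
  have h2 : ‖((a - b : ℝ):ℂ) * Complex.I‖ = |a - b| := by
    rw [norm_mul, Complex.norm_I, mul_one, Complex.norm_real, Real.norm_eq_abs]
  have h3 := Complex.norm_exp_sub_one_le (x := ((a - b : ℝ):ℂ) * Complex.I) (by rw [h2]; exact hab)
  rwa [h2] at h3

omit hm in
lemma exp_inj (a b : ℝ)
    (h : Complex.exp ((a:ℝ) * Complex.I) = Complex.exp ((b:ℝ) * Complex.I)) :
    ∃ q : ℤ, a - b = 2 * Real.pi * q := by
  have h1 : Complex.exp (((a - b : ℝ):ℂ) * Complex.I) = 1 := by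
    rw [show (((a - b : ℝ):ℂ) * Complex.I) = (a:ℝ) * Complex.I - (b:ℝ) * Complex.I by
      push_cast; ring]
    rw [Complex.exp_sub, h, div_self (Complex.exp_ne_zero _)]
  obtain ⟨q, hq⟩ := Complex.exp_eq_one_iff.mp h1
  refine ⟨q, ?_⟩
  have h2 : (((a - b : ℝ)):ℂ) = 2 * Real.pi * q := by
    have := mul_right_cancel₀ Complex.I_ne_zero
      (hq.trans (by ring : ((q:ℂ)) * (2 * (Real.pi:ℂ) * Complex.I)
        = ((2 * (Real.pi:ℂ) * q)) * Complex.I))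
    exact this
  exact_mod_cast h2

set_option maxHeartbeats 1000000 in
lemma pow_estimate (ε : ℕ → Bool) (N : ℕ) (j0 : ℕ) (hj0 : 1 ≤ j0)
    (hd : ∀ j, j < j0 → m j ∣ N)
    (hb : ∀ j, j0 ≤ j → (N:ℝ) / m j ≤ (1/4)^(j+1)) :
    ‖ff m ε ^ N - 1‖ ≤ 4 * Real.pi * ((1/3) * (1/4)^j0) := by
  have hsum := summable_term m hm ε
  have hsumN : Summable (fun j => (N:ℝ) * (bb (ε j) / m j)) := hsum.mul_left _
  set r : ℝ := ∑' j, (N:ℝ) * (bb (ε (j + j0)) / m (j + j0)) with hr_def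
  set S : ℤ := ∑ j ∈ Finset.range j0, (if ε j then ((N / m j : ℕ) : ℤ) else 0) with hS_def
  have hS : (S:ℝ) = ∑ j ∈ Finset.range j0, (N:ℝ) * (bb (ε j) / m j) := by
    rw [hS_def, Int.cast_sum]
    apply Finset.sum_congr rfl
    intro j hj
    have hdj := hd j (Finset.mem_range.mp hj)
    cases hε : ε j with
    | false => simp [bb, hε]
    | true =>
      simp only [bb, hε, if_true]
      rw [Int.cast_natCast, Nat.cast_div hdj (ne_of_gt (m_pos m hm j))]
      ring
  have hsplit : (N:ℝ) * tt m ε = (S:ℝ) + r := by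
    rw [tt, ← tsum_mul_left, ← Summable.sum_add_tsum_nat_add j0 hsumN, hS]
  -- bound on r
  have hgeo' : Summable (fun j : ℕ => (1/4:ℝ)^(j + j0 + 1)) := by
    refine (hgeom.mul_right ((1/4:ℝ)^j0)).congr (fun j => ?_)
    rw [← pow_add]
    congr 1
    omega
  have hterm_le : ∀ j : ℕ, (N:ℝ) * (bb (ε (j + j0)) / m (j + j0)) ≤ (1/4:ℝ)^(j + j0 + 1) := by
    intro j
    have h1 : (N:ℝ) * (bb (ε (j + j0)) / m (j + j0)) ≤ (N:ℝ) / m (j + j0) := by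
      rw [mul_div_assoc']
      refine div_le_div_of_nonneg_right' ?_ (m_pos m hm _)
      calc (N:ℝ) * bb (ε (j + j0)) ≤ (N:ℝ) * 1 :=
            mul_le_mul_of_nonneg_left (bb_le_one _) (Nat.cast_nonneg _)
        _ = N := mul_one _
    exact h1.trans (hb (j + j0) (Nat.le_add_left _ _))
  have hterm_nonneg : ∀ j : ℕ, 0 ≤ (N:ℝ) * (bb (ε (j + j0)) / m (j + j0)) := fun j =>
    mul_nonneg (Nat.cast_nonneg _) (term_nonneg m hm ε _)
  have hr_nonneg : 0 ≤ r := tsum_nonneg hterm_nonneg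
  have hr_le : r ≤ (1/3) * (1/4:ℝ)^j0 := by
    have h1 : r ≤ ∑' j : ℕ, (1/4:ℝ)^(j + j0 + 1) := by
      apply Summable.tsum_le_tsum hterm_le ((summable_nat_add_iff j0).mpr hsumN) hgeo'
    have h2 : ∑' j : ℕ, (1/4:ℝ)^(j + j0 + 1) = (1/3) * (1/4)^j0 := by
      have h3 : ∀ j : ℕ, (1/4:ℝ)^(j + j0 + 1) = (1/4)^(j+1) * (1/4)^j0 := by
        intro j; rw [← pow_add]; ring_nf
      rw [tsum_congr h3, tsum_mul_right, hgeom_sum]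
    rw [← h2]; exact h1
  -- rewrite the power as an exponential
  have hpow : ff m ε ^ N = Complex.exp ((2 * Real.pi * ((S:ℝ) + r) : ℝ) * Complex.I) := by
    rw [ff, ← Complex.exp_nat_mul]
    congr 1
    have h2 : (N:ℝ) * (2 * Real.pi * tt m ε) = 2 * Real.pi * ((S:ℝ) + r) := by
      rw [show (N:ℝ) * (2 * Real.pi * tt m ε) = 2 * Real.pi * ((N:ℝ) * tt m ε) by ring, hsplit]
    calc (N:ℂ) * ((((2 * Real.pi * tt m ε : ℝ)):ℂ) * Complex.I)
        = (((N:ℝ) * (2 * Real.pi * tt m ε) : ℝ) : ℂ) * Complex.I := by push_cast; ring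
      _ = ((2 * Real.pi * ((S:ℝ) + r) : ℝ) : ℂ) * Complex.I := by rw [h2]
  have hone : (1:ℂ) = Complex.exp ((2 * Real.pi * (S:ℝ) : ℝ) * Complex.I) := by
    rw [show ((2 * Real.pi * (S:ℝ) : ℝ) : ℂ) * Complex.I = (S:ℤ) * (2 * Real.pi * Complex.I) by
      push_cast; ring]
    rw [Complex.exp_int_mul_two_pi_mul_I]
  have habs : |2 * Real.pi * ((S:ℝ) + r) - 2 * Real.pi * (S:ℝ)| = 2 * Real.pi * r := by
    rw [show 2 * Real.pi * ((S:ℝ) + r) - 2 * Real.pi * (S:ℝ) = 2 * Real.pi * r by ring]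
    rw [abs_of_nonneg (by positivity)]
  have hsmall : |2 * Real.pi * ((S:ℝ) + r) - 2 * Real.pi * (S:ℝ)| ≤ 1 := by
    rw [habs]
    have hpi := Real.pi_le_four
    have h4 : (1/4:ℝ)^j0 ≤ (1/4)^1 := pow_le_pow_of_le_one (by norm_num) (by norm_num) hj0
    nlinarith [Real.pi_pos, hr_nonneg]
  calc ‖ff m ε ^ N - 1‖
      = ‖Complex.exp ((2 * Real.pi * ((S:ℝ) + r) : ℝ) * Complex.I)
          - Complex.exp ((2 * Real.pi * (S:ℝ) : ℝ) * Complex.I)‖ := by rw [hpow, ← hone]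
    _ ≤ 2 * |2 * Real.pi * ((S:ℝ) + r) - 2 * Real.pi * (S:ℝ)| := exp_diff _ _ hsmall
    _ = 2 * (2 * Real.pi * r) := by rw [habs]
    _ ≤ 4 * Real.pi * ((1/3) * (1/4)^j0) := by nlinarith [Real.pi_pos]

end PerfectCircleAux

open PerfectCircleAux

/-- Proposition 3.7: if `n_k ∣ n_{k+1}` for every `k` and `limsup n_{k+1}/n_k = +∞`, there
is a compact perfect subset `K` of the unit circle containing the point `1` such that
`λ^{n_k} → 1` uniformly on `K`. -/
theorem exists_perfect_set_of_dvd_and_unbounded_ratio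
    (n : ℕ → ℕ) (hmono : StrictMono n) (hpos : ∀ k, 0 < n k)
    (hdvd : ∀ k, n k ∣ n (k + 1))
    (hsup : ∀ C : ℝ, ∃ k, C ≤ (n (k + 1) : ℝ) / (n k : ℝ)) :
    ∃ K : Set ℂ, K ⊆ {z : ℂ | ‖z‖ = 1} ∧ IsCompact K ∧ Perfect K ∧ (1 : ℂ) ∈ K ∧
      TendstoUniformlyOn (fun k (z : ℂ) => z ^ (n k)) (fun _ => 1) atTop K := by
  -- divisibility chain
  have hdvd_le : ∀ a b : ℕ, a ≤ b → n a ∣ n b := by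
    intro a b h
    induction b, h using Nat.le_induction with
    | base => exact dvd_rfl
    | succ b _ ih => exact ih.trans (hdvd b)
  -- a strengthened form of hsup
  have key : ∀ C : ℝ, ∀ K : ℕ, ∃ k', K < k' ∧ C ≤ (n (k' + 1) : ℝ) / (n k' : ℝ) := by
    intro C K
    obtain ⟨j, hj⟩ := hsup (max C ((Finset.range (K+1)).sup'
      (by simp) (fun i => (n (i+1):ℝ)/(n i)) + 1))
    refine ⟨j, ?_, le_trans (le_max_left _ _) hj⟩
    by_contra h
    push_neg at h
    have h1 : (n (j+1):ℝ)/(n j) ≤ (Finset.range (K+1)).sup'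
        (by simp) (fun i => (n (i+1):ℝ)/(n i)) :=
      Finset.le_sup' (fun i => (n (i+1):ℝ)/(n i)) (Finset.mem_range.mpr (Nat.lt_succ_of_le h))
    have h2 := le_trans (le_max_right C _) hj
    linarith
  choose g hg1 hg2 using key
  -- construct the subsequence
  obtain ⟨k, hkmono, hkratio⟩ : ∃ k : ℕ → ℕ, StrictMono k ∧
      ∀ j, (4:ℝ)^(j+1) ≤ (n (k j + 1) : ℝ) / (n (k j) : ℝ) := by
    refine ⟨fun j => Nat.rec (g 4 0) (fun i ki => g ((4:ℝ)^(i+2)) ki) j,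
      strictMono_nat_of_lt_succ (fun j => hg1 _ _), fun j => ?_⟩
    cases j with
    | zero => simpa using hg2 4 0
    | succ i => exact hg2 ((4:ℝ)^(i+2)) _
  set m : ℕ → ℕ := fun j => n (k j + 1) with hm_def
  have hnpos : ∀ j : ℕ, (0:ℝ) < n j := fun j => by exact_mod_cast hpos j
  have hm : ∀ j, (4:ℝ)^(j+1) ≤ m j := by
    intro j
    refine le_trans (hkratio j) ?_
    exact div_le_self (Nat.cast_nonneg _) (by exact_mod_cast hpos (k j))
  have hratio' : ∀ j, (4:ℝ)^(j+1) * n (k j) ≤ m j := fun j =>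
    (le_div_iff₀ (hnpos (k j))).mp (hkratio j)
  have hbound : ∀ j kk, kk ≤ k j → (n kk : ℝ) / m j ≤ (1/4)^(j+1) := by
    intro j kk hkk
    rw [div_le_iff₀ (m_pos m hm j)]
    have h1 : (n kk : ℝ) ≤ n (k j) := Nat.cast_le.mpr (hmono.monotone hkk)
    have h2 : (n (k j) : ℝ) ≤ (1/4)^(j+1) * m j := by
      have h3 := mul_le_mul_of_nonneg_left (hratio' j)
        (by positivity : (0:ℝ) ≤ (1/4)^(j+1))
      calc (n (k j) : ℝ) = (1/4)^(j+1) * ((4:ℝ)^(j+1) * n (k j)) := by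
            rw [← mul_assoc, ← mul_pow]; norm_num
        _ ≤ (1/4)^(j+1) * m j := h3
    linarith
  -- smallness helper
  have hsmall : ∀ c : ℝ, 0 < c → ∃ J : ℕ, 4 * Real.pi * ((1/4:ℝ)^(J+1)) < c := by
    intro c hc
    have h0 : Tendsto (fun J : ℕ => (1/4:ℝ)^J) atTop (𝓝 0) :=
      tendsto_pow_atTop_nhds_zero_of_lt_one (by norm_num) (by norm_num)
    have h1 : Tendsto (fun J : ℕ => 4 * Real.pi * ((1/4:ℝ)^(J+1))) atTop (𝓝 0) := by
      have h2 := (h0.comp (tendsto_add_atTop_nat 1)).const_mul (4 * Real.pi)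
      simpa [Function.comp] using h2
    exact (h1.eventually (gt_mem_nhds hc)).exists
  refine ⟨Set.range (ff m), ?_, isCompact_range (ff_continuous m hm), ?_, ?_, ?_⟩
  · rintro z ⟨ε, rfl⟩
    exact ff_norm m ε
  · -- Perfect
    refine ⟨(isCompact_range (ff_continuous m hm)).isClosed, preperfect_iff_nhds.mpr ?_⟩
    rintro x ⟨ε, rfl⟩ U hU
    obtain ⟨δ, hδ, hball⟩ := Metric.mem_nhds_iff.mp hU
    obtain ⟨J, hJ⟩ := hsmall (min δ 1) (lt_min hδ one_pos)
    set ε' : ℕ → Bool := Function.update ε J (!(ε J)) with hε'_def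
    have hsub : tt m ε' - tt m ε = (bb (!(ε J)) - bb (ε J)) / m J := by
      rw [tt, tt, ← Summable.tsum_sub (summable_term m hm ε') (summable_term m hm ε)]
      rw [tsum_eq_single J]
      · rw [hε'_def, Function.update_self, sub_div]
      · intro j hj
        rw [hε'_def, Function.update_of_ne hj, sub_self]
    have hdiffval : |tt m ε' - tt m ε| = 1 / m J := by
      rw [hsub, abs_div, abs_of_pos (m_pos m hm J)]
      congr 1
      cases hε : ε J <;> simp [bb, hε]
    have hmJ4 : (4:ℝ) ≤ m J := le_trans (by
      calc (4:ℝ) = 4^1 := (pow_one 4).symm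
        _ ≤ 4^(J+1) := pow_le_pow_right₀ (by norm_num) (Nat.succ_le_succ (Nat.zero_le J))) (hm J)
    have hne : ff m ε' ≠ ff m ε := by
      intro h
      obtain ⟨q, hq⟩ := exp_inj _ _ h
      have h1 : tt m ε' - tt m ε = q := by
        have hpi := Real.pi_pos
        have h2 : 2 * Real.pi * (tt m ε') - 2 * Real.pi * (tt m ε)
            = 2 * Real.pi * (tt m ε' - tt m ε) := by ring
        rw [h2] at hq
        have := mul_left_cancel₀ (by positivity : (2 * Real.pi : ℝ) ≠ 0) hq
        exact this
      have h3 : |(q:ℝ)| < 1 := by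
        rw [← h1, hdiffval]
        rw [div_lt_one (m_pos m hm J)]
        linarith
      have h4 : q = 0 := by
        by_contra hq0
        have : (1:ℝ) ≤ |(q:ℝ)| := by
          exact_mod_cast Int.one_le_abs (by exact_mod_cast hq0 : q ≠ 0)
        linarith
      rw [h4] at h1
      have h5 : (0:ℝ) < 1 / m J := by positivity
      rw [← hdiffval, h1] at h5
      simp at h5
    refine ⟨ff m ε', ⟨hball ?_, Set.mem_range_self _⟩, hne⟩
    rw [Metric.mem_ball, dist_eq_norm]
    have habsdiff : |2 * Real.pi * (tt m ε') - 2 * Real.pi * (tt m ε)|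
        = 2 * Real.pi * (1 / m J) := by
      rw [show 2 * Real.pi * (tt m ε') - 2 * Real.pi * (tt m ε)
          = 2 * Real.pi * (tt m ε' - tt m ε) by ring, abs_mul,
        abs_of_pos (by positivity : (0:ℝ) < 2 * Real.pi), hdiffval]
    have hinv := inv_m_le m hm J
    have hpi := Real.pi_pos
    have hsmall1 : |2 * Real.pi * (tt m ε') - 2 * Real.pi * (tt m ε)| ≤ 1 := by
      rw [habsdiff]
      have := hJ
      have h6 : 2 * Real.pi * (1 / m J) ≤ 2 * Real.pi * ((1/4:ℝ)^(J+1)) := by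
        apply mul_le_mul_of_nonneg_left hinv (by positivity)
      have h7 : 4 * Real.pi * ((1/4:ℝ)^(J+1)) < 1 := lt_of_lt_of_le hJ (min_le_right _ _)
      nlinarith
    calc ‖ff m ε' - ff m ε‖
        ≤ 2 * |2 * Real.pi * (tt m ε') - 2 * Real.pi * (tt m ε)| :=
          exp_diff _ _ hsmall1
      _ = 2 * (2 * Real.pi * (1 / m J)) := by rw [habsdiff]
      _ ≤ 2 * (2 * Real.pi * ((1/4:ℝ)^(J+1))) := by
          apply mul_le_mul_of_nonneg_left ?_ (by norm_num)
          exact mul_le_mul_of_nonneg_left hinv (by positivity)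
      _ = 4 * Real.pi * ((1/4:ℝ)^(J+1)) := by ring
      _ < δ := lt_of_lt_of_le hJ (min_le_left _ _)
  · -- 1 ∈ K
    refine ⟨fun _ => false, ?_⟩
    have ht : tt m (fun _ => false) = 0 := by
      rw [tt]
      simp [bb]
    rw [ff, ht]
    simp
  · -- uniform convergence
    rw [Metric.tendstoUniformlyOn_iff]
    intro δ hδ
    obtain ⟨J, hJ⟩ := hsmall δ hδ
    filter_upwards [eventually_ge_atTop (k J + 1)] with kk hkk
    rintro z ⟨ε, rfl⟩
    rw [Complex.dist_eq]
    have hex : ∃ j, kk ≤ k j := ⟨kk, hkmono.le_apply⟩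
    set j0 := Nat.find hex with hj0_def
    have hspec : kk ≤ k j0 := Nat.find_spec hex
    have hmin : ∀ j, j < j0 → k j < kk := by
      intro j hj
      have := Nat.find_min hex hj
      omega
    have hJlt : J + 1 ≤ j0 := by
      by_contra h
      push_neg at h
      have h1 : j0 ≤ J := by omega
      have h2 : k j0 ≤ k J := hkmono.monotone h1
      omega
    have hj0_1 : 1 ≤ j0 := le_trans (Nat.le_add_left 1 J) hJlt
    have hd : ∀ j, j < j0 → m j ∣ n kk := by
      intro j hj
      exact hdvd_le (k j + 1) kk (hmin j hj)
    have hb : ∀ j, j0 ≤ j → (n kk : ℝ) / m j ≤ (1/4)^(j+1) := by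
      intro j hj
      exact hbound j kk (le_trans hspec (hkmono.monotone hj))
    have hest := pow_estimate m hm ε (n kk) j0 hj0_1 hd hb
    have hmono_pow : (1/4:ℝ)^j0 ≤ (1/4)^(J+1) :=
      pow_le_pow_of_le_one (by norm_num) (by norm_num) hJlt
    have hfinal : 4 * Real.pi * ((1/3) * (1/4:ℝ)^j0) < δ := by
      have hpi := Real.pi_pos
      nlinarith
    calc ‖1 - ff m ε ^ n kk‖ = ‖ff m ε ^ n kk - 1‖ := by
          rw [norm_sub_rev]
      _ ≤ 4 * Real.pi * ((1/3) * (1/4)^j0) := hest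
      _ < δ := hfinal
end

section
/- Let (n_k)_{k≥0} be a strictly increasing sequence of positive integers such that n_k divides n_{k+1} for every k ≥ 0, and let (a_k)_{k≥0} be a sequence of positive real numbers decreasing to zero such that the series Σ_{k≥0} a_k diverges. Then there exists a continuous (atomless) Borel probability measure σ on 𝕋 such that |∫_𝕋 z^{n_k} dσ(z) − 1| ≤ a_k for every k ≥ 0. -/
open MeasureTheory Filter Topology


open Set

noncomputable section DigitConstruction

/-- one digit-extraction step with parameter `p` (probability of digit 1). -/
def dstep (p t : ℝ) : ℝ := if t < 1 - p then t / (1 - p) else (t - (1 - p)) / p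

/-- state after reading `m` digits with parameters `p 0, ..., p (m-1)`. -/
def dstate (p : ℕ → ℝ) : ℕ → ℝ → ℝ
  | 0 => id
  | (m+1) => fun t => dstep (p m) (dstate p m t)

/-- the `m`-th digit. -/
def ddig (p : ℕ → ℝ) (m : ℕ) (t : ℝ) : Prop := 1 - p m ≤ dstate p m t

instance (p : ℕ → ℝ) (m : ℕ) (t : ℝ) : Decidable (ddig p m t) := by
  unfold ddig; infer_instance

lemma measurable_dstep (p : ℝ) : Measurable (dstep p) := by
  unfold dstep
  apply Measurable.ite (measurableSet_Iio (a := 1 - p)) <;> fun_prop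

lemma measurable_dstate (p : ℕ → ℝ) (m : ℕ) : Measurable (dstate p m) := by
  induction m with
  | zero => exact measurable_id
  | succ m ih => exact (measurable_dstep (p m)).comp ih

lemma measurableSet_ddig (p : ℕ → ℝ) (m : ℕ) : MeasurableSet {t | ddig p m t} :=
  measurableSet_le measurable_const (measurable_dstate p m)

/-- The base probability measure: Lebesgue on `[0,1)`. -/
def Pmeas : Measure ℝ := volume.restrict (Ico (0:ℝ) 1)

instance : IsProbabilityMeasure Pmeas := by
  constructor
  simp [Pmeas, Real.volume_Ico]

lemma dstep_false_eq (p : ℝ) (hp0 : 0 < p) (hp1 : p < 1) (A : Set ℝ) :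
    {t : ℝ | ¬ (1 - p ≤ t)} ∩ dstep p ⁻¹' A ∩ Ico 0 1
      = (fun t => (1 - p)⁻¹ * t) ⁻¹' (A ∩ Ico 0 1) := by
  have h1p : 0 < 1 - p := by linarith
  ext t
  simp only [mem_inter_iff, mem_setOf_eq, mem_preimage, mem_Ico, not_le]
  constructor
  · rintro ⟨⟨ht, hA⟩, h0, h1⟩
    rw [dstep, if_pos ht] at hA
    refine ⟨by rwa [div_eq_inv_mul] at hA, ?_, ?_⟩
    · positivity
    · rw [inv_mul_lt_iff₀ h1p, mul_one]; exact ht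
  · rintro ⟨hA, h0, h1⟩
    have ht : t < 1 - p := by
      rw [inv_mul_lt_iff₀ h1p, mul_one] at h1; exact h1
    have h0' : 0 ≤ t := by
      by_contra h
      push_neg at h
      nlinarith [inv_pos.2 h1p]
    refine ⟨⟨ht, ?_⟩, h0', by linarith⟩
    rw [dstep, if_pos ht, div_eq_inv_mul]; exact hA

lemma dstep_true_eq (p : ℝ) (hp0 : 0 < p) (hp1 : p < 1) (A : Set ℝ) :
    {t | 1 - p ≤ t} ∩ dstep p ⁻¹' A ∩ Ico 0 1
      = (fun t => p⁻¹ * (t + -(1 - p))) ⁻¹' (A ∩ Ico 0 1) := by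
  ext t
  simp only [mem_inter_iff, mem_setOf_eq, mem_preimage, mem_Ico]
  constructor
  · rintro ⟨⟨ht, hA⟩, h0, h1⟩
    rw [dstep, if_neg (not_lt.2 ht)] at hA
    refine ⟨by rwa [div_eq_inv_mul, sub_eq_add_neg] at hA, ?_, ?_⟩
    · have : 0 ≤ t - (1 - p) := by linarith
      rw [← sub_eq_add_neg]; positivity
    · rw [← sub_eq_add_neg, inv_mul_lt_iff₀ hp0, mul_one]; linarith
  · rintro ⟨hA, h0, h1⟩
    rw [← sub_eq_add_neg] at h0 h1 hA
    have hip : 0 < p⁻¹ := inv_pos.2 hp0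
    rw [mul_nonneg_iff_of_pos_left hip] at h0
    rw [inv_mul_lt_iff₀ hp0, mul_one] at h1
    have ht : 1 - p ≤ t := by linarith
    have h1' : t < 1 := by linarith
    refine ⟨⟨ht, ?_⟩, by linarith, h1'⟩
    rw [dstep, if_neg (not_lt.2 ht), div_eq_inv_mul, sub_eq_add_neg]; exact hA



section Meas

lemma Pmeas_dstep_false {p : ℝ} (hp0 : 0 < p) (hp1 : p < 1) (A : Set ℝ) :
    Pmeas ({t | ¬ (1 - p ≤ t)} ∩ dstep p ⁻¹' A) = ENNReal.ofReal (1 - p) * Pmeas A := by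
  have h1p : 0 < 1 - p := by linarith
  rw [Pmeas, Measure.restrict_apply']
  · rw [dstep_false_eq p hp0 hp1 A]
    rw [Real.volume_preimage_mul_left (by positivity : (1-p)⁻¹ ≠ 0), inv_inv,
      abs_of_pos h1p, Measure.restrict_apply']
    exact measurableSet_Ico
  · exact measurableSet_Ico

lemma Pmeas_dstep_true {p : ℝ} (hp0 : 0 < p) (hp1 : p < 1) (A : Set ℝ) :
    Pmeas ({t | 1 - p ≤ t} ∩ dstep p ⁻¹' A) = ENNReal.ofReal p * Pmeas A := by
  rw [Pmeas, Measure.restrict_apply', dstep_true_eq p hp0 hp1 A]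
  · rw [show (fun t => p⁻¹ * (t + -(1 - p))) = (fun t : ℝ => p⁻¹ * t) ∘ (fun t => -(1-p) + t) by
      funext t; dsimp only [Function.comp]; ring_nf]
    rw [Set.preimage_comp, measure_preimage_add,
      Real.volume_preimage_mul_left (by positivity : p⁻¹ ≠ 0), inv_inv,
      abs_of_pos hp0, Measure.restrict_apply']
    exact measurableSet_Ico
  · exact measurableSet_Ico

end Meas

section Cyl

/-- digit value set -/
def dset (p : ℝ) (b : Bool) : Set ℝ := {u | (1 - p ≤ u) ↔ b = true}

/-- weight -/
def dw (p : ℝ) (b : Bool) : ℝ := if b then p else 1 - p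

lemma measurableSet_dset (p : ℝ) (b : Bool) : MeasurableSet (dset p b) := by
  cases b
  · simp only [dset, iff_false, Bool.false_eq_true]
    exact (measurableSet_le measurable_const measurable_id).compl
  · simp only [dset, iff_true]
    exact measurableSet_le measurable_const measurable_id

lemma Pmeas_dstep_bool {p : ℝ} (hp0 : 0 < p) (hp1 : p < 1) (b : Bool) (A : Set ℝ) :
    Pmeas (dset p b ∩ dstep p ⁻¹' A) = ENNReal.ofReal (dw p b) * Pmeas A := by
  cases b
  · rw [show dset p false = {t : ℝ | ¬ (1 - p ≤ t)} by ext u; simp [dset]]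
    exact Pmeas_dstep_false hp0 hp1 A
  · rw [show dset p true = {t : ℝ | 1 - p ≤ t} by ext u; simp [dset]]
    exact Pmeas_dstep_true hp0 hp1 A

variable {p : ℕ → ℝ} (hp : ∀ m, 0 < p m ∧ p m < 1)
include hp

lemma Pmeas_cylinder (y : ℕ → Bool) (M : ℕ) (A : Set ℝ) :
    Pmeas ({t | ∀ m < M, (ddig p m t ↔ y m = true)} ∩ dstate p M ⁻¹' A)
      = (∏ m ∈ Finset.range M, ENNReal.ofReal (dw (p m) (y m))) * Pmeas A := by
  induction M generalizing A with
  | zero => simp [dstate]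
  | succ M ih =>
      have hkey : {t | ∀ m < M + 1, (ddig p m t ↔ y m = true)} ∩ dstate p (M+1) ⁻¹' A
          = {t | ∀ m < M, (ddig p m t ↔ y m = true)}
            ∩ dstate p M ⁻¹' (dset (p M) (y M) ∩ dstep (p M) ⁻¹' A) := by
        ext t
        simp only [mem_inter_iff, mem_setOf_eq, mem_preimage, Nat.lt_succ_iff_lt_or_eq]
        constructor
        · rintro ⟨hdig, hA⟩
          exact ⟨fun m hm => hdig m (Or.inl hm), hdig M (Or.inr rfl), hA⟩
        · rintro ⟨hdig, hM, hA⟩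
          refine ⟨fun m hm => ?_, hA⟩
          rcases hm with hm | rfl
          · exact hdig m hm
          · exact hM
      rw [hkey, ih, Pmeas_dstep_bool (hp M).1 (hp M).2, Finset.prod_range_succ]
      ring

lemma Pmeas_dstate (M : ℕ) (A : Set ℝ) :
    Pmeas (dstate p M ⁻¹' A) = Pmeas A := by
  induction M generalizing A with
  | zero => simp [dstate]
  | succ M ih =>
      have : dstate p (M+1) ⁻¹' A = dstate p M ⁻¹' (dstep (p M) ⁻¹' A) := rfl
      rw [this, ih]
      have hB : MeasurableSet {t : ℝ | 1 - p M ≤ t} :=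
        measurableSet_le measurable_const measurable_id
      have hsplit := measure_inter_add_diff (μ := Pmeas) (dstep (p M) ⁻¹' A) hB
      have e1 : dstep (p M) ⁻¹' A ∩ {t | 1 - p M ≤ t}
          = {t : ℝ | 1 - p M ≤ t} ∩ dstep (p M) ⁻¹' A := by rw [Set.inter_comm]
      have e2 : dstep (p M) ⁻¹' A \ {t | 1 - p M ≤ t}
          = {t : ℝ | ¬ (1 - p M ≤ t)} ∩ dstep (p M) ⁻¹' A := by
        ext t; simp [Set.mem_diff, and_comm]
      rw [e1, e2, Pmeas_dstep_true (hp M).1 (hp M).2, Pmeas_dstep_false (hp M).1 (hp M).2] at hsplit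
      rw [← hsplit, ← add_mul, ← ENNReal.ofReal_add (le_of_lt (hp M).1) (by linarith [(hp M).2]),
        add_sub_cancel, ENNReal.ofReal_one, one_mul]

lemma Pmeas_ddig (m : ℕ) :
    Pmeas {t | ddig p m t} = ENNReal.ofReal (p m) := by
  have : {t | ddig p m t} = dstate p m ⁻¹' {u | 1 - p m ≤ u} := rfl
  rw [this, Pmeas_dstate hp, Pmeas, Measure.restrict_apply'
    measurableSet_Ico]
  have : {u : ℝ | 1 - p m ≤ u} ∩ Ico 0 1 = Ico (1 - p m) 1 := by
    ext u
    simp only [mem_inter_iff, mem_setOf_eq, mem_Ico]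
    constructor
    · rintro ⟨h1, h2, h3⟩; exact ⟨h1, h3⟩
    · rintro ⟨h1, h2⟩
      exact ⟨h1, by linarith [(hp m).2], h2⟩
  rw [this, Real.volume_Ico]
  congr 1; ring

end Cyl

section X

variable (p : ℕ → ℝ) (v : ℕ → ℝ)

/-- contribution of the `m`-th digit. -/
def dval (m : ℕ) (t : ℝ) : ℝ := if ddig p m t then v m else 0

/-- the random series. -/
def dX (t : ℝ) : ℝ := ∑' m, dval p v m t

/-- tails of the random series. -/
def dtail (k : ℕ) (t : ℝ) : ℝ := ∑' m, dval p v (m + k) t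

variable {v} (hv0 : ∀ m, 0 < v m) (hv4 : ∀ m, 4 * v (m+1) ≤ v m)
include hv0 hv4

lemma dval_nonneg (m : ℕ) (t : ℝ) : 0 ≤ dval p v m t := by
  unfold dval; split <;> simp [le_of_lt (hv0 m)]

lemma dval_le (m : ℕ) (t : ℝ) : dval p v m t ≤ v m := by
  unfold dval; split <;> simp [le_of_lt (hv0 m)]

lemma v_decay : ∀ i m, v (m + i) ≤ (4:ℝ)⁻¹ ^ i * v m := by
  intro i
  induction i with
  | zero => simp
  | succ i ih =>
      intro m
      have h1 : v (m + (i+1)) ≤ (4:ℝ)⁻¹ ^ i * v (m+1) := by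
        have := ih (m+1)
        calc v (m + (i+1)) = v ((m+1) + i) := by ring_nf
        _ ≤ (4:ℝ)⁻¹ ^ i * v (m+1) := this
      have h2 : v (m+1) ≤ (4:ℝ)⁻¹ * v m := by
        rw [inv_mul_eq_div, le_div_iff₀ (by norm_num : (0:ℝ) < 4)]
        linarith [hv4 m]
      calc v (m + (i+1)) ≤ (4:ℝ)⁻¹ ^ i * v (m+1) := h1
      _ ≤ (4:ℝ)⁻¹ ^ i * ((4:ℝ)⁻¹ * v m) := by
          apply mul_le_mul_of_nonneg_left h2 (by positivity)
      _ = (4:ℝ)⁻¹ ^ (i+1) * v m := by ring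

lemma summable_v_tail (k : ℕ) : Summable (fun m => v (m + k)) := by
  apply Summable.of_nonneg_of_le (fun m => le_of_lt (hv0 _)) (fun m => ?_)
    (Summable.mul_right (v k) (summable_geometric_of_lt_one (by norm_num) (by norm_num :
      (4:ℝ)⁻¹ < 1)))
  calc v (m + k) = v (k + m) := by ring_nf
  _ ≤ (4:ℝ)⁻¹ ^ m * v k := v_decay hv0 hv4 m k

lemma summable_dval_tail (k : ℕ) (t : ℝ) : Summable (fun m => dval p v (m + k) t) :=
  Summable.of_nonneg_of_le (fun m => dval_nonneg p hv0 hv4 _ t)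
    (fun m => dval_le p hv0 hv4 _ t) (summable_v_tail hv0 hv4 k)

lemma summable_dval (t : ℝ) : Summable (fun m => dval p v m t) := by
  simpa using summable_dval_tail p hv0 hv4 0 t

lemma dtail_nonneg (k : ℕ) (t : ℝ) : 0 ≤ dtail p v k t :=
  tsum_nonneg (fun m => dval_nonneg p hv0 hv4 _ t)

lemma dtail_le (k : ℕ) (t : ℝ) : dtail p v k t ≤ (4/3) * v k := by
  have h1 : dtail p v k t ≤ ∑' m, v (m + k) :=
    Summable.tsum_le_tsum (fun m => dval_le p hv0 hv4 _ t)
      (summable_dval_tail p hv0 hv4 k t) (summable_v_tail hv0 hv4 k)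
  have h2 : ∑' m, v (m + k) ≤ ∑' m : ℕ, (4:ℝ)⁻¹ ^ m * v k := by
    apply Summable.tsum_le_tsum _ (summable_v_tail hv0 hv4 k)
      (Summable.mul_right (v k) (summable_geometric_of_lt_one (by norm_num) (by norm_num)))
    intro m
    calc v (m + k) = v (k + m) := by ring_nf
    _ ≤ (4:ℝ)⁻¹ ^ m * v k := v_decay hv0 hv4 m k
  have h3 : ∑' m : ℕ, (4:ℝ)⁻¹ ^ m * v k = (4/3) * v k := by
    rw [tsum_mul_right, tsum_geometric_of_lt_one (by norm_num) (by norm_num)]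
    norm_num
  linarith

lemma dX_eq_head_add_tail (k : ℕ) (t : ℝ) :
    dX p v t = (∑ m ∈ Finset.range k, dval p v m t) + dtail p v k t := by
  rw [dX, ← (summable_dval p hv0 hv4 t).sum_add_tsum_nat_add k]
  rfl

lemma dtail_succ (k : ℕ) (t : ℝ) :
    dtail p v k t = dval p v k t + dtail p v (k+1) t := by
  rw [dtail, Summable.tsum_eq_zero_add (summable_dval_tail p hv0 hv4 k t)]
  simp only [zero_add]
  congr 1
  · rw [dtail]
    apply tsum_congr
    intro m
    congr 1
    ring

lemma ddig_iff_dtail (k : ℕ) (t : ℝ) : ddig p k t ↔ v k ≤ dtail p v k t := by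
  constructor
  · intro h
    rw [dtail_succ p hv0 hv4]
    have : dval p v k t = v k := by rw [dval, if_pos h]
    linarith [dtail_nonneg p hv0 hv4 (k+1) t]
  · intro h
    by_contra hd
    have h1 : dval p v k t = 0 := by rw [dval, if_neg hd]
    have h2 : dtail p v k t ≤ (4/3) * v (k+1) := by
      rw [dtail_succ p hv0 hv4, h1, zero_add]
      exact dtail_le p hv0 hv4 (k+1) t
    have := hv4 k
    have := hv0 (k+1)
    linarith

lemma ddig_eq_of_dX_eq {t t' : ℝ} (h : dX p v t = dX p v t') (m : ℕ) :
    ddig p m t ↔ ddig p m t' := by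
  induction m using Nat.strong_induction_on with
  | _ m ih =>
    have htail : dtail p v m t = dtail p v m t' := by
      have h1 := dX_eq_head_add_tail p hv0 hv4 m t
      have h2 := dX_eq_head_add_tail p hv0 hv4 m t'
      have hhead : (∑ i ∈ Finset.range m, dval p v i t)
          = ∑ i ∈ Finset.range m, dval p v i t' := by
        apply Finset.sum_congr rfl
        intro i hi
        rw [Finset.mem_range] at hi
        have := ih i hi
        rw [dval, dval]
        by_cases hd : ddig p i t
        · rw [if_pos hd, if_pos (this.1 hd)]
        · rw [if_neg hd, if_neg (fun hh => hd (this.2 hh))]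
      linarith [h]
    rw [ddig_iff_dtail p hv0 hv4, ddig_iff_dtail p hv0 hv4, htail]

lemma measurable_dval (m : ℕ) : Measurable (dval p v m) := by
  apply Measurable.ite (measurableSet_ddig p m) <;> exact measurable_const

lemma measurable_dX : Measurable (dX p v) := by
  apply measurable_of_tendsto_metrizable
    (f := fun M t => ∑ m ∈ Finset.range M, dval p v m t)
    (fun M => Finset.measurable_sum _ (fun m _ => measurable_dval p hv0 hv4 m))
  rw [tendsto_pi_nhds]
  intro t
  exact (summable_dval p hv0 hv4 t).hasSum.tendsto_sum_nat

end X

section Atom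

variable (p : ℕ → ℝ) {v : ℕ → ℝ} (hv0 : ∀ m, 0 < v m) (hv4 : ∀ m, 4 * v (m+1) ≤ v m)
variable (hp : ∀ m, 0 < p m ∧ p m ≤ 1/2)
variable (hdiv : Tendsto (fun M => ∑ m ∈ Finset.range M, p m) atTop atTop)
include hv0 hv4 hp hdiv

lemma Pmeas_dX_singleton (c : ℝ) : Pmeas {t | dX p v t = c} = 0 := by
  have hp' : ∀ m, 0 < p m ∧ p m < 1 := fun m => ⟨(hp m).1, by linarith [(hp m).2]⟩
  rcases Set.eq_empty_or_nonempty {t | dX p v t = c} with hE | ⟨t₀, ht₀⟩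
  · rw [hE]; simp
  · simp only [mem_setOf_eq] at ht₀
    -- bound by cylinder probability for every M
    have hbound : ∀ M, Pmeas {t | dX p v t = c}
        ≤ ENNReal.ofReal (Real.exp (- ∑ m ∈ Finset.range M, p m)) := by
      intro M
      set y : ℕ → Bool := fun m => decide (ddig p m t₀) with hy
      have hsub : {t | dX p v t = c}
          ⊆ {t | ∀ m < M, (ddig p m t ↔ y m = true)} ∩ dstate p M ⁻¹' univ := by
        intro t ht
        simp only [mem_setOf_eq] at ht
        refine ⟨fun m _ => ?_, mem_univ _⟩
        rw [hy]
        simp only [decide_eq_true_eq]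
        exact ddig_eq_of_dX_eq p hv0 hv4 (by rw [ht, ht₀]) m
      refine le_trans (measure_mono hsub) ?_
      rw [Pmeas_cylinder hp' y M univ]
      have hPuniv : Pmeas univ = 1 := measure_univ
      rw [hPuniv, mul_one]
      have h1 : (∏ m ∈ Finset.range M, ENNReal.ofReal (dw (p m) (y m)))
          = ENNReal.ofReal (∏ m ∈ Finset.range M, dw (p m) (y m)) := by
        rw [ENNReal.ofReal_prod_of_nonneg]
        intro m _
        rw [dw]; split
        · exact le_of_lt (hp m).1
        · linarith [(hp' m).2]
      rw [h1]
      apply ENNReal.ofReal_le_ofReal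
      have h2 : ∏ m ∈ Finset.range M, dw (p m) (y m)
          ≤ ∏ m ∈ Finset.range M, Real.exp (- p m) := by
        apply Finset.prod_le_prod
        · intro m _
          rw [dw]; split
          · exact le_of_lt (hp m).1
          · linarith [(hp' m).2]
        · intro m _
          have hle : dw (p m) (y m) ≤ 1 - p m := by
            rw [dw]; split
            · linarith [(hp m).2]
            · exact le_rfl
          have := Real.add_one_le_exp (- p m)
          linarith
      have h3 : ∏ m ∈ Finset.range M, Real.exp (- p m)
          = Real.exp (- ∑ m ∈ Finset.range M, p m) := by
        rw [← Real.exp_sum]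
        congr 1
        simp
      linarith [h2, h3.le, h3.ge]
    -- the bound tends to zero
    have htend : Tendsto (fun M => ENNReal.ofReal
        (Real.exp (- ∑ m ∈ Finset.range M, p m))) atTop (𝓝 0) := by
      have h1 : Tendsto (fun M => - ∑ m ∈ Finset.range M, p m) atTop atBot :=
        tendsto_neg_atTop_atBot.comp hdiv
      have h2 : Tendsto (fun M => Real.exp (- ∑ m ∈ Finset.range M, p m)) atTop (𝓝 0) :=
        Real.tendsto_exp_atBot.comp h1
      have := ENNReal.tendsto_ofReal h2
      simpa using this
    have h0 : Pmeas {t | dX p v t = c} ≤ 0 := ge_of_tendsto htend (Eventually.of_forall hbound)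
    exact le_antisymm h0 zero_le

end Atom

section ExpBound

lemma norm_exp_mul_I_sub_one_le (θ : ℝ) : ‖Complex.exp (θ * Complex.I) - 1‖ ≤ |θ| := by
  have h : Complex.exp (θ * Complex.I) - 1
      = ((Real.cos θ - 1 : ℝ) : ℂ) + ((Real.sin θ : ℝ) : ℂ) * Complex.I := by
    rw [Complex.exp_mul_I, ← Complex.ofReal_cos, ← Complex.ofReal_sin]
    push_cast
    ring
  rw [h, Complex.norm_add_mul_I]
  have hsin : Real.sin (θ/2) ^ 2 ≤ (θ/2) ^ 2 := Real.sin_sq_le_sq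
  have hcos : 1 - Real.cos θ = 2 * Real.sin (θ/2) ^ 2 := by
    have := Real.abs_sin_half θ
    have h2 : Real.sin (θ/2) ^ 2 = (1 - Real.cos θ) / 2 := by
      rw [← sq_abs, this, Real.sq_sqrt]
      have := Real.cos_le_one θ
      linarith
    linarith
  have hineq : (Real.cos θ - 1) ^ 2 + Real.sin θ ^ 2 ≤ θ ^ 2 := by
    have hpyth : Real.sin θ ^ 2 + Real.cos θ ^ 2 = 1 := Real.sin_sq_add_cos_sq θ
    nlinarith
  calc Real.sqrt ((Real.cos θ - 1) ^ 2 + Real.sin θ ^ 2)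
      ≤ Real.sqrt (θ ^ 2) := Real.sqrt_le_sqrt hineq
  _ = |θ| := Real.sqrt_sq_eq_abs θ

end ExpBound

section NatSeq

variable {n : ℕ → ℕ} (hmono : StrictMono n) (hpos : ∀ k, 0 < n k)
    (hdvd : ∀ k, n k ∣ n (k + 1))
include hmono hpos hdvd

lemma nseq_dvd_of_le : ∀ {j k}, j ≤ k → n j ∣ n k := by
  intro j k hjk
  induction k, hjk using Nat.le_induction with
  | base => rfl
  | succ k hk ih => exact ih.trans (hdvd k)

lemma nseq_double (j : ℕ) : 2 * n j ≤ n (j + 1) := by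
  obtain ⟨t, ht⟩ := hdvd j
  have hlt : n j < n (j + 1) := hmono (Nat.lt_succ_self j)
  have h0 := hpos j
  have ht2 : 2 ≤ t := by
    by_contra h
    push_neg at h
    interval_cases t <;> omega
  calc 2 * n j ≤ t * n j := Nat.mul_le_mul_right _ ht2
  _ = n j * t := Nat.mul_comm _ _
  _ = n (j + 1) := ht.symm

lemma nseq_pow_le : ∀ (i j : ℕ), n j * 2 ^ i ≤ n (j + i) := by
  intro i
  induction i with
  | zero => simp
  | succ i ih =>
      intro j
      calc n j * 2 ^ (i+1) = (n j * 2 ^ i) * 2 := by ring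
      _ ≤ n (j + i) * 2 := Nat.mul_le_mul_right _ (ih j)
      _ = 2 * n (j + i) := Nat.mul_comm _ _
      _ ≤ n (j + i + 1) := nseq_double hmono hpos hdvd (j+i)
      _ = n (j + (i+1)) := by ring_nf

end NatSeq

section Diverge

lemma summable_even_of_summable {a : ℕ → ℝ} (ha_pos : ∀ k, 0 < a k) (ha_anti : Antitone a)
    (h : Summable (fun m => a (2*m))) : Summable a := by
  have hC : ∀ N, ∑ m ∈ Finset.range N, a (2*m) ≤ ∑' m, a (2*m) :=
    fun N => Summable.sum_le_tsum _ (fun m _ => (ha_pos _).le) h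
  apply summable_of_sum_range_le (c := 2 * ∑' m, a (2*m)) (fun k => (ha_pos k).le)
  intro N
  have key : ∀ N, ∑ k ∈ Finset.range (2*N), a k ≤ 2 * ∑ m ∈ Finset.range N, a (2*m) := by
    intro N
    induction N with
    | zero => simp
    | succ N ih =>
        have h1 : 2*(N+1) = (2*N) + 1 + 1 := by ring
        rw [h1, Finset.sum_range_succ, Finset.sum_range_succ, Finset.sum_range_succ]
        have h2 : a (2*N+1) ≤ a (2*N) := ha_anti (by omega)
        linarith
  calc ∑ k ∈ Finset.range N, a k ≤ ∑ k ∈ Finset.range (2*N), a k := by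
        apply Finset.sum_le_sum_of_subset_of_nonneg
        · exact Finset.range_subset_range.2 (by omega)
        · exact fun k _ _ => (ha_pos k).le
  _ ≤ 2 * ∑ m ∈ Finset.range N, a (2*m) := key N
  _ ≤ 2 * ∑' m, a (2*m) := by linarith [hC N]

lemma tendsto_sum_pmin {a : ℕ → ℝ} (ha_pos : ∀ k, 0 < a k) (ha_anti : Antitone a)
    (ha_div : ¬ Summable a) :
    Tendsto (fun M => ∑ m ∈ Finset.range M,
      min (1/2) (a (2*m) / (4 * Real.pi))) atTop atTop := by
  set p : ℕ → ℝ := fun m => min (1/2) (a (2*m) / (4 * Real.pi)) with hp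
  have hppos : ∀ m, 0 < p m := fun m => lt_min (by norm_num)
    (div_pos (ha_pos _) (by positivity))
  rw [← not_summable_iff_tendsto_nat_atTop_of_nonneg (fun m => (hppos m).le)]
  intro hS
  -- p m → 0, so eventually p m = a (2m)/(4π)
  have h0 : Tendsto p atTop (𝓝 0) := hS.tendsto_atTop_zero
  obtain ⟨M₀, hM₀⟩ := (h0.eventually (eventually_lt_nhds (by norm_num : (0:ℝ) < 1/2))).exists_forall_of_atTop
  have heq : ∀ m, M₀ ≤ m → p m = a (2*m) / (4 * Real.pi) := by
    intro m hm
    have hlt : min (1/2) (a (2*m) / (4*Real.pi)) < 1/2 := hM₀ m hm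
    have h2 : a (2*m) / (4*Real.pi) < 1/2 := by
      rcases min_lt_iff.1 hlt with h | h
      · linarith
      · exact h
    exact min_eq_right h2.le
  have hS2 : Summable (fun m => a (2*(m + M₀)) / (4 * Real.pi)) := by
    have h := (summable_nat_add_iff M₀).2 hS
    exact h.congr (fun m => heq (m + M₀) (by omega))
  have hS3 : Summable (fun m => a (2*(m + M₀))) := by
    have := hS2.mul_right (4 * Real.pi)
    apply this.congr
    intro m
    field_simp
  have hS4 : Summable (fun m => a (2*m)) := by
    have : (fun m => a (2*(m + M₀))) = (fun m => a (2*m + 2*M₀)) := by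
      funext m; congr 1; ring
    rw [this] at hS3
    have : (fun m => a (2*m + 2*M₀)) = (fun m => (fun j => a (2*j)) (m + M₀)) := by
      funext m; congr 1; ring
    rw [this] at hS3
    exact (summable_nat_add_iff M₀).1 hS3
  exact ha_div (summable_even_of_summable ha_pos ha_anti hS4)

end Diverge

section Helpers

open Real in
lemma norm_cexp2 (x : ℝ) : ‖Complex.exp ((x:ℂ) * (2 * Real.pi * Complex.I))‖ = 1 := by
  rw [show ((x:ℂ) * (2 * Real.pi * Complex.I)) = ((2 * Real.pi * x : ℝ) : ℂ) * Complex.I by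
    push_cast; ring]
  rw [Complex.norm_exp_ofReal_mul_I]

lemma norm_cexp2_sub_one (x : ℝ) :
    ‖Complex.exp ((x:ℂ) * (2 * Real.pi * Complex.I)) - 1‖ ≤ 2 * Real.pi * |x| := by
  rw [show ((x:ℂ) * (2 * Real.pi * Complex.I)) = ((2 * Real.pi * x : ℝ) : ℂ) * Complex.I by
    push_cast; ring]
  calc ‖Complex.exp (((2 * Real.pi * x : ℝ) : ℂ) * Complex.I) - 1‖
      ≤ |2 * Real.pi * x| := norm_exp_mul_I_sub_one_le _
  _ = 2 * Real.pi * |x| := by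
      rw [abs_mul, abs_of_pos (by positivity : (0:ℝ) < 2 * Real.pi)]

variable (p : ℕ → ℝ) {v : ℕ → ℝ} (hv0 : ∀ m, 0 < v m) (hv4 : ∀ m, 4 * v (m+1) ≤ v m)
include hv0 hv4

lemma measurable_dtail (M : ℕ) : Measurable (dtail p v M) := by
  have h : dtail p v M = fun t => dX p v t - ∑ m ∈ Finset.range M, dval p v m t := by
    funext t
    have := dX_eq_head_add_tail p hv0 hv4 M t
    linarith
  rw [h]
  exact (measurable_dX p hv0 hv4).sub
    (Finset.measurable_sum _ (fun m _ => measurable_dval p hv0 hv4 m))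

variable (hp' : ∀ m, 0 < p m ∧ p m < 1)
include hp'

lemma integral_dval (j : ℕ) : ∫ t, dval p v j t ∂Pmeas = p j * v j := by
  have h : (fun t => dval p v j t) = Set.indicator {t | ddig p j t} (fun _ => v j) := by
    funext t
    by_cases h : ddig p j t <;>
      simp [dval, Set.indicator_apply, h, Set.mem_setOf_eq]
  rw [h, integral_indicator_const _ (measurableSet_ddig p j), measureReal_def, Pmeas_ddig hp' j,
    ENNReal.toReal_ofReal (hp' j).1.le, smul_eq_mul]

lemma integrable_dval (j : ℕ) : Integrable (fun t => dval p v j t) Pmeas := by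
  apply Integrable.mono' (integrable_const (v j))
    (measurable_dval p hv0 hv4 j).aestronglyMeasurable
  apply ae_of_all
  intro t
  rw [Real.norm_eq_abs, abs_of_nonneg (dval_nonneg p hv0 hv4 j t)]
  exact dval_le p hv0 hv4 j t

lemma integral_dtail (M : ℕ) :
    ∫ t, dtail p v M t ∂Pmeas = ∑' m, p (m + M) * v (m + M) := by
  have hmeas : ∀ i : ℕ, AEStronglyMeasurable (fun t => dval p v (i + M) t) Pmeas :=
    fun i => (measurable_dval p hv0 hv4 (i + M)).aestronglyMeasurable
  have hlint : ∑' i : ℕ, ∫⁻ t, ‖dval p v (i + M) t‖₊ ∂Pmeas ≠ ⊤ := by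
    have hbd : ∀ i : ℕ, ∫⁻ t, ‖dval p v (i + M) t‖₊ ∂Pmeas ≤ ENNReal.ofReal (v (i + M)) := by
      intro i
      calc ∫⁻ t, (‖dval p v (i + M) t‖₊ : ENNReal) ∂Pmeas
          ≤ ∫⁻ _, ENNReal.ofReal (v (i + M)) ∂Pmeas := by
            apply lintegral_mono
            intro t
            simp only []
            rw [← enorm_eq_nnnorm, ← ofReal_norm]
            apply ENNReal.ofReal_le_ofReal
            rw [Real.norm_eq_abs, abs_of_nonneg (dval_nonneg p hv0 hv4 _ t)]
            exact dval_le p hv0 hv4 _ t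
      _ = ENNReal.ofReal (v (i + M)) := by
            rw [lintegral_const, measure_univ, mul_one]
    have hsum : Summable (fun i => v (i + M)) := summable_v_tail hv0 hv4 M
    have hle : ∑' i : ℕ, ∫⁻ t, ‖dval p v (i + M) t‖₊ ∂Pmeas
        ≤ ENNReal.ofReal (∑' i, v (i + M)) := by
      calc ∑' i : ℕ, ∫⁻ t, ‖dval p v (i + M) t‖₊ ∂Pmeas
          ≤ ∑' i : ℕ, ENNReal.ofReal (v (i + M)) := ENNReal.tsum_le_tsum hbd
      _ = ENNReal.ofReal (∑' i, v (i + M)) :=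
          (ENNReal.ofReal_tsum_of_nonneg (fun i => (hv0 _).le) hsum).symm
    exact (lt_of_le_of_lt hle ENNReal.ofReal_lt_top).ne
  have hswap : (∫ t, ∑' (m : ℕ), dval p v (m + M) t ∂Pmeas)
      = ∑' (m : ℕ), ∫ t, dval p v (m + M) t ∂Pmeas := integral_tsum hmeas hlint
  have hd : ∫ t, dtail p v M t ∂Pmeas = ∫ t, ∑' (m : ℕ), dval p v (m + M) t ∂Pmeas := rfl
  rw [hd, hswap]
  exact tsum_congr (fun m => integral_dval p hv0 hv4 hp' (m + M))

end Helpers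

end DigitConstruction


/-- Remark 3.9: if `n_k ∣ n_{k+1}` for every `k` and `(a_k)` is a sequence of positive
reals decreasing to zero with `∑ a_k = ∞`, there is a continuous (atomless) probability
measure `σ` on the unit circle such that `|σ̂(n_k) - 1| ≤ a_k` for every `k`. -/
theorem exists_continuous_measure_with_rate_of_dvd
    (n : ℕ → ℕ) (hmono : StrictMono n) (hpos : ∀ k, 0 < n k)
    (hdvd : ∀ k, n k ∣ n (k + 1))
    (a : ℕ → ℝ) (ha_pos : ∀ k, 0 < a k) (ha_anti : Antitone a)
    (ha_lim : Tendsto a atTop (𝓝 0)) (ha_div : ¬ Summable a) :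
    ∃ σ : Measure ℂ, IsProbabilityMeasure σ ∧ σ {z : ℂ | ‖z‖ = 1}ᶜ = 0 ∧
      (∀ z : ℂ, σ {z} = 0) ∧
      ∀ k, ‖(∫ z : ℂ, z ^ (n k) ∂σ) - 1‖ ≤ a k := by
  classical
  -- the parameters of the digit construction
  have hpi : (0:ℝ) < Real.pi := Real.pi_pos
  set v : ℕ → ℝ := fun m => ((n (2*m) : ℝ))⁻¹ with hvdef
  set p : ℕ → ℝ := fun m => min (1/2) (a (2*m) / (4 * Real.pi)) with hpdef
  have hv0 : ∀ m, 0 < v m := by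
    intro m
    have : (0:ℝ) < (n (2*m) : ℝ) := by exact_mod_cast hpos (2*m)
    simpa [hvdef] using inv_pos.2 this
  have hv4 : ∀ m, 4 * v (m+1) ≤ v m := by
    intro m
    have h1 : 4 * n (2*m) ≤ n (2*(m+1)) := by
      have h2 := nseq_pow_le hmono hpos hdvd 2 (2*m)
      calc 4 * n (2*m) = n (2*m) * 2^2 := by ring
      _ ≤ n (2*m + 2) := h2
      _ = n (2*(m+1)) := by ring_nf
    have hx1 : (0:ℝ) < (n (2*m) : ℝ) := by exact_mod_cast hpos (2*m)
    have hx2 : (0:ℝ) < (n (2*(m+1)) : ℝ) := by exact_mod_cast hpos (2*(m+1))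
    have h1' : 4 * (n (2*m) : ℝ) ≤ (n (2*(m+1)) : ℝ) := by exact_mod_cast h1
    rw [hvdef]
    simp only []
    rw [show (4:ℝ) * ((n (2*(m+1)) : ℝ))⁻¹ = 4 / (n (2*(m+1)) : ℝ) by ring,
      show ((n (2*m) : ℝ))⁻¹ = 1 / (n (2*m) : ℝ) by ring,
      div_le_div_iff₀ hx2 hx1]
    nlinarith
  have hp01 : ∀ m, 0 < p m ∧ p m ≤ 1/2 := by
    intro m
    constructor
    · exact lt_min (by norm_num) (div_pos (ha_pos _) (by positivity))
    · exact min_le_left _ _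
  have hp' : ∀ m, 0 < p m ∧ p m < 1 :=
    fun m => ⟨(hp01 m).1, lt_of_le_of_lt (hp01 m).2 (by norm_num)⟩
  have hpdiv : Tendsto (fun M => ∑ m ∈ Finset.range M, p m) atTop atTop :=
    tendsto_sum_pmin ha_pos ha_anti ha_div
  -- the circle-valued map
  set f : ℝ → ℂ :=
    fun t => Complex.exp (((dX p v t : ℝ) : ℂ) * (2 * Real.pi * Complex.I)) with hfdef
  have hXmeas : Measurable (dX p v) := measurable_dX p hv0 hv4
  have hfmeas : Measurable f := by
    apply Complex.measurable_exp.comp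
    exact (Complex.measurable_ofReal.comp hXmeas).mul_const _
  refine ⟨Pmeas.map f, Measure.isProbabilityMeasure_map hfmeas.aemeasurable, ?_, ?_, ?_⟩
  · -- supported on the unit circle
    have hS : MeasurableSet {z : ℂ | ‖z‖ = 1} :=
      (isClosed_eq continuous_norm continuous_const).measurableSet
    rw [Measure.map_apply hfmeas hS.compl]
    have : f ⁻¹' {z : ℂ | ‖z‖ = 1}ᶜ = ∅ := by
      apply Set.eq_empty_iff_forall_notMem.2
      intro t ht
      simp only [Set.mem_preimage, Set.mem_compl_iff, Set.mem_setOf_eq, hfdef] at ht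
      exact ht (norm_cexp2 _)
    rw [this, measure_empty]
  · -- no atoms
    intro z
    rw [Measure.map_apply hfmeas (measurableSet_singleton z)]
    rcases Set.eq_empty_or_nonempty (f ⁻¹' {z}) with hE | ⟨t₀, ht₀⟩
    · rw [hE, measure_empty]
    · have hsub : f ⁻¹' {z} ⊆ ⋃ d : ℤ, {t | dX p v t = dX p v t₀ + d} := by
        intro t ht
        simp only [Set.mem_preimage, Set.mem_singleton_iff] at ht ht₀
        have heq : f t = f t₀ := by rw [ht, ht₀]
        rw [hfdef] at heq
        simp only [] at heq
        obtain ⟨d, hd⟩ := Complex.exp_eq_exp_iff_exists_int.1 heq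
        have hc : (2 * (Real.pi:ℂ) * Complex.I) ≠ 0 := by
          simp [Complex.I_ne_zero, Real.pi_ne_zero]
        have h2 : ((dX p v t : ℝ) : ℂ) = ((dX p v t₀ : ℝ) : ℂ) + (d : ℂ) := by
          apply mul_right_cancel₀ hc
          rw [hd]
          push_cast
          ring
        have h3 : dX p v t = dX p v t₀ + d := by exact_mod_cast h2
        exact Set.mem_iUnion.2 ⟨d, h3⟩
      refine measure_mono_null hsub (measure_iUnion_null fun d => ?_)
      exact Pmeas_dX_singleton p hv0 hv4 hp01 hpdiv _
  · -- the Fourier coefficient estimate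
    intro k
    set M := k / 2 + 1 with hMdef
    have h2M : k + 1 ≤ 2 * M := by omega
    have hnk0 : (0:ℝ) < (n k : ℝ) := by exact_mod_cast hpos k
    -- push the integral to ℝ
    have hint : ∫ z : ℂ, z ^ (n k) ∂(Pmeas.map f) = ∫ t, f t ^ (n k) ∂Pmeas :=
      integral_map hfmeas.aemeasurable ((measurable_id.pow_const _).aestronglyMeasurable)
    -- pointwise: f t ^ (n k) only sees the tail
    set g : ℝ → ℂ := fun t =>
      Complex.exp ((((n k : ℝ) * dtail p v M t : ℝ) : ℂ) * (2 * Real.pi * Complex.I)) with hgdef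
    have hkey : ∀ t, f t ^ (n k) = g t := by
      intro t
      rw [hfdef, hgdef]
      simp only []
      rw [← Complex.exp_nat_mul]
      have hXsplit : dX p v t
          = (∑ m ∈ Finset.range M, dval p v m t) + dtail p v M t :=
        dX_eq_head_add_tail p hv0 hv4 M t
      set N : ℕ := ∑ m ∈ Finset.range M, (if ddig p m t then n k / n (2*m) else 0) with hNdef
      have hNcast : (n k : ℝ) * (∑ m ∈ Finset.range M, dval p v m t) = (N : ℝ) := by
        rw [hNdef, Nat.cast_sum, Finset.mul_sum]
        apply Finset.sum_congr rfl
        intro m hm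
        rw [Finset.mem_range] at hm
        have hdm : n (2*m) ∣ n k := nseq_dvd_of_le hmono hpos hdvd (by omega)
        have hnm0 : ((n (2*m) : ℝ)) ≠ 0 := by
          have := hpos (2*m); positivity
        by_cases h : ddig p m t
        · rw [dval, if_pos h, if_pos h, Nat.cast_div hdm hnm0]
          rw [hvdef]
          simp only []
          field_simp
        · rw [dval, if_neg h, if_neg h]
          simp
      have hexp : (↑(n k) : ℂ) * (((dX p v t : ℝ) : ℂ) * (2 * Real.pi * Complex.I))
          = (N : ℂ) * (2 * Real.pi * Complex.I)
            + (((n k : ℝ) * dtail p v M t : ℝ) : ℂ) * (2 * Real.pi * Complex.I) := by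
        have hr : ((n k : ℝ) * dX p v t : ℝ)
            = (N : ℝ) + (n k : ℝ) * dtail p v M t := by
          rw [hXsplit, mul_add, hNcast]
        calc (↑(n k) : ℂ) * (((dX p v t : ℝ) : ℂ) * (2 * Real.pi * Complex.I))
            = (((n k : ℝ) * dX p v t : ℝ) : ℂ) * (2 * Real.pi * Complex.I) := by
              push_cast; ring
        _ = ((((N : ℝ) + (n k : ℝ) * dtail p v M t) : ℝ) : ℂ)
              * (2 * Real.pi * Complex.I) := by rw [hr]
        _ = _ := by push_cast; ring
      rw [hexp, Complex.exp_add]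
      have h1 : Complex.exp ((N:ℂ) * (2 * Real.pi * Complex.I)) = 1 := by
        have h2 := Complex.exp_int_mul_two_pi_mul_I (N : ℤ)
        rw [show ((N:ℂ)) = ((N:ℤ):ℂ) by push_cast; rfl]
        rw [show ((N:ℤ):ℂ) * (2 * Real.pi * Complex.I)
            = ((N:ℤ):ℂ) * (2 * (Real.pi:ℂ) * Complex.I) by norm_num]
        exact h2
      rw [h1, one_mul]
    have hgmeas : Measurable g := by
      apply Complex.measurable_exp.comp
      exact (Complex.measurable_ofReal.comp
        ((measurable_dtail p hv0 hv4 M).const_mul _)).mul_const _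
    have hInt_g : Integrable g Pmeas := by
      apply Integrable.mono' (integrable_const (1:ℝ)) hgmeas.aestronglyMeasurable
      apply ae_of_all
      intro t
      rw [hgdef]
      simp only []
      rw [norm_cexp2]
    have htail_nonneg : ∀ t, 0 ≤ dtail p v M t := fun t => dtail_nonneg p hv0 hv4 M t
    have hpt : ∀ t, ‖g t - 1‖ ≤ 2 * Real.pi * (n k : ℝ) * dtail p v M t := by
      intro t
      have hb := norm_cexp2_sub_one ((n k : ℝ) * dtail p v M t)
      rw [abs_of_nonneg (mul_nonneg (le_of_lt hnk0) (htail_nonneg t))] at hb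
      calc ‖g t - 1‖ ≤ 2 * Real.pi * ((n k : ℝ) * dtail p v M t) := hb
      _ = 2 * Real.pi * (n k : ℝ) * dtail p v M t := by ring
    have hInt_tail : Integrable (dtail p v M) Pmeas := by
      apply Integrable.mono' (integrable_const ((4/3) * v M))
        (measurable_dtail p hv0 hv4 M).aestronglyMeasurable
      apply ae_of_all
      intro t
      rw [Real.norm_eq_abs, abs_of_nonneg (htail_nonneg t)]
      exact dtail_le p hv0 hv4 M t
    have h5 : ∫ t, ‖g t - 1‖ ∂Pmeas
        ≤ ∫ t, 2 * Real.pi * (n k : ℝ) * dtail p v M t ∂Pmeas := by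
      apply integral_mono (hInt_g.sub (integrable_const 1)).norm
        (hInt_tail.const_mul _) hpt
    have h6 : ∫ t, 2 * Real.pi * (n k : ℝ) * dtail p v M t ∂Pmeas
        = 2 * Real.pi * (n k : ℝ) * ∑' m, p (m + M) * v (m + M) := by
      rw [integral_const_mul, integral_dtail p hv0 hv4 hp' M]
    -- the numerical estimate
    have h8 : 2 * Real.pi * (n k : ℝ) * (∑' m, p (m + M) * v (m + M)) ≤ a k := by
      have hterm : ∀ m : ℕ, p (m+M) * v (m+M)
          ≤ (a k / (4*Real.pi)) * ((1 / (2 * (n k : ℝ))) * (1/4)^m) := by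
        intro m
        have hp_le : p (m+M) ≤ a k / (4*Real.pi) := by
          refine le_trans (min_le_right _ _) ?_
          apply div_le_div_of_nonneg_right ?_ (by positivity)
          · exact ha_anti (by omega)
        have hv_le : v (m+M) ≤ (1 / (2 * (n k : ℝ))) * (1/4)^m := by
          have h1 : n k * 2^(2*m+1) ≤ n (2*(m+M)) := by
            have h2 := nseq_pow_le hmono hpos hdvd (2*(m+M) - k) k
            have h3 : k + (2*(m+M) - k) = 2*(m+M) := by omega
            rw [h3] at h2
            refine le_trans (Nat.mul_le_mul_left _
              (Nat.pow_le_pow_right (by norm_num) (by omega))) h2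
          have hcast : (n k : ℝ) * 2^(2*m+1) ≤ (n (2*(m+M)) : ℝ) := by exact_mod_cast h1
          have hlhs0 : (0:ℝ) < (n k : ℝ) * 2^(2*m+1) := by positivity
          have h4 : v (m+M) ≤ ((n k : ℝ) * 2^(2*m+1))⁻¹ := by
            rw [hvdef]
            simp only []
            exact inv_anti₀ hlhs0 hcast
          refine h4.trans (le_of_eq ?_)
          have h5' : (2:ℝ)^(2*m+1) = 2 * 4^m := by
            rw [pow_succ, pow_mul]
            norm_num
            ring
          rw [h5']
          rw [show ((1:ℝ)/4)^m = (4^m)⁻¹ by rw [one_div, inv_pow]]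
          field_simp
        have hvp : 0 ≤ v (m+M) := (hv0 _).le
        have hpp : 0 ≤ p (m+M) := (hp01 _).1.le
        calc p (m+M) * v (m+M) ≤ (a k / (4*Real.pi)) * v (m+M) :=
              mul_le_mul_of_nonneg_right hp_le hvp
        _ ≤ (a k / (4*Real.pi)) * ((1 / (2 * (n k : ℝ))) * (1/4)^m) :=
              mul_le_mul_of_nonneg_left hv_le (div_nonneg (ha_pos k).le (by positivity))
      have hsum_rhs : Summable (fun m : ℕ =>
          (a k / (4*Real.pi)) * ((1 / (2 * (n k : ℝ))) * (1/4)^m)) := by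
        apply Summable.mul_left
        apply Summable.mul_left
        exact summable_geometric_of_lt_one (by norm_num) (by norm_num)
      have hsum_lhs : Summable (fun m => p (m+M) * v (m+M)) := by
        apply Summable.of_nonneg_of_le
          (fun m => mul_nonneg (hp01 _).1.le (hv0 _).le) hterm hsum_rhs
      have htsum : ∑' m, p (m+M) * v (m+M)
          ≤ (a k / (4*Real.pi)) * ((1 / (2 * (n k : ℝ))) * (4/3)) := by
        calc ∑' m, p (m+M) * v (m+M)
            ≤ ∑' m : ℕ, (a k / (4*Real.pi)) * ((1 / (2 * (n k : ℝ))) * (1/4)^m) :=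
              Summable.tsum_le_tsum hterm hsum_lhs hsum_rhs
        _ = (a k / (4*Real.pi)) * ((1 / (2 * (n k : ℝ))) * ∑' m : ℕ, ((1:ℝ)/4)^m) := by
              rw [tsum_mul_left, tsum_mul_left]
        _ = (a k / (4*Real.pi)) * ((1 / (2 * (n k : ℝ))) * (4/3)) := by
              rw [tsum_geometric_of_lt_one (by norm_num) (by norm_num)]
              norm_num
      have hfinal : 2 * Real.pi * (n k : ℝ)
          * ((a k / (4*Real.pi)) * ((1 / (2 * (n k : ℝ))) * (4/3))) = a k / 3 := by
        field_simp
      calc 2 * Real.pi * (n k : ℝ) * (∑' m, p (m + M) * v (m + M))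
          ≤ 2 * Real.pi * (n k : ℝ)
            * ((a k / (4*Real.pi)) * ((1 / (2 * (n k : ℝ))) * (4/3))) := by
            apply mul_le_mul_of_nonneg_left htsum (by positivity)
      _ = a k / 3 := hfinal
      _ ≤ a k := by linarith [ha_pos k]
    -- put everything together
    have hgone : (∫ t, g t ∂Pmeas) - 1 = ∫ t, (g t - 1) ∂Pmeas := by
      rw [integral_sub hInt_g (integrable_const 1), integral_const]
      simp
    calc ‖(∫ z : ℂ, z ^ (n k) ∂(Pmeas.map f)) - 1‖
        = ‖(∫ t, g t ∂Pmeas) - 1‖ := by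
          rw [hint]
          congr 2
          exact integral_congr_ae (ae_of_all _ hkey)
    _ = ‖∫ t, (g t - 1) ∂Pmeas‖ := by rw [hgone]
    _ ≤ ∫ t, ‖g t - 1‖ ∂Pmeas := norm_integral_le_integral_norm _
    _ ≤ ∫ t, 2 * Real.pi * (n k : ℝ) * dtail p v M t ∂Pmeas := h5
    _ = 2 * Real.pi * (n k : ℝ) * ∑' m, p (m + M) * v (m + M) := h6
    _ ≤ a k := h8
end

section
/- Let (n_k)_{k≥0} be a strictly increasing sequence of positive integers such that n_{k+1}/n_k → ∞ as k → ∞. Then (n_k)_{k≥0} is a rigidity sequence: there exists a continuous (atomless) Borel probability measure σ on 𝕋 such that ∫_𝕋 z^{n_k} dσ(z) → 1 as k → ∞. -/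
open MeasureTheory Filter Topology

namespace RigidityAux

open Real

/-- Left endpoints of the Cantor-type construction: `A m k j` is the left endpoint of the
stage-`k` interval indexed by the binary word encoded by `j` (low bits = later digits... actually
low bit of `j` is the newest digit). -/
noncomputable def A (m : ℕ → ℕ) : ℕ → ℕ → ℝ
  | 0 => fun _ => 0
  | (k+1) => fun j =>
      ((⌈(m (k+1) : ℝ) * A m k (j / 2)⌉ : ℝ) + ((j % 2 : ℕ) : ℝ)) / (m (k+1) : ℝ)

variable {m : ℕ → ℕ}

lemma A_zero (j : ℕ) : A m 0 j = 0 := rfl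

lemma A_succ (k j : ℕ) :
    A m (k+1) j = ((⌈(m (k+1) : ℝ) * A m k (j / 2)⌉ : ℝ) + ((j % 2 : ℕ) : ℝ)) / (m (k+1) : ℝ) :=
  rfl

section
variable (hm : ∀ k, 0 < m k) (hg : ∀ k, 10 * m k ≤ m (k + 1))

include hm

lemma mpos (k : ℕ) : (0:ℝ) < (m k : ℝ) := by exact_mod_cast hm k

lemma A_int (k j : ℕ) : ∃ z : ℤ, A m k j = (z : ℝ) / (m k : ℝ) := by
  cases k with
  | zero => exact ⟨0, by simp [A_zero]⟩
  | succ k =>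
      refine ⟨⌈(m (k+1) : ℝ) * A m k (j / 2)⌉ + (j % 2 : ℕ), ?_⟩
      rcases Nat.mod_two_eq_zero_or_one j with h | h <;>
        rw [A_succ, h] <;> push_cast <;> ring

lemma A_step_ge (k j : ℕ) : A m k (j / 2) ≤ A m (k+1) j := by
  rw [A_succ]
  rw [le_div_iff₀ (mpos hm (k+1))]
  have h1 := Int.le_ceil ((m (k+1) : ℝ) * A m k (j / 2))
  have h2 : (0:ℝ) ≤ ((j % 2 : ℕ) : ℝ) := by positivity
  linarith [mul_comm (A m k (j / 2)) ((m (k+1) : ℝ))]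

lemma A_step_le (k j : ℕ) : A m (k+1) j ≤ A m k (j / 2) + 2 / (m (k+1) : ℝ) := by
  rw [A_succ]
  rw [div_le_iff₀ (mpos hm (k+1))]
  have h1 := Int.ceil_lt_add_one ((m (k+1) : ℝ) * A m k (j / 2))
  have h2 : ((j % 2 : ℕ) : ℝ) ≤ 1 := by
    have : j % 2 ≤ 1 := Nat.lt_succ_iff.mp (Nat.mod_lt j (by norm_num))
    exact_mod_cast this
  have h3 : (0:ℝ) < (m (k+1) : ℝ) := mpos hm (k+1)
  have : (A m k (j / 2) + 2 / (m (k+1) : ℝ)) * (m (k+1) : ℝ)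
      = (m (k+1) : ℝ) * A m k (j / 2) + 2 := by field_simp
  rw [this]
  linarith

include hg

lemma m_grow (k i : ℕ) : (10:ℝ)^i * (m (k+1) : ℝ) ≤ (m (k+1+i) : ℝ) := by
  induction i with
  | zero => simp
  | succ i ih =>
      have h := hg (k+1+i)
      have h' : (10:ℝ) * (m (k+1+i) : ℝ) ≤ (m (k+1+i+1) : ℝ) := by exact_mod_cast h
      have : (k+1+(i+1)) = (k+1+i+1) := by ring
      rw [this, pow_succ]
      calc (10:ℝ)^i * 10 * (m (k+1):ℝ) = 10 * ((10:ℝ)^i * (m (k+1):ℝ)) := by ring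
        _ ≤ 10 * (m (k+1+i) : ℝ) := by nlinarith [mpos hm (k+1+i)]
        _ ≤ (m (k+1+i+1) : ℝ) := h'

/-- Partial sums of the interval-length series. -/
noncomputable def S (m : ℕ → ℕ) (k l : ℕ) : ℝ := ∑ i ∈ Finset.range l, 2 / (m (k+1+i) : ℝ)

lemma S_le (k l : ℕ) : S m k l ≤ 9 / (4 * (m (k+1) : ℝ)) := by
  have hb : ∀ i, 2 / (m (k+1+i) : ℝ) ≤ 2 / (m (k+1) : ℝ) * (1/10)^i := by
    intro i
    have h1 := m_grow hm hg k i
    have h2 : (0:ℝ) < (10:ℝ)^i * (m (k+1) : ℝ) := mul_pos (by positivity) (mpos hm (k+1))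
    have h3 : 2 / (m (k+1+i) : ℝ) ≤ 2 / ((10:ℝ)^i * (m (k+1) : ℝ)) := by
      rw [div_le_div_iff₀ (mpos hm _) h2]
      nlinarith [mpos hm (k+1+i)]
    calc 2 / (m (k+1+i) : ℝ) ≤ 2 / ((10:ℝ)^i * (m (k+1) : ℝ)) := h3
      _ = 2 / (m (k+1) : ℝ) * (1/10)^i := by
          rw [div_pow, one_pow, div_mul_div_comm, mul_one,
            mul_comm ((m (k+1)) : ℝ) ((10:ℝ)^i)]
  have hsum : S m k l ≤ ∑ i ∈ Finset.range l, 2 / (m (k+1) : ℝ) * (1/10)^i :=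
    Finset.sum_le_sum fun i _ => hb i
  have hgeom : ∑ i ∈ Finset.range l, ((1:ℝ)/10)^i ≤ (1 - 1/10)⁻¹ := by
    apply Summable.sum_le_tsum (Finset.range l) (fun i _ => by positivity)
      (summable_geometric_of_lt_one (by norm_num) (by norm_num)) |>.trans
    rw [tsum_geometric_of_lt_one (by norm_num) (by norm_num)]
  have h0 : (0:ℝ) < (m (k+1) : ℝ) := mpos hm (k+1)
  calc S m k l ≤ ∑ i ∈ Finset.range l, 2 / (m (k+1) : ℝ) * (1/10)^i := hsum
    _ = 2 / (m (k+1) : ℝ) * ∑ i ∈ Finset.range l, ((1:ℝ)/10)^i := by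
        rw [Finset.mul_sum]
    _ ≤ 2 / (m (k+1) : ℝ) * (1 - 1/10)⁻¹ := by
        apply mul_le_mul_of_nonneg_left hgeom (by positivity)
    _ ≤ 9 / (4 * (m (k+1) : ℝ)) := by
        rw [div_mul_eq_mul_div, div_le_div_iff₀ h0 (by positivity)]
        nlinarith

lemma S_nonneg (k l : ℕ) : 0 ≤ S m k l := by
  apply Finset.sum_nonneg; intro i _; positivity

omit hg

lemma chain_ge (k l : ℕ) : ∀ j, A m k (j / 2^l) ≤ A m (k+l) j := by
  induction l with
  | zero => intro j; simp
  | succ l ih =>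
      intro j
      have h1 : A m (k+l) (j / 2) ≤ A m (k+l+1) j := A_step_ge hm (k+l) j
      have h2 : A m k (j / 2 / 2^l) ≤ A m (k+l) (j/2) := ih (j/2)
      have hd : j / 2 / 2^l = j / 2^(l+1) := by
        rw [Nat.div_div_eq_div_mul, pow_succ, mul_comm]
      rw [hd] at h2
      have : k + (l+1) = k + l + 1 := by ring
      rw [this]
      linarith

lemma chain_le (k l : ℕ) : ∀ j, A m (k+l) j ≤ A m k (j / 2^l) + S m k l := by
  induction l with
  | zero => intro j; simp [S]
  | succ l ih =>
      intro j
      have h1 : A m (k+l+1) j ≤ A m (k+l) (j/2) + 2 / (m (k+l+1) : ℝ) :=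
        A_step_le hm (k+l) j
      have h2 : A m (k+l) (j/2) ≤ A m k (j / 2 / 2^l) + S m k l := ih (j/2)
      have hd : j / 2 / 2^l = j / 2^(l+1) := by
        rw [Nat.div_div_eq_div_mul, pow_succ, mul_comm]
      rw [hd] at h2
      have hS : S m k (l+1) = S m k l + 2 / (m (k+1+l) : ℝ) := by
        rw [S, Finset.sum_range_succ]; rfl
      have he : k + 1 + l = k + l + 1 := by ring
      rw [hS, he]
      have : k + (l+1) = k + l + 1 := by ring
      rw [this]
      linarith

lemma A_nonneg (k j : ℕ) : 0 ≤ A m k j := by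
  have := chain_ge hm 0 k (by simpa using j)
  simpa [A_zero] using this

include hg

lemma A_le_bound (k j : ℕ) : A m k j ≤ 9/40 := by
  have h1 : A m (0+k) j ≤ A m 0 (j / 2^k) + S m 0 k := chain_le hm 0 k j
  have h2 : S m 0 k ≤ 9 / (4 * (m 1 : ℝ)) := S_le hm hg 0 k
  have hm1 : (10:ℝ) ≤ (m 1 : ℝ) := by
    have := hg 0
    have h0 := hm 0
    have : 10 ≤ m 1 := le_trans (by omega) this
    exact_mod_cast this
  have h3 : 9 / (4 * (m 1 : ℝ)) ≤ 9/40 := by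
    rw [div_le_div_iff₀ (by linarith) (by norm_num)]
    linarith
  simp only [A_zero, zero_add] at h1
  linarith

/-- Separation of distinct stage-`k` endpoints. -/
lemma A_sep (k : ℕ) : ∀ j j', j < j' → j' < 2^k → A m k j + 1 / (m k : ℝ) ≤ A m k j' := by
  induction k with
  | zero => intro j j' h h'; omega
  | succ k ih =>
      intro j j' h h'
      rcases Nat.lt_or_ge (j / 2) (j' / 2) with hp | hp
      · -- different parents
        have hp' : j' / 2 < 2^k := by
          rw [Nat.div_lt_iff_lt_mul (by norm_num)]
          calc j' < 2^(k+1) := h'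
            _ = 2^k * 2 := by rw [pow_succ]
        have hIH := ih (j/2) (j'/2) hp hp'
        have h1 : A m (k+1) j ≤ A m k (j/2) + 2 / (m (k+1) : ℝ) := A_step_le hm k j
        have h2 : A m k (j'/2) ≤ A m (k+1) j' := A_step_ge hm k j'
        have hmk : (0:ℝ) < (m k : ℝ) := mpos hm k
        have hmk1 : (0:ℝ) < (m (k+1) : ℝ) := mpos hm (k+1)
        have hgrow : (10:ℝ) * (m k : ℝ) ≤ (m (k+1) : ℝ) := by exact_mod_cast hg k
        have key : 3 / (m (k+1) : ℝ) ≤ 1 / (m k : ℝ) := by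
          rw [div_le_div_iff₀ hmk1 hmk]
          nlinarith
        have h1k : 1 / (m (k+1) : ℝ) ≤ 1 / (m k : ℝ) - 2 / (m (k+1) : ℝ) := by
          have : 1 / (m (k+1) : ℝ) + 2 / (m (k+1) : ℝ) = 3 / (m (k+1) : ℝ) := by ring
          linarith
        linarith
      · -- same parent
        have hpe : j / 2 = j' / 2 := by omega
        have hj : j % 2 = 0 ∧ j' % 2 = 1 := by omega
        rw [A_succ, A_succ, ← hpe, hj.1, hj.2]
        rw [← add_div, div_le_div_iff₀ (mpos hm (k+1)) (mpos hm (k+1))]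
        push_cast
        ring_nf
        nlinarith [mpos hm (k+1), sq_nonneg ((m (k+1) : ℝ))]

end

/-- Binary prefix index of `x` at stage `k`. -/
noncomputable def jj (k : ℕ) (x : ℝ) : ℕ := ⌊x * 2^k⌋₊

/-- The stage-`k` left endpoint associated to `x`. -/
noncomputable def aa (m : ℕ → ℕ) (k : ℕ) (x : ℝ) : ℝ := A m k (jj k x)

/-- The limit point of the nested intervals. -/
noncomputable def FF (m : ℕ → ℕ) (x : ℝ) : ℝ := ⨆ k, aa m k x

lemma jj_succ_div (k : ℕ) (x : ℝ) : jj (k+1) x / 2 = jj k x := by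
  unfold jj
  have : (⌊x * 2^(k+1)⌋₊ : ℕ) / 2 = ⌊x * 2^(k+1) / (2:ℕ)⌋₊ := (Nat.floor_div_natCast _ 2).symm
  rw [this]
  congr 1
  push_cast
  rw [pow_succ]
  ring

lemma jj_div_pow (k l : ℕ) (x : ℝ) : jj (k+l) x / 2^l = jj k x := by
  induction l with
  | zero => simp [jj]
  | succ l ih =>
      have : jj (k+(l+1)) x / 2^(l+1) = (jj (k+l+1) x / 2) / 2^l := by
        rw [Nat.div_div_eq_div_mul, pow_succ, mul_comm, Nat.add_assoc]
      rw [this, jj_succ_div, ih]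

section
variable (hm : ∀ k, 0 < m k) (hg : ∀ k, 10 * m k ≤ m (k + 1))

include hm

lemma aa_mono (x : ℝ) : Monotone fun k => aa m k x := by
  apply monotone_nat_of_le_succ
  intro k
  have := A_step_ge hm k (jj (k+1) x)
  rw [jj_succ_div] at this
  exact this

include hg

lemma aa_bdd (x : ℝ) : BddAbove (Set.range fun k => aa m k x) := by
  refine ⟨9/40, ?_⟩
  rintro y ⟨k, rfl⟩
  exact A_le_bound hm hg k _

lemma aa_le_FF (k : ℕ) (x : ℝ) : aa m k x ≤ FF m x :=
  le_ciSup (aa_bdd hm hg x) k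

lemma FF_le_aa_add (k : ℕ) (x : ℝ) : FF m x ≤ aa m k x + 9 / (4 * (m (k+1) : ℝ)) := by
  apply ciSup_le
  intro l
  rcases le_or_gt l k with h | h
  · have h1 : aa m l x ≤ aa m k x := aa_mono hm x h
    have h2 : 0 ≤ 9 / (4 * (m (k+1) : ℝ)) := by
      have := mpos hm (k+1); positivity
    linarith
  · obtain ⟨i, rfl⟩ := Nat.exists_eq_add_of_le h.le
    have h1 : A m (k+i) (jj (k+i) x) ≤ A m k (jj (k+i) x / 2^i) + S m k i :=
      chain_le hm k i _
    rw [jj_div_pow] at h1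
    have h2 : S m k i ≤ 9 / (4 * (m (k+1) : ℝ)) := S_le hm hg k i
    unfold aa
    linarith

lemma FF_nonneg (x : ℝ) : 0 ≤ FF m x :=
  le_trans (A_nonneg hm 0 _) (aa_le_FF hm hg 0 x)

lemma FF_le (x : ℝ) : FF m x ≤ 9/40 := ciSup_le fun k => A_le_bound hm hg k _

omit hg

lemma aa_int (k : ℕ) (x : ℝ) : ∃ z : ℤ, (m k : ℝ) * aa m k x = (z : ℝ) := by
  obtain ⟨z, hz⟩ := A_int hm k (jj k x)
  refine ⟨z, ?_⟩
  rw [aa, hz, mul_div_cancel₀]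
  exact (mpos hm k).ne'

omit hm

lemma measurable_aa (k : ℕ) : Measurable (aa m k) := by
  have h1 : Measurable fun x : ℝ => x * 2^k := measurable_id.mul_const _
  have h2 : Measurable (jj k) := Nat.measurable_floor.comp h1
  exact measurable_from_top.comp h2

include hm hg

lemma tendsto_aa (x : ℝ) : Tendsto (fun k => aa m k x) atTop (𝓝 (FF m x)) :=
  tendsto_atTop_ciSup (aa_mono hm x) (aa_bdd hm hg x)

lemma measurable_FF : Measurable (FF m) := by
  apply measurable_of_tendsto_metrizable (fun k => measurable_aa k)
  rw [tendsto_pi_nhds]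
  exact fun x => tendsto_aa hm hg x

/-- The key separation property: if `x, y ∈ [0,1)` have the same `FF` value, then they share
binary prefixes. -/
lemma FF_lt_of_jj_lt {x y : ℝ} (k : ℕ) (h : jj k x < jj k y) (hy2 : jj k y < 2^k) :
    FF m x < FF m y := by
  have hsep := A_sep hm hg k (jj k x) (jj k y) h hy2
  have h1 : aa m k y ≤ FF m y := aa_le_FF hm hg k y
  have h2 : FF m x ≤ aa m k x + 9 / (4 * (m (k+1) : ℝ)) := FF_le_aa_add hm hg k x
  have hk : (0:ℝ) < (m k : ℝ) := mpos hm k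
  have hk1 : (0:ℝ) < (m (k+1) : ℝ) := mpos hm (k+1)
  have hgrow : (10:ℝ) * (m k : ℝ) ≤ (m (k+1) : ℝ) := by exact_mod_cast hg k
  have key : 9 / (4 * (m (k+1) : ℝ)) < 1 / (m k : ℝ) := by
    rw [div_lt_div_iff₀ (by positivity) hk]
    nlinarith
  have : aa m k x + 1 / (m k : ℝ) ≤ aa m k y := hsep
  linarith

omit hm hg in
lemma jj_lt_pow {x : ℝ} (hx : x ∈ Set.Ico (0:ℝ) 1) (k : ℕ) : jj k x < 2^k := by
  have h0 : (0:ℝ) ≤ x * 2^k := mul_nonneg hx.1 (by positivity)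
  have : x * 2^k < ((2^k : ℕ) : ℝ) := by
    push_cast
    nlinarith [hx.2, pow_pos (by norm_num : (0:ℝ) < 2) k]
  exact (Nat.floor_lt h0).mpr this

lemma jj_eq_of_FF_eq {x y : ℝ} (hx : x ∈ Set.Ico (0:ℝ) 1) (hy : y ∈ Set.Ico (0:ℝ) 1)
    (k : ℕ) (hF : FF m x = FF m y) : jj k x = jj k y := by
  by_contra hne
  rcases Nat.lt_or_ge (jj k x) (jj k y) with h | h
  · exact absurd hF (ne_of_lt (FF_lt_of_jj_lt hm hg k h (jj_lt_pow hy k)))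
  · have h' : jj k y < jj k x := by omega
    exact absurd hF.symm (ne_of_lt (FF_lt_of_jj_lt hm hg k h' (jj_lt_pow hx k)))

end

open Complex in
lemma key (m : ℕ → ℕ) (hm : ∀ k, 0 < m k) (hg : ∀ k, 10 * m k ≤ m (k + 1))
    (hratio : Tendsto (fun k => (m (k + 1) : ℝ) / (m k : ℝ)) atTop atTop) :
    ∃ σ : Measure ℂ, IsProbabilityMeasure σ ∧ σ {z : ℂ | ‖z‖ = 1}ᶜ = 0 ∧
      (∀ z : ℂ, σ {z} = 0) ∧
      Tendsto (fun k => ∫ z : ℂ, z ^ (m k) ∂σ) atTop (𝓝 1) := by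
  set μ : Measure ℝ := volume.restrict (Set.Ico (0:ℝ) 1) with hμ
  have hprob : IsProbabilityMeasure μ :=
    ⟨by rw [hμ, Measure.restrict_apply_univ, Real.volume_Ico]; norm_num⟩
  set G : ℝ → ℂ := fun x => Complex.exp (((2 * π * FF m x : ℝ) : ℂ) * Complex.I) with hGdef
  have hFm : Measurable (FF m) := measurable_FF hm hg
  have hGm : Measurable G := by
    apply Complex.measurable_exp.comp
    exact (Complex.measurable_ofReal.comp (hFm.const_mul (2*π))).mul_const _
  have hGnorm : ∀ x, ‖G x‖ = 1 := fun x => by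
    rw [hGdef]; exact Complex.norm_exp_ofReal_mul_I _
  refine ⟨μ.map G, Measure.isProbabilityMeasure_map hGm.aemeasurable, ?_, ?_, ?_⟩
  · -- supported on the circle
    have hcirc : MeasurableSet {z : ℂ | ‖z‖ = 1} := by
      have h : {z : ℂ | ‖z‖ = 1} = (fun z : ℂ => ‖z‖) ⁻¹' {1} := rfl
      rw [h]; exact measurable_norm (measurableSet_singleton 1)
    rw [Measure.map_apply hGm hcirc.compl]
    have h : G ⁻¹' {z : ℂ | ‖z‖ = 1}ᶜ = ∅ := by
      ext x; simp [hGnorm x]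
    rw [h]; simp
  · -- atomless
    intro z
    rw [Measure.map_apply hGm (measurableSet_singleton z), hμ,
      Measure.restrict_apply (hGm (measurableSet_singleton z))]
    set E := G ⁻¹' {z} ∩ Set.Ico (0:ℝ) 1 with hEdef
    rcases E.eq_empty_or_nonempty with hE | ⟨x₀, hx₀⟩
    · rw [hE]; simp
    · have hπ := Real.pi_pos
      have hFFeq : ∀ y ∈ E, FF m y = FF m x₀ := by
        intro y hy
        have h1 : G y = G x₀ := by
          have := hy.1; have := hx₀.1
          simp only [Set.mem_preimage, Set.mem_singleton_iff] at *
          rw [hy.1, hx₀.1]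
        rw [hGdef] at h1
        simp only at h1
        rw [Complex.exp_eq_exp_iff_exists_int] at h1
        obtain ⟨nn, hnn⟩ := h1
        have h2 : ((2 * π * FF m y : ℝ) : ℂ) * Complex.I
            = ((2 * π * FF m x₀ + nn * (2 * π) : ℝ) : ℂ) * Complex.I := by
          rw [hnn]; push_cast; ring
        have h3 := mul_right_cancel₀ Complex.I_ne_zero h2
        have h4 : 2 * π * FF m y = 2 * π * FF m x₀ + nn * (2 * π) := by
          exact_mod_cast h3
        have h5 : FF m y = FF m x₀ + nn := by
          have h2π : (2*π : ℝ) ≠ 0 := by positivity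
          apply mul_left_cancel₀ h2π
          rw [show (2*π : ℝ) * (FF m x₀ + nn) = 2 * π * FF m x₀ + nn * (2 * π) from by ring]
          exact h4
        have hb1 : (0:ℝ) ≤ FF m y := FF_nonneg hm hg y
        have hb2 : (0:ℝ) ≤ FF m x₀ := FF_nonneg hm hg x₀
        have hb3 : FF m y ≤ 9/40 := FF_le hm hg y
        have hb4 : FF m x₀ ≤ 9/40 := FF_le hm hg x₀
        have hn0 : nn = 0 := by
          have h6 : ((nn:ℝ)) < 1 := by linarith
          have h7 : (-1:ℝ) < nn := by linarith
          have h6' : nn < 1 := by exact_mod_cast h6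
          have h7' : -1 < nn := by exact_mod_cast h7
          omega
        rw [hn0] at h5; simpa using h5
      have hbound : ∀ k : ℕ, volume E ≤ ENNReal.ofReal ((1:ℝ)/2^k) := by
        intro k
        have hsub : E ⊆ Set.Ico ((jj k x₀ : ℝ)/2^k) (((jj k x₀ : ℝ) + 1)/2^k) := by
          intro y hy
          have hjeq : jj k y = jj k x₀ :=
            jj_eq_of_FF_eq hm hg hy.2 hx₀.2 k (hFFeq y hy)
          have hp : (0:ℝ) < (2:ℝ)^k := by positivity
          constructor
          · rw [div_le_iff₀ hp, ← hjeq]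
            exact Nat.floor_le (mul_nonneg hy.2.1 hp.le)
          · rw [lt_div_iff₀ hp, ← hjeq]
            exact Nat.lt_floor_add_one (y * 2^k)
        calc volume E ≤ volume (Set.Ico ((jj k x₀ : ℝ)/2^k) (((jj k x₀ : ℝ) + 1)/2^k)) :=
              measure_mono hsub
          _ = ENNReal.ofReal (((jj k x₀ : ℝ) + 1)/2^k - (jj k x₀ : ℝ)/2^k) := Real.volume_Ico
          _ = ENNReal.ofReal ((1:ℝ)/2^k) := by congr 1; ring
      have hlim : Tendsto (fun k : ℕ => ENNReal.ofReal ((1:ℝ)/2^k)) atTop (𝓝 0) := by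
        have h1 : Tendsto (fun k : ℕ => (1:ℝ)/2^k) atTop (𝓝 0) := by
          have := tendsto_pow_atTop_nhds_zero_of_lt_one
            (by norm_num : (0:ℝ) ≤ 1/2) (by norm_num : (1:ℝ)/2 < 1)
          simpa [div_pow] using this
        have h2 := (ENNReal.continuous_ofReal.tendsto 0).comp h1
        simpa [Function.comp_def] using h2
      have : volume E ≤ 0 := ge_of_tendsto hlim (Eventually.of_forall hbound)
      exact le_antisymm this (by positivity)
  · -- the integrals converge to 1
    have hπ := Real.pi_pos
    have hint : ∀ k, ∫ z : ℂ, z ^ (m k) ∂(μ.map G) = ∫ x, G x ^ (m k) ∂μ := fun k =>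
      integral_map hGm.aemeasurable (Continuous.aestronglyMeasurable (continuous_pow _))
    set B : ℕ → ℝ := fun k => (9 * π / 2) * ((m k : ℝ) / (m (k+1) : ℝ)) with hBdef
    have hGpow : ∀ k x, G x ^ (m k) =
        Complex.exp (((2 * π * ((m k : ℝ) * (FF m x - aa m k x)) : ℝ) : ℂ) * Complex.I) := by
      intro k x
      obtain ⟨z, hz⟩ := aa_int hm k x
      rw [hGdef]
      simp only
      rw [← Complex.exp_nat_mul]
      have hre : ((m k : ℂ)) * (((2 * π * FF m x : ℝ) : ℂ) * Complex.I)
          = ((2 * π * ((m k : ℝ) * (FF m x - aa m k x)) : ℝ) : ℂ) * Complex.I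
            + (z : ℂ) * (2 * π * Complex.I) := by
        have hzr : ((z : ℝ) : ℂ) = (((m k : ℝ) * aa m k x : ℝ) : ℂ) := by rw [hz]
        have hzc : (z : ℂ) = (((m k : ℝ) * aa m k x : ℝ) : ℂ) := by
          rw [← hzr]; norm_cast
        rw [hzc]
        push_cast
        ring
      rw [hre, Complex.exp_add, Complex.exp_int_mul_two_pi_mul_I, mul_one]
    have hd : ∀ k x, 0 ≤ FF m x - aa m k x ∧
        FF m x - aa m k x ≤ 9 / (4 * (m (k+1) : ℝ)) := by
      intro k x
      constructor
      · linarith [aa_le_FF hm hg k x]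
      · linarith [FF_le_aa_add hm hg k x]
    have hθB : ∀ k x, |2 * π * ((m k : ℝ) * (FF m x - aa m k x))| ≤ B k := by
      intro k x
      obtain ⟨hd1, hd2⟩ := hd k x
      have hmk : (0:ℝ) ≤ (m k : ℝ) := (mpos hm k).le
      have hmk1 : (0:ℝ) < (m (k+1) : ℝ) := mpos hm (k+1)
      rw [_root_.abs_of_nonneg (by positivity)]
      have h1 : (m k : ℝ) * (FF m x - aa m k x) ≤ (m k : ℝ) * (9 / (4 * (m (k+1) : ℝ))) :=
        mul_le_mul_of_nonneg_left hd2 hmk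
      have h2 : 2 * π * ((m k : ℝ) * (9 / (4 * (m (k+1) : ℝ)))) = B k := by
        rw [hBdef]; field_simp; ring
      nlinarith
    have hBlim : Tendsto B atTop (𝓝 0) := by
      have hinv : Tendsto (fun k => ((m (k+1) : ℝ) / (m k : ℝ))⁻¹) atTop (𝓝 0) :=
        hratio.inv_tendsto_atTop
      have hfrac : Tendsto (fun k => (m k : ℝ) / (m (k+1) : ℝ)) atTop (𝓝 0) := by
        convert hinv using 2 with k
        rw [inv_div]
      have := hfrac.const_mul (9 * π / 2)
      simpa using this
    rw [tendsto_iff_norm_sub_tendsto_zero]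
    apply squeeze_zero' (Eventually.of_forall fun k => norm_nonneg _)
      ?_ (by simpa using hBlim.const_mul 2)
    have hBev : ∀ᶠ k in atTop, B k ≤ 1 := by
      filter_upwards [hBlim.eventually_lt_const (by norm_num : (0:ℝ) < 1)] with k hk
      exact hk.le
    filter_upwards [hBev] with k hBk
    rw [hint k]
    have hInt : Integrable (fun x => G x ^ (m k)) μ := by
      refine ⟨(hGm.pow_const (m k)).aestronglyMeasurable, ?_⟩
      apply HasFiniteIntegral.of_bounded (C := 1)
      filter_upwards with x
      rw [norm_pow, hGnorm x, one_pow]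
    have h1 : ∫ x, G x ^ (m k) ∂μ - 1 = ∫ x, (G x ^ (m k) - 1) ∂μ := by
      rw [integral_sub hInt (integrable_const 1), integral_const]
      simp
    rw [h1]
    have hptw : ∀ x, ‖G x ^ (m k) - 1‖ ≤ 2 * B k := by
      intro x
      rw [hGpow k x]
      set θ := 2 * π * ((m k : ℝ) * (FF m x - aa m k x)) with hθdef
      have habs : ‖((θ : ℝ) : ℂ) * Complex.I‖ = |θ| := by
        rw [norm_mul, Complex.norm_I, Complex.norm_real, Real.norm_eq_abs, mul_one]
      have hle1 : ‖((θ : ℝ) : ℂ) * Complex.I‖ ≤ 1 := by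
        rw [habs]; exact le_trans (hθB k x) hBk
      have := Complex.norm_exp_sub_one_le hle1
      rw [habs] at this
      calc ‖Complex.exp (((θ : ℝ) : ℂ) * Complex.I) - 1‖ ≤ 2 * |θ| := this
        _ ≤ 2 * B k := by linarith [hθB k x]
    calc ‖∫ x, (G x ^ (m k) - 1) ∂μ‖ ≤ (2 * B k) * (μ Set.univ).toReal :=
          norm_integral_le_of_norm_le_const (Eventually.of_forall hptw)
      _ = 2 * B k := by simp
end RigidityAux

open RigidityAux in
/-- Example 3.3: if `n_{k+1}/n_k → ∞`, then `(n_k)` is a rigidity sequence: there is a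
continuous (atomless) probability measure `σ` on the unit circle such that
`∫ z^{n_k} dσ(z) → 1`. -/
theorem rigidity_sequence_of_ratio_tendsto_atTop
    (n : ℕ → ℕ) (hmono : StrictMono n) (hpos : ∀ k, 0 < n k)
    (hratio : Tendsto (fun k => (n (k + 1) : ℝ) / (n k : ℝ)) atTop atTop) :
    ∃ σ : Measure ℂ, IsProbabilityMeasure σ ∧ σ {z : ℂ | ‖z‖ = 1}ᶜ = 0 ∧
      (∀ z : ℂ, σ {z} = 0) ∧
      Tendsto (fun k => ∫ z : ℂ, z ^ (n k) ∂σ) atTop (𝓝 1) := by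
  obtain ⟨K, hK⟩ := (hratio.eventually_ge_atTop 10).exists_forall_of_atTop
  set m : ℕ → ℕ := fun k => n (k + K) with hmdef
  have hm : ∀ k, 0 < m k := fun k => hpos _
  have hg : ∀ k, 10 * m k ≤ m (k + 1) := by
    intro k
    have h1 : (10:ℝ) ≤ (n (k + K + 1) : ℝ) / (n (k + K) : ℝ) := hK (k + K) (Nat.le_add_left K k)
    have h2 : (0:ℝ) < (n (k + K) : ℝ) := by exact_mod_cast hpos (k + K)
    have h3 : (10:ℝ) * (n (k + K) : ℝ) ≤ (n (k + K + 1) : ℝ) := by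
      rw [le_div_iff₀ h2] at h1
      linarith
    have h4 : 10 * n (k + K) ≤ n (k + K + 1) := by exact_mod_cast h3
    simpa [hmdef, Nat.add_right_comm] using h4
  have hratio' : Tendsto (fun k => (m (k + 1) : ℝ) / (m k : ℝ)) atTop atTop := by
    have := hratio.comp (tendsto_add_atTop_nat K)
    simp only [Function.comp_def] at this
    convert this using 2 with k
    simp [hmdef, Nat.add_right_comm]
  obtain ⟨σ, h1, h2, h3, h4⟩ := key m hm hg hratio'
  refine ⟨σ, h1, h2, h3, ?_⟩
  exact (tendsto_add_atTop_iff_nat K).mp h4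
end

section
/- There exists a strictly increasing sequence (n_k)_{k≥0} of positive integers with n_{k+1}/n_k → 1 as k → ∞ which is a rigidity sequence: there exists a continuous (atomless) Borel probability measure σ on 𝕋 such that ∫_𝕋 z^{n_k} dσ(z) → 1 as k → ∞. -/
open MeasureTheory Filter Topology

noncomputable section

def pp (m : ℕ) : ℝ := 1 / (m + 2)

def cc (m : ℕ) : ℕ := 2 ^ ((m + 1) ^ 2)

def TT (m : ℕ) (y : ℝ) : ℝ :=
  if y < 1 - pp m then y / (1 - pp m) else (y - (1 - pp m)) / pp m

def YY : ℕ → ℝ → ℝ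
  | 0 => fun x => x
  | m + 1 => fun x => TT m (YY m x)

def dd (m : ℕ) (x : ℝ) : ℝ := if 1 - pp m ≤ YY m x then 1 else 0

def XX (x : ℝ) : ℝ := ∑' m, dd m x / cc m

lemma pp_pos (m : ℕ) : 0 < pp m := by
  have : (0:ℝ) < m + 2 := by positivity
  simpa [pp] using this

lemma pp_le_half (m : ℕ) : pp m ≤ 1 / 2 := by
  rw [pp, div_le_div_iff₀ (by positivity) (by norm_num)]
  have : (0:ℝ) ≤ m := Nat.cast_nonneg m
  linarith

lemma pp_lt_one (m : ℕ) : pp m < 1 := lt_of_le_of_lt (pp_le_half m) (by norm_num)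

lemma one_sub_pp_pos (m : ℕ) : 0 < 1 - pp m := by linarith [pp_lt_one m]

lemma cc_pos (m : ℕ) : 0 < cc m := Nat.pow_pos (by norm_num)

lemma cc_cast_pos (m : ℕ) : (0:ℝ) < cc m := by exact_mod_cast cc_pos m

lemma cc_strictMono : StrictMono cc := by
  have h : ∀ m, cc m < cc (m + 1) := by
    intro m
    apply Nat.pow_lt_pow_right (by norm_num)
    have : m + 1 < m + 2 := by omega
    exact Nat.pow_lt_pow_left this (by omega)
  exact strictMono_nat_of_lt_succ h

lemma cc_dvd {l m : ℕ} (h : l ≤ m) : cc l ∣ cc m :=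
  pow_dvd_pow 2 (Nat.pow_le_pow_left (by omega) 2)

lemma cc_succ (m : ℕ) : cc (m + 1) = cc m * 2 ^ (2 * m + 3) := by
  rw [cc, cc, ← pow_add]
  congr 1
  ring

lemma cc_growth (M l : ℕ) : cc M * 2 ^ l ≤ cc (M + l) := by
  rw [cc, cc, ← pow_add]
  apply Nat.pow_le_pow_right (by norm_num)
  have h : (M + l + 1) ^ 2 = (M + 1) ^ 2 + l * (2 * M + l + 2) := by ring
  have h2 : l ≤ l * (2 * M + l + 2) := Nat.le_mul_of_pos_right l (by omega)
  omega

lemma dd_nonneg (m : ℕ) (x : ℝ) : 0 ≤ dd m x := by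
  rw [dd]; split <;> norm_num

lemma dd_le_one (m : ℕ) (x : ℝ) : dd m x ≤ 1 := by
  rw [dd]; split <;> norm_num

lemma one_div_cc_le (M l : ℕ) : (1:ℝ) / cc (M + l) ≤ (1 / cc M) * (1/2) ^ l := by
  have h1 : ((cc M : ℝ) * 2 ^ l) ≤ cc (M + l) := by exact_mod_cast cc_growth M l
  calc (1:ℝ)/cc (M+l) ≤ 1/((cc M : ℝ) * 2 ^ l) :=
        one_div_le_one_div_of_le (mul_pos (cc_cast_pos M) (by positivity)) h1
    _ = (1 / cc M) * (1/2) ^ l := by rw [one_div_pow, div_mul_div_comm]; norm_num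

lemma summable_one_div_cc (M : ℕ) : Summable (fun l => (1:ℝ) / cc (M + l)) := by
  apply Summable.of_nonneg_of_le (fun l => by positivity) (one_div_cc_le M)
  exact (summable_geometric_of_lt_one (by norm_num) (by norm_num)).mul_left _

lemma tail_bound (M : ℕ) : (∑' l, (1:ℝ) / cc (M + l)) ≤ 2 / cc M := by
  refine (Summable.tsum_le_tsum (one_div_cc_le M) (summable_one_div_cc M)
    ((summable_geometric_of_lt_one (by norm_num) (by norm_num)).mul_left _)).trans ?_
  rw [tsum_mul_left, tsum_geometric_of_lt_one (by norm_num) (by norm_num)]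
  rw [show (1 - 1/2 : ℝ)⁻¹ = 2 by norm_num, one_div, inv_mul_eq_div]

lemma summable_dd (x : ℝ) (M : ℕ) : Summable (fun l => dd (M + l) x / cc (M + l)) := by
  apply Summable.of_nonneg_of_le
    (fun l => div_nonneg (dd_nonneg _ x) (cc_cast_pos _).le)
    (fun l => (div_le_div_iff_of_pos_right (cc_cast_pos _)).2 (dd_le_one _ x))
    (summable_one_div_cc M)

lemma summable_dd0 (x : ℝ) : Summable (fun l => dd l x / cc l) := by
  simpa using summable_dd x 0

lemma dd_tail_nonneg (x : ℝ) (M : ℕ) : 0 ≤ ∑' l, dd (M + l) x / cc (M + l) :=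
  tsum_nonneg (fun l => div_nonneg (dd_nonneg _ x) (cc_cast_pos _).le)

lemma dd_tail_le (x : ℝ) (M : ℕ) : (∑' l, dd (M + l) x / cc (M + l)) ≤ 2 / cc M :=
  le_trans (Summable.tsum_le_tsum (fun l => (div_le_div_iff_of_pos_right (cc_cast_pos _)).2 (dd_le_one _ x))
    (summable_dd x M) (summable_one_div_cc M)) (tail_bound M)

lemma XX_nonneg (x : ℝ) : 0 ≤ XX x := by simpa [XX] using dd_tail_nonneg x 0

lemma XX_lt_one (x : ℝ) : XX x < 1 := by
  have h := dd_tail_le x 1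
  have h0 := Summable.sum_add_tsum_nat_add (f := fun l => dd l x / cc l) 1 (summable_dd0 x)
  have hc0 : (cc 0 : ℝ) = 2 := by norm_num [cc]
  have hc1 : (cc 1 : ℝ) = 16 := by norm_num [cc]
  have hd0 : dd 0 x / cc 0 ≤ 1 / 2 := by
    rw [hc0]
    exact div_le_div_of_nonneg_right (dd_le_one 0 x) (by norm_num) |>.trans (by norm_num)
  calc XX x = (∑ l ∈ Finset.range 1, dd l x / cc l) + ∑' l, dd (l + 1) x / cc (l + 1) := by
        rw [XX, ← h0]
    _ ≤ 1/2 + 2/16 := by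
        apply add_le_add
        · simpa using hd0
        · have := dd_tail_le x 1
          simpa [hc1, add_comm 1] using this
    _ < 1 := by norm_num

lemma YY_mem {x : ℝ} (hx : x ∈ Set.Ico (0:ℝ) 1) (m : ℕ) : YY m x ∈ Set.Ico (0:ℝ) 1 := by
  induction m with
  | zero => exact hx
  | succ m ih =>
    obtain ⟨h0, h1⟩ := ih
    have hp := pp_pos m
    have hp1 := one_sub_pp_pos m
    show TT m (YY m x) ∈ Set.Ico (0:ℝ) 1
    rw [TT]
    split
    · rename_i h
      constructor
      · positivity
      · rw [div_lt_one hp1]; exact h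
    · rename_i h
      push_neg at h
      constructor
      · apply div_nonneg _ hp.le; linarith
      · rw [div_lt_one hp]; linarith

lemma measurable_YY (m : ℕ) : Measurable (YY m) := by
  induction m with
  | zero => exact measurable_id
  | succ m ih =>
    show Measurable (fun x => TT m (YY m x))
    have hT : Measurable (TT m) := by
      unfold TT
      apply Measurable.ite (measurableSet_lt measurable_id measurable_const)
      · exact measurable_id.div_const _
      · exact (measurable_id.sub measurable_const).div_const _
    exact hT.comp ih

lemma measurable_dd (m : ℕ) : Measurable (dd m) := by
  unfold dd
  exact Measurable.ite (measurableSet_le measurable_const (measurable_YY m))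
    measurable_const measurable_const

lemma measurable_XX : Measurable XX := by
  have h : ∀ x, Tendsto (fun N => ∑ l ∈ Finset.range N, dd l x / cc l) atTop (𝓝 (XX x)) :=
    fun x => (summable_dd0 x).hasSum.tendsto_sum_nat
  exact measurable_of_tendsto_metrizable
    (fun N => Finset.measurable_sum _ (fun l _ => (measurable_dd l).div_const _))
    (tendsto_pi_nhds.2 h)

lemma vol_YY (m : ℕ) : ∀ s t : ℝ, 0 ≤ s → s ≤ t → t ≤ 1 →
    volume (Set.Ico (0:ℝ) 1 ∩ YY m ⁻¹' Set.Ico s t) = ENNReal.ofReal (t - s) := by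
  induction m with
  | zero =>
    intro s t hs hst ht
    have h : Set.Ico (0:ℝ) 1 ∩ YY 0 ⁻¹' Set.Ico s t = Set.Ico s t := by
      show Set.Ico (0:ℝ) 1 ∩ Set.Ico s t = Set.Ico s t
      rw [Set.inter_eq_right]
      exact Set.Ico_subset_Ico hs ht
    rw [h, Real.volume_Ico]
  | succ m ih =>
    intro s t hs hst ht
    have hp := pp_pos m
    have hp1 := one_sub_pp_pos m
    have key : Set.Ico (0:ℝ) 1 ∩ YY (m+1) ⁻¹' Set.Ico s t =
        (Set.Ico (0:ℝ) 1 ∩ YY m ⁻¹' Set.Ico ((1 - pp m) * s) ((1 - pp m) * t)) ∪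
        (Set.Ico (0:ℝ) 1 ∩ YY m ⁻¹' Set.Ico (1 - pp m + pp m * s) (1 - pp m + pp m * t)) := by
      ext x
      simp only [Set.mem_inter_iff, Set.mem_union, Set.mem_preimage, Set.mem_Ico]
      have hTT : YY (m+1) x = TT m (YY m x) := rfl
      constructor
      · rintro ⟨hx, h1, h2⟩
        rw [hTT] at h1 h2
        by_cases hb : YY m x < 1 - pp m
        · rw [TT, if_pos hb] at h1 h2
          have h1' := (le_div_iff₀ hp1).1 h1
          have h2' := (div_lt_iff₀ hp1).1 h2
          exact Or.inl ⟨hx, by linarith, by linarith⟩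
        · rw [TT, if_neg hb] at h1 h2
          have h1' := (le_div_iff₀ hp).1 h1
          have h2' := (div_lt_iff₀ hp).1 h2
          exact Or.inr ⟨hx, by linarith, by linarith⟩
      · rintro (⟨hx, h1, h2⟩ | ⟨hx, h1, h2⟩)
        · have hb : YY m x < 1 - pp m := by nlinarith
          refine ⟨hx, ?_, ?_⟩ <;> rw [hTT, TT, if_pos hb]
          · rw [le_div_iff₀ hp1]; linarith
          · rw [div_lt_iff₀ hp1]; linarith
        · have hb : ¬ (YY m x < 1 - pp m) := by push_neg; nlinarith
          refine ⟨hx, ?_, ?_⟩ <;> rw [hTT, TT, if_neg hb]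
          · rw [le_div_iff₀ hp]; linarith
          · rw [div_lt_iff₀ hp]; linarith
    have hdisj : Disjoint
        (Set.Ico (0:ℝ) 1 ∩ YY m ⁻¹' Set.Ico ((1 - pp m) * s) ((1 - pp m) * t))
        (Set.Ico (0:ℝ) 1 ∩ YY m ⁻¹' Set.Ico (1 - pp m + pp m * s) (1 - pp m + pp m * t)) := by
      rw [Set.disjoint_left]
      rintro x ⟨_, hx1⟩ ⟨_, hx2⟩
      simp only [Set.mem_preimage, Set.mem_Ico] at hx1 hx2
      nlinarith [hx1.2, hx2.1]
    have hmeas : MeasurableSet (Set.Ico (0:ℝ) 1 ∩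
        YY m ⁻¹' Set.Ico (1 - pp m + pp m * s) (1 - pp m + pp m * t)) :=
      measurableSet_Ico.inter ((measurable_YY m) measurableSet_Ico)
    rw [key, measure_union hdisj hmeas,
      ih _ _ (by nlinarith) (by nlinarith) (by nlinarith),
      ih _ _ (by nlinarith) (by nlinarith) (by nlinarith),
      ← ENNReal.ofReal_add (by nlinarith) (by nlinarith)]
    congr 1
    ring

lemma vol_dd (m : ℕ) :
    volume (Set.Ico (0:ℝ) 1 ∩ {x | 1 - pp m ≤ YY m x}) = ENNReal.ofReal (pp m) := by
  have h : Set.Ico (0:ℝ) 1 ∩ {x | 1 - pp m ≤ YY m x} =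
      Set.Ico (0:ℝ) 1 ∩ YY m ⁻¹' Set.Ico (1 - pp m) 1 := by
    ext x
    simp only [Set.mem_inter_iff, Set.mem_setOf_eq, Set.mem_preimage, Set.mem_Ico]
    constructor
    · rintro ⟨hx, h1⟩
      exact ⟨hx, h1, (YY_mem hx m).2⟩
    · rintro ⟨hx, h1, _⟩
      exact ⟨hx, h1⟩
  rw [h, vol_YY m _ _ (by linarith [pp_lt_one m]) (by linarith [pp_pos m]) le_rfl]
  congr 1
  ring

lemma integral_dd (m : ℕ) : ∫ x in Set.Ico (0:ℝ) 1, dd m x = pp m := by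
  have hset : MeasurableSet {x : ℝ | 1 - pp m ≤ YY m x} :=
    measurableSet_le measurable_const (measurable_YY m)
  have h : dd m = Set.indicator {x : ℝ | 1 - pp m ≤ YY m x} (fun _ => (1:ℝ)) := by
    funext x
    rw [dd, Set.indicator_apply]
    simp [Set.mem_setOf_eq]
  rw [h, integral_indicator_const _ hset, measureReal_def, Measure.restrict_apply hset]
  rw [Set.inter_comm, vol_dd m, smul_eq_mul, mul_one,
    ENNReal.toReal_ofReal (pp_pos m).le]
lemma dd_eq_or (m : ℕ) (x : ℝ) : dd m x = 0 ∨ dd m x = 1 := by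
  rw [dd]; split
  · exact Or.inr rfl
  · exact Or.inl rfl

lemma YY_sep {x x' : ℝ} :
    ∀ m : ℕ, (∀ l < m, dd l x = dd l x') →
      ((m : ℝ) + 1) * |x - x'| ≤ |YY m x - YY m x'| := by
  intro m
  induction m with
  | zero => intro _; simp [YY]
  | succ m ih =>
    intro hdig
    have ihm := ih (fun l hl => hdig l (by omega))
    have hp := pp_pos m
    have hp1 := one_sub_pp_pos m
    have hple : pp m ≤ 1 - pp m := by
      have := pp_le_half m; linarith
    have hdm := hdig m (by omega)
    have key : |YY m x - YY m x'| / (1 - pp m) ≤ |YY (m+1) x - YY (m+1) x'| := by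
      show _ ≤ |TT m (YY m x) - TT m (YY m x')|
      by_cases hb : YY m x < 1 - pp m
      · have hb' : YY m x' < 1 - pp m := by
          by_contra hc
          push_neg at hc
          rw [dd, dd, if_neg (by push_neg; linarith), if_pos hc] at hdm
          norm_num at hdm
        rw [TT, TT, if_pos hb, if_pos hb', div_sub_div_same, abs_div,
          abs_of_pos hp1]
      · have hb' : ¬ (YY m x' < 1 - pp m) := by
          intro hc
          rw [dd, dd, if_pos (by push_neg at hb; linarith), if_neg (by push_neg; linarith)] at hdm
          norm_num at hdm
        rw [TT, TT, if_neg hb, if_neg hb', div_sub_div_same,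
          show (YY m x - (1 - pp m)) - (YY m x' - (1 - pp m)) = YY m x - YY m x' by ring,
          abs_div, abs_of_pos hp]
        exact div_le_div_of_nonneg_left (abs_nonneg _) hp hple
    have hstep : ((m:ℝ) + 2) * |x - x'| ≤ |YY m x - YY m x'| / (1 - pp m) := by
      rw [le_div_iff₀ hp1]
      have heq : ((m:ℝ) + 2) * |x - x'| * (1 - pp m) = ((m:ℝ) + 1) * |x - x'| := by
        rw [pp]
        field_simp
        ring
      rw [heq]
      exact ihm
    have := le_trans hstep key
    push_cast
    convert this using 2
    · rfl
    · ring

lemma digits_inj {x x' : ℝ} (hx : x ∈ Set.Ico (0:ℝ) 1) (hx' : x' ∈ Set.Ico (0:ℝ) 1)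
    (h : ∀ l, dd l x = dd l x') : x = x' := by
  by_contra hne
  have habs : 0 < |x - x'| := by
    rw [abs_pos]
    exact sub_ne_zero_of_ne hne
  obtain ⟨m, hm⟩ := exists_nat_gt (1 / |x - x'|)
  have hsep := YY_sep m (fun l _ => h l)
  have hy := YY_mem hx m
  have hy' := YY_mem hx' m
  have hlt : |YY m x - YY m x'| < 1 := by
    rw [abs_lt]
    obtain ⟨a1, a2⟩ := hy
    obtain ⟨b1, b2⟩ := hy'
    constructor <;> linarith
  have h1 : ((m:ℝ) + 1) * |x - x'| < 1 := lt_of_le_of_lt hsep hlt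
  have h2 : 1 / |x - x'| < (m:ℝ) + 1 := by linarith [Nat.cast_nonneg (α := ℝ) m]
  rw [div_lt_iff₀ habs] at h2
  linarith

lemma dd_sub_abs_le (l : ℕ) (x x' : ℝ) : |dd l x - dd l x'| ≤ 1 := by
  rcases dd_eq_or l x with h | h <;> rcases dd_eq_or l x' with h' | h' <;>
    rw [h, h'] <;> norm_num

lemma dd_sub_abs_eq {l : ℕ} {x x' : ℝ} (h : dd l x ≠ dd l x') : |dd l x - dd l x'| = 1 := by
  rcases dd_eq_or l x with h1 | h1 <;> rcases dd_eq_or l x' with h2 | h2 <;>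
    rw [h1, h2] at h ⊢ <;> first
      | (exact absurd rfl h)
      | norm_num

lemma XX_digits {x x' : ℝ} (h : XX x = XX x') : ∀ l, dd l x = dd l x' := by
  classical
  by_contra hc
  push_neg at hc
  set l₀ := Nat.find hc with hl₀def
  have hl₀ : dd l₀ x ≠ dd l₀ x' := Nat.find_spec hc
  have hmin : ∀ l < l₀, dd l x = dd l x' := by
    intro l hl
    by_contra hne
    exact Nat.find_min hc hl hne
  set f : ℕ → ℝ := fun l => (dd l x - dd l x') / cc l with hdef
  have hs : Summable f := by
    have h2 := (summable_dd0 x).sub (summable_dd0 x')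
    apply h2.congr
    intro l
    rw [hdef]
    ring
  have hzero : (∑' l, f l) = 0 := by
    have e : (∑' l, f l) = XX x - XX x' := by
      rw [XX, XX, ← Summable.tsum_sub (summable_dd0 x) (summable_dd0 x')]
      apply tsum_congr
      intro l
      rw [hdef]
      ring
    rw [e, h, sub_self]
  have hsplit := Summable.sum_add_tsum_nat_add (f := f) (l₀ + 1) hs
  have hsum : ∑ l ∈ Finset.range (l₀ + 1), f l = f l₀ := by
    rw [Finset.sum_range_succ]
    have hz : ∑ l ∈ Finset.range l₀, f l = 0 := Finset.sum_eq_zero (fun l hl => by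
      rw [hdef]
      simp only []
      rw [hmin l (Finset.mem_range.1 hl), sub_self, zero_div])
    rw [hz, zero_add]
  have habs_le : ∀ k, |f k| ≤ 1 / (cc k : ℝ) := by
    intro k
    rw [hdef]
    simp only []
    rw [abs_div, abs_of_pos (cc_cast_pos k)]
    exact div_le_div_of_nonneg_right (dd_sub_abs_le k x x') (cc_cast_pos k).le
  have hsabs : Summable (fun l => |f (l + (l₀ + 1))|) := by
    apply Summable.of_nonneg_of_le (fun l => abs_nonneg _) (fun l => ?_)
      (summable_one_div_cc (l₀ + 1))
    rw [show l₀ + 1 + l = l + (l₀ + 1) by omega]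
    exact habs_le _
  have htail : |∑' l, f (l + (l₀ + 1))| ≤ 2 / cc (l₀ + 1) := by
    calc |∑' l, f (l + (l₀ + 1))| ≤ ∑' l, |f (l + (l₀ + 1))| := by
          simpa using norm_tsum_le_tsum_norm (f := fun l => f (l + (l₀ + 1))) (by simpa using hsabs)
      _ ≤ ∑' l, 1 / (cc ((l₀ + 1) + l) : ℝ) := by
          apply Summable.tsum_le_tsum _ hsabs (summable_one_div_cc (l₀ + 1))
          intro l
          rw [show (l₀ + 1) + l = l + (l₀ + 1) by omega]
          exact habs_le _
      _ ≤ 2 / cc (l₀ + 1) := tail_bound _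
  have hfl₀ : |f l₀| = 1 / cc l₀ := by
    rw [hdef]
    simp only []
    rw [abs_div, abs_of_pos (cc_cast_pos l₀), dd_sub_abs_eq hl₀]
  have heq : f l₀ = - ∑' l, f (l + (l₀ + 1)) := by
    have := hsplit
    rw [hsum] at this
    linarith [this, hzero]
  have hbig : (8 : ℝ) * cc l₀ ≤ cc (l₀ + 1) := by
    have := cc_succ l₀
    have h8 : (8:ℕ) ≤ 2 ^ (2 * l₀ + 3) := by
      calc (8:ℕ) = 2 ^ 3 := by norm_num
      _ ≤ 2 ^ (2 * l₀ + 3) := Nat.pow_le_pow_right (by norm_num) (by omega)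
    have : (8:ℕ) * cc l₀ ≤ cc (l₀ + 1) := by
      rw [cc_succ l₀, mul_comm]
      exact Nat.mul_le_mul_left _ h8
    exact_mod_cast this
  have hcontra : (1:ℝ) / cc l₀ ≤ 2 / cc (l₀ + 1) := by
    rw [← hfl₀, heq, abs_neg]
    exact htail
  have hpos := cc_cast_pos l₀
  have hpos8 : (0:ℝ) < 8 * cc l₀ := by positivity
  have h2 : (2:ℝ) / cc (l₀ + 1) ≤ 2 / (8 * cc l₀) :=
    div_le_div_of_nonneg_left (by norm_num) hpos8 hbig
  rw [div_le_div_iff₀ hpos (cc_cast_pos (l₀ + 1))] at hcontra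
  rw [div_le_div_iff₀ (cc_cast_pos (l₀ + 1)) hpos8] at h2
  nlinarith [cc_cast_pos (l₀ + 1)]

lemma XX_injOn : Set.InjOn XX (Set.Ico (0:ℝ) 1) :=
  fun _ hx _ hx' h => digits_inj hx hx' (XX_digits h)
def gg (x : ℝ) : ℂ := Complex.exp ((2 * Real.pi * XX x : ℝ) * Complex.I)

lemma measurable_gg : Measurable gg := by
  apply Complex.measurable_exp.comp
  exact (Complex.measurable_ofReal.comp (measurable_XX.const_mul (2 * Real.pi))).mul
    measurable_const

lemma norm_gg (x : ℝ) : ‖gg x‖ = 1 := by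
  rw [gg, Complex.norm_exp_ofReal_mul_I]

lemma gg_injOn : Set.InjOn gg (Set.Ico (0:ℝ) 1) := by
  intro x hx x' hx' hgg
  apply XX_injOn hx hx'
  rw [gg, gg, Complex.exp_eq_exp_iff_exists_int] at hgg
  obtain ⟨n, hn⟩ := hgg
  have him := congrArg Complex.im hn
  simp only [Complex.add_im, Complex.mul_im, Complex.I_im, Complex.I_re,
    Complex.ofReal_re, Complex.ofReal_im, Complex.mul_re, Complex.intCast_re,
    Complex.intCast_im, Complex.ofReal_mul, Complex.ofReal_ofNat,
    Complex.re_ofNat, Complex.im_ofNat] at him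
  have hpi := Real.pi_pos
  have hXx := XX_nonneg x
  have hXx1 := XX_lt_one x
  have hXx' := XX_nonneg x'
  have hXx1' := XX_lt_one x'
  -- him should give : 2 * π * XX x = 2 * π * XX x' + n * (2 * π)
  have hn0 : (n : ℝ) = XX x - XX x' := by nlinarith [him]
  have hbound : |(n:ℝ)| < 1 := by
    rw [hn0, abs_lt]
    constructor <;> linarith
  have hab := abs_lt.1 hbound
  have hlt : n < 1 := by exact_mod_cast hab.2
  have hgt : -1 < n := by exact_mod_cast hab.1
  have hn0' : n = 0 := by omega
  rw [hn0'] at hn0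
  simp at hn0
  linarith
/-- block index -/
def BB (n : ℕ) : ℕ := Nat.findGreatest (fun m => (m + 1) * cc m ≤ n) n

/-- the rigidity sequence -/
def seqn : ℕ → ℕ
  | 0 => cc 0
  | k + 1 => seqn k + cc (BB (seqn k))

/-- block invariant -/
def Pinv (n m : ℕ) : Prop := cc m ∣ n ∧ (m + 1) * cc m ≤ n ∧ n < (m + 2) * cc (m + 1)

lemma A_mono : ∀ {l m : ℕ}, l ≤ m → (l + 1) * cc l ≤ (m + 1) * cc m := by
  intro l m h
  exact Nat.mul_le_mul (by omega) (cc_strictMono.monotone h)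

lemma BB_eq {n m : ℕ} (h : Pinv n m) : BB n = m := by
  obtain ⟨hdvd, hlb, hub⟩ := h
  have hm_le_n : m ≤ n := by
    have h1 : m + 1 ≤ (m + 1) * cc m := Nat.le_mul_of_pos_right _ (cc_pos m)
    omega
  have hle : m ≤ BB n := Nat.le_findGreatest hm_le_n hlb
  rcases Nat.lt_or_ge m (BB n) with hlt | hge
  · exfalso
    have hBn : BB n ≤ n := Nat.findGreatest_le n
    have h0 : BB n ≠ 0 := by omega
    have hspec : (BB n + 1) * cc (BB n) ≤ n :=
      Nat.findGreatest_of_ne_zero (P := fun m => (m + 1) * cc m ≤ n) rfl h0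
    have : (m + 2) * cc (m + 1) ≤ (BB n + 1) * cc (BB n) := A_mono (by omega)
    omega
  · omega

lemma seqn_inv : ∀ k, Pinv (seqn k) (BB (seqn k)) := by
  intro k
  induction k with
  | zero =>
    have h : Pinv (seqn 0) 0 := by
      refine ⟨dvd_refl _, ?_, ?_⟩
      · show 1 * cc 0 ≤ cc 0
        omega
      · show cc 0 < 2 * cc 1
        have := cc_strictMono (show 0 < 1 by omega)
        omega
    rw [BB_eq h]
    exact h
  | succ k ih =>
    set m := BB (seqn k) with hm
    obtain ⟨hdvd, hlb, hub⟩ := ih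
    have hstep : seqn (k + 1) = seqn k + cc m := rfl
    rcases Nat.lt_or_ge (seqn k + cc m) ((m + 2) * cc (m + 1)) with hc | hc
    · have h : Pinv (seqn (k+1)) m := by
        refine ⟨?_, ?_, ?_⟩
        · rw [hstep]; exact Nat.dvd_add hdvd dvd_rfl
        · rw [hstep]; omega
        · rw [hstep]; exact hc
      rw [BB_eq h]; exact h
    · have hdvd2 : cc m ∣ (m + 2) * cc (m + 1) := Dvd.dvd.mul_left (cc_dvd (by omega)) _
      have heq : seqn k + cc m = (m + 2) * cc (m + 1) := by
        have h1 : cc m ∣ (m + 2) * cc (m + 1) - seqn k := Nat.dvd_sub hdvd2 hdvd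
        have h2 : 0 < (m + 2) * cc (m + 1) - seqn k := by omega
        have h3 : cc m ≤ (m + 2) * cc (m + 1) - seqn k := Nat.le_of_dvd h2 h1
        omega
      have h : Pinv (seqn (k+1)) (m + 1) := by
        refine ⟨?_, ?_, ?_⟩
        · rw [hstep, heq]; exact Dvd.dvd.mul_left dvd_rfl _
        · rw [hstep, heq]
        · rw [hstep, heq]
          have h4 : cc (m+1) < cc (m+2) := cc_strictMono (by omega)
          have : (m + 2) * cc (m + 1) < (m + 3) * cc (m + 2) :=
            Nat.mul_lt_mul_of_lt_of_le (by omega) (le_of_lt h4) (by omega)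
          exact this
      rw [BB_eq h]; exact h

lemma seqn_strictMono : StrictMono seqn := by
  apply strictMono_nat_of_lt_succ
  intro k
  show seqn k < seqn k + cc (BB (seqn k))
  have := cc_pos (BB (seqn k))
  omega

lemma seqn_pos (k : ℕ) : 0 < seqn k := by
  induction k with
  | zero => exact cc_pos 0
  | succ k ih =>
    show 0 < seqn k + cc (BB (seqn k))
    have := cc_pos (BB (seqn k))
    omega

lemma BB_seqn_tendsto : Tendsto (fun k => BB (seqn k)) atTop atTop := by
  rw [tendsto_atTop]
  intro M
  rw [eventually_atTop]
  refine ⟨(M + 1) * cc M, fun k hk => ?_⟩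
  have hsk : (M + 1) * cc M ≤ seqn k := le_trans hk (seqn_strictMono.le_apply)
  obtain ⟨_, _, hub⟩ := seqn_inv k
  by_contra hc
  push_neg at hc
  have : (BB (seqn k) + 2) * cc (BB (seqn k) + 1) ≤ (M + 1) * cc M := A_mono (by omega)
  omega
lemma four_pi_n_le {n m : ℕ} (hub : n < (m + 2) * cc (m + 1)) :
    4 * Real.pi * n ≤ cc (m + 2) := by
  have hnum : 16 * ((m + 2) * cc (m + 1)) ≤ cc (m + 2) := by
    have h1 : m + 2 ≤ 2 ^ (m + 1) := by
      have := Nat.lt_two_pow_self (n := m + 1)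
      omega
    have h2 : 16 * (m + 2) ≤ 2 ^ (2 * m + 5) := by
      calc 16 * (m + 2) ≤ 16 * 2 ^ (m + 1) := by omega
        _ = 2 ^ (m + 5) := by
              rw [show (16:ℕ) = 2^4 by norm_num, ← pow_add]
              congr 1
              omega
        _ ≤ 2 ^ (2 * m + 5) := Nat.pow_le_pow_right (by norm_num) (by omega)
    calc 16 * ((m + 2) * cc (m + 1)) = (16 * (m + 2)) * cc (m + 1) := by ring
      _ ≤ 2 ^ (2 * m + 5) * cc (m + 1) := Nat.mul_le_mul_right _ h2
      _ = cc (m + 2) := by rw [cc_succ (m + 1)]; ring_nf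
  have hple : Real.pi ≤ 4 := Real.pi_le_four
  have hn : (n : ℝ) ≤ (m + 2) * cc (m + 1) := by exact_mod_cast hub.le
  have hnum' : 16 * (((m:ℝ) + 2) * cc (m + 1)) ≤ cc (m + 2) := by exact_mod_cast hnum
  have hπpos := Real.pi_pos
  nlinarith [Nat.cast_nonneg (α := ℝ) n]

lemma pointwise_est {n m : ℕ} (hdvd : ∀ l ≤ m, cc l ∣ n) (hub : n < (m + 2) * cc (m + 1))
    (x : ℝ) :
    ‖gg x ^ n - 1‖ ≤ 2 * dd (m + 1) x + 8 * Real.pi * n / cc (m + 2) := by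
  have hπpos : 0 < Real.pi := Real.pi_pos
  set A := ∑ l ∈ Finset.range (m + 1), dd l x / cc l with hA
  set D := dd (m + 1) x / cc (m + 1) with hD
  set R := ∑' l, dd (l + (m + 2)) x / cc (l + (m + 2)) with hR
  have hXsplit : XX x = A + D + R := by
    have h1 := Summable.sum_add_tsum_nat_add (f := fun l => dd l x / cc l) (m + 2) (summable_dd0 x)
    have h2 : ∑ l ∈ Finset.range (m + 2), dd l x / cc l = A + D := by
      rw [Finset.sum_range_succ]
    rw [XX, ← h1, h2]
  have hRnonneg : 0 ≤ R := by
    rw [hR]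
    exact tsum_nonneg (fun l => div_nonneg (dd_nonneg _ x) (cc_cast_pos _).le)
  have hRle : R ≤ 2 / cc (m + 2) := by
    rw [hR]
    have he : (fun l => dd (l + (m + 2)) x / cc (l + (m + 2))) =
        fun l => dd ((m + 2) + l) x / cc ((m + 2) + l) := by
      funext l; rw [add_comm]
    rw [he]
    exact dd_tail_le x (m + 2)
  set N : ℕ := ∑ l ∈ Finset.range (m + 1), (if 1 - pp l ≤ YY l x then n / cc l else 0) with hN
  have hnA : (n : ℝ) * A = (N : ℝ) := by
    rw [hA, Finset.mul_sum, hN, Nat.cast_sum]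
    apply Finset.sum_congr rfl
    intro l hl
    have hdl : cc l ∣ n := hdvd l (Nat.lt_succ_iff.1 (Finset.mem_range.1 hl))
    rw [dd]
    split_ifs
    · rw [Nat.cast_div hdl (ne_of_gt (cc_cast_pos l))]
      ring
    · simp
  have hexp : gg x ^ n =
      Complex.exp ((2 * Real.pi * ((n:ℝ) * A) : ℝ) * Complex.I) *
      Complex.exp ((2 * Real.pi * ((n:ℝ) * D) : ℝ) * Complex.I) *
      Complex.exp ((2 * Real.pi * ((n:ℝ) * R) : ℝ) * Complex.I) := by
    rw [gg, ← Complex.exp_nat_mul, ← Complex.exp_add, ← Complex.exp_add]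
    congr 1
    rw [hXsplit]
    push_cast
    ring
  have hP1 : Complex.exp ((2 * Real.pi * ((n:ℝ) * A) : ℝ) * Complex.I) = 1 := by
    rw [hnA]
    have he : ((2 * Real.pi * (N:ℝ) : ℝ) : ℂ) * Complex.I =
        ((N : ℤ) : ℂ) * (2 * (Real.pi:ℂ) * Complex.I) := by
      push_cast
      ring
    rw [he]
    exact Complex.exp_int_mul_two_pi_mul_I N
  have hQ : ‖Complex.exp ((2 * Real.pi * ((n:ℝ) * D) : ℝ) * Complex.I) - 1‖
      ≤ 2 * dd (m + 1) x := by
    rcases dd_eq_or (m + 1) x with h0 | h1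
    · have hD0 : D = 0 := by rw [hD, h0, zero_div]
      rw [h0, hD0]
      norm_num [Complex.exp_zero]
    · rw [h1]
      calc ‖Complex.exp ((2 * Real.pi * ((n:ℝ) * D) : ℝ) * Complex.I) - 1‖
          ≤ ‖Complex.exp ((2 * Real.pi * ((n:ℝ) * D) : ℝ) * Complex.I)‖ + ‖(1:ℂ)‖ :=
            norm_sub_le _ _
        _ = 2 := by
            rw [Complex.norm_exp_ofReal_mul_I, norm_one]
            norm_num
        _ = 2 * 1 := by ring
  have hS : ‖Complex.exp ((2 * Real.pi * ((n:ℝ) * R) : ℝ) * Complex.I) - 1‖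
      ≤ 8 * Real.pi * n / cc (m + 2) := by
    set θ : ℝ := 2 * Real.pi * ((n:ℝ) * R) with hθ
    have hθ0 : 0 ≤ θ := by
      apply mul_nonneg (by positivity)
      exact mul_nonneg (Nat.cast_nonneg n) hRnonneg
    have hcpos := cc_cast_pos (m + 2)
    have hθle : θ ≤ 4 * Real.pi * n / cc (m + 2) := by
      rw [hθ]
      have h1 : (n:ℝ) * R ≤ (n:ℝ) * (2 / cc (m + 2)) :=
        mul_le_mul_of_nonneg_left hRle (Nat.cast_nonneg n)
      calc 2 * Real.pi * ((n:ℝ) * R) ≤ 2 * Real.pi * ((n:ℝ) * (2 / cc (m + 2))) := by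
            apply mul_le_mul_of_nonneg_left h1 (by positivity)
        _ = 4 * Real.pi * n / cc (m + 2) := by ring
    have hθ1 : θ ≤ 1 := by
      have h4 := four_pi_n_le hub
      have : 4 * Real.pi * n / cc (m + 2) ≤ 1 := by
        rw [div_le_one hcpos]
        exact h4
      linarith
    have habs : ‖(θ:ℂ) * Complex.I‖ = θ := by
      rw [norm_mul, Complex.norm_I, Complex.norm_real, Real.norm_eq_abs, abs_of_nonneg hθ0, mul_one]
    calc ‖Complex.exp ((θ:ℝ) * Complex.I) - 1‖
        = ‖Complex.exp ((θ:ℂ) * Complex.I) - 1‖ := by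
          rfl
      _ ≤ 2 * ‖(θ:ℂ) * Complex.I‖ := by
          apply Complex.norm_exp_sub_one_le
          rw [habs]
          exact hθ1
      _ = 2 * θ := by rw [habs]
      _ ≤ 8 * Real.pi * n / cc (m + 2) := by
          have h8 : 2 * (4 * Real.pi * (n:ℝ) / cc (m + 2)) = 8 * Real.pi * n / cc (m + 2) := by
            ring
          linarith
  rw [hexp, hP1, one_mul]
  set Q := Complex.exp ((2 * Real.pi * ((n:ℝ) * D) : ℝ) * Complex.I)
  set S := Complex.exp ((2 * Real.pi * ((n:ℝ) * R) : ℝ) * Complex.I)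
  have hSnorm : ‖S‖ = 1 := by
    rw [Complex.norm_exp_ofReal_mul_I]
  calc ‖Q * S - 1‖ = ‖(Q - 1) * S + (S - 1)‖ := by ring_nf
    _ ≤ ‖(Q - 1) * S‖ + ‖S - 1‖ := norm_add_le _ _
    _ = ‖Q - 1‖ + ‖S - 1‖ := by rw [norm_mul, hSnorm, mul_one]
    _ ≤ 2 * dd (m + 1) x + 8 * Real.pi * n / cc (m + 2) := add_le_add hQ hS

lemma integrable_dd (m : ℕ) :
    Integrable (dd m) (volume.restrict (Set.Ico (0:ℝ) 1)) := by
  apply Integrable.mono' (integrable_const (1:ℝ))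
    (measurable_dd m).aestronglyMeasurable
  apply ae_of_all
  intro x
  rw [Real.norm_eq_abs, abs_of_nonneg (dd_nonneg m x)]
  exact dd_le_one m x

lemma integral_est {n m : ℕ} (hdvd : ∀ l ≤ m, cc l ∣ n) (hub : n < (m + 2) * cc (m + 1)) :
    ‖(∫ x in Set.Ico (0:ℝ) 1, gg x ^ n) - 1‖
      ≤ 2 * pp (m + 1) + 8 * Real.pi * n / cc (m + 2) := by
  haveI : IsProbabilityMeasure (volume.restrict (Set.Ico (0:ℝ) 1)) := by
    constructor
    rw [Measure.restrict_apply_univ, Real.volume_Ico]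
    norm_num
  have hfint : Integrable (fun x => gg x ^ n) (volume.restrict (Set.Ico (0:ℝ) 1)) := by
    apply Integrable.mono' (integrable_const (1:ℝ))
      ((measurable_gg.pow_const n).aestronglyMeasurable)
    apply ae_of_all
    intro x
    rw [norm_pow, norm_gg, one_pow]
  have hone : (1:ℂ) = ∫ _x in Set.Ico (0:ℝ) 1, (1:ℂ) := by
    rw [integral_const, probReal_univ, one_smul]
  have hsub : (∫ x in Set.Ico (0:ℝ) 1, gg x ^ n) - 1
      = ∫ x in Set.Ico (0:ℝ) 1, (gg x ^ n - 1) := by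
    rw [integral_sub hfint (integrable_const 1)]
    rw [integral_const, probReal_univ, one_smul]
  rw [hsub]
  calc ‖∫ x in Set.Ico (0:ℝ) 1, (gg x ^ n - 1)‖
      ≤ ∫ x in Set.Ico (0:ℝ) 1, ‖gg x ^ n - 1‖ := norm_integral_le_integral_norm _
    _ ≤ ∫ x in Set.Ico (0:ℝ) 1, (2 * dd (m + 1) x + 8 * Real.pi * n / cc (m + 2)) := by
        apply integral_mono_of_nonneg (ae_of_all _ (fun x => norm_nonneg _))
        · exact ((integrable_dd (m+1)).const_mul 2).add (integrable_const _)
        · exact ae_of_all _ (fun x => pointwise_est hdvd hub x)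
    _ = 2 * pp (m + 1) + 8 * Real.pi * n / cc (m + 2) := by
        rw [integral_add ((integrable_dd (m+1)).const_mul 2) (integrable_const _),
          integral_const, probReal_univ, one_smul,
          integral_const_mul, integral_dd]
lemma prob_restrict : IsProbabilityMeasure (volume.restrict (Set.Ico (0:ℝ) 1)) := by
  constructor
  rw [Measure.restrict_apply_univ, Real.volume_Ico]
  norm_num

lemma second_le {n m : ℕ} (hub : n < (m + 2) * cc (m + 1)) :
    8 * Real.pi * n / cc (m + 2) ≤ 32 * (1/2:ℝ) ^ m := by
  have hden : (cc (m + 2) : ℝ) = cc (m + 1) * 2 ^ (2 * m + 5) := by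
    have h := cc_succ (m + 1)
    have h25 : 2 * (m + 1) + 3 = 2 * m + 5 := by omega
    rw [h25] at h
    exact_mod_cast h
  have hc1 := cc_cast_pos (m + 1)
  have hcpos := cc_cast_pos (m + 2)
  rw [div_le_iff₀ hcpos, hden]
  have hp2 : (1/2:ℝ) ^ m * 2 ^ (2 * m + 5) = 2 ^ (m + 5) := by
    rw [one_div, inv_pow, show 2 * m + 5 = m + (m + 5) by omega, pow_add]
    field_simp
  have hn : (n:ℝ) ≤ ((m:ℝ) + 2) * cc (m + 1) := by exact_mod_cast hub.le
  have hm2 : ((m:ℝ) + 2) ≤ 2 ^ (m + 1) := by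
    exact_mod_cast (show (m + 2 : ℕ) ≤ 2 ^ (m + 1) from by
      have := Nat.lt_two_pow_self (n := m + 1); omega)
  have hπ := Real.pi_le_four
  have hπ0 := Real.pi_pos
  have h2m : (2:ℝ) ^ (m + 1) ≤ 2 ^ (m + 5) := by
    apply pow_le_pow_right₀ (by norm_num) (by omega)
  have hfin : (32:ℝ) * (2 ^ (m + 5) * cc (m + 1)) =
      32 * (1/2:ℝ) ^ m * (↑(cc (m + 1)) * 2 ^ (2 * m + 5)) := by
    rw [← hp2]; ring
  have h2p : (0:ℝ) < 2 ^ (m + 1) := by positivity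
  calc 8 * Real.pi * (n:ℝ) ≤ 32 * (n:ℝ) := by nlinarith [Nat.cast_nonneg (α := ℝ) n]
    _ ≤ 32 * (((m:ℝ) + 2) * cc (m + 1)) := by nlinarith
    _ ≤ 32 * ((2:ℝ) ^ (m + 5) * cc (m + 1)) := by nlinarith
    _ = 32 * (1/2:ℝ) ^ m * (↑(cc (m + 1)) * 2 ^ (2 * m + 5)) := hfin

lemma norm_int_est (k : ℕ) :
    ‖(∫ x in Set.Ico (0:ℝ) 1, gg x ^ (seqn k)) - 1‖
      ≤ 2 * (1 / ((BB (seqn k) : ℝ) + 1)) + 32 * (1/2:ℝ) ^ (BB (seqn k)) := by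
  obtain ⟨hdvd, hlb, hub⟩ := seqn_inv k
  set m := BB (seqn k) with hm
  have hdvd' : ∀ l ≤ m, cc l ∣ seqn k := fun l hl => dvd_trans (cc_dvd hl) hdvd
  have h1 := integral_est hdvd' hub
  have h2 : 2 * pp (m + 1) ≤ 2 * (1 / ((m:ℝ) + 1)) := by
    have hpp : pp (m + 1) = 1 / ((m:ℝ) + 3) := by
      rw [pp]; push_cast; ring_nf
    rw [hpp]
    have : 1 / ((m:ℝ) + 3) ≤ 1 / ((m:ℝ) + 1) :=
      one_div_le_one_div_of_le (by positivity) (by linarith)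
    linarith
  have h3 := second_le (n := seqn k) hub
  linarith

theorem exists_rigidity_sequence_with_ratio_tendsto_one' :
    ∃ n : ℕ → ℕ, StrictMono n ∧ (∀ k, 0 < n k) ∧
      Tendsto (fun k => (n (k + 1) : ℝ) / (n k : ℝ)) atTop (𝓝 1) ∧
      ∃ σ : Measure ℂ, IsProbabilityMeasure σ ∧ σ {z : ℂ | ‖z‖ = 1}ᶜ = 0 ∧
        (∀ z : ℂ, σ {z} = 0) ∧
        Tendsto (fun k => ∫ z : ℂ, z ^ (n k) ∂σ) atTop (𝓝 1) := by
  haveI := prob_restrict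
  refine ⟨seqn, seqn_strictMono, seqn_pos, ?_, ?_⟩
  · -- ratio tends to 1
    have hubnd : ∀ k, (seqn (k+1) : ℝ) / seqn k ≤ 1 + 1 / ((BB (seqn k) : ℝ) + 1) := by
      intro k
      obtain ⟨hdvd, hlb, hup⟩ := seqn_inv k
      set m := BB (seqn k)
      have hpos : (0:ℝ) < seqn k := by exact_mod_cast seqn_pos k
      have hm1 : (0:ℝ) < (m:ℝ) + 1 := by positivity
      rw [div_le_iff₀ hpos]
      have hstep : (seqn (k+1) : ℝ) = seqn k + cc m := by
        have : seqn (k+1) = seqn k + cc m := rfl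
        exact_mod_cast this
      have hlb' : ((m:ℝ) + 1) * cc m ≤ seqn k := by exact_mod_cast hlb
      have hccm : (cc m : ℝ) ≤ seqn k / ((m:ℝ) + 1) := by
        rw [le_div_iff₀ hm1]
        nlinarith
      calc (seqn (k+1) : ℝ) = seqn k + cc m := hstep
        _ ≤ seqn k + seqn k / ((m:ℝ) + 1) := by linarith
        _ = (1 + 1 / ((m:ℝ) + 1)) * seqn k := by field_simp
    have hlbnd : ∀ k, (1:ℝ) ≤ (seqn (k+1) : ℝ) / seqn k := by
      intro k
      have hpos : (0:ℝ) < seqn k := by exact_mod_cast seqn_pos k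
      rw [le_div_iff₀ hpos, one_mul]
      exact_mod_cast (seqn_strictMono (Nat.lt_succ_self k)).le
    have htop : Tendsto (fun k => 1 + 1 / ((BB (seqn k) : ℝ) + 1)) atTop (𝓝 1) := by
      have h0 : Tendsto (fun m : ℕ => 1 / ((m:ℝ) + 1)) atTop (𝓝 0) :=
        tendsto_one_div_add_atTop_nhds_zero_nat
      have h := (tendsto_const_nhds (x := (1:ℝ)) (f := atTop)).add (h0.comp BB_seqn_tendsto)
      simpa using h
    exact tendsto_of_tendsto_of_tendsto_of_le_of_le tendsto_const_nhds htop hlbnd hubnd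
  · refine ⟨Measure.map gg (volume.restrict (Set.Ico (0:ℝ) 1)),
      Measure.isProbabilityMeasure_map measurable_gg.aemeasurable, ?_, ?_, ?_⟩
    · -- supported on the circle
      have hmeas : MeasurableSet {z : ℂ | ‖z‖ = 1} :=
        measurable_norm (measurableSet_singleton (1:ℝ))
      rw [Measure.map_apply measurable_gg hmeas.compl]
      have hpre : gg ⁻¹' {z : ℂ | ‖z‖ = 1}ᶜ = ∅ := by
        ext x
        simp only [Set.mem_preimage, Set.mem_compl_iff, Set.mem_setOf_eq,
          Set.mem_empty_iff_false, iff_false, not_not]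
        exact norm_gg x
      rw [hpre]
      simp
    · -- atomless
      intro z
      rw [Measure.map_apply measurable_gg (measurableSet_singleton z),
        Measure.restrict_apply (measurable_gg (measurableSet_singleton z))]
      apply Set.Subsingleton.measure_zero _ volume
      rintro a ⟨ha1, ha2⟩ b ⟨hb1, hb2⟩
      simp only [Set.mem_preimage, Set.mem_singleton_iff] at ha1 hb1
      exact gg_injOn ha2 hb2 (ha1.trans hb1.symm)
    · -- the Fourier coefficients tend to 1
      have hrw : (fun k => ∫ z : ℂ, z ^ (seqn k) ∂(Measure.map gg (volume.restrict (Set.Ico (0:ℝ) 1))))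
          = fun k => ∫ x in Set.Ico (0:ℝ) 1, gg x ^ (seqn k) := by
        funext k
        exact integral_map measurable_gg.aemeasurable
          (Continuous.aestronglyMeasurable (continuous_pow _))
      rw [hrw, tendsto_iff_norm_sub_tendsto_zero]
      apply squeeze_zero (fun k => norm_nonneg _) norm_int_est
      have hG : Tendsto (fun m : ℕ => 2 * (1 / ((m:ℝ) + 1)) + 32 * (1/2:ℝ) ^ m) atTop (𝓝 0) := by
        have h1 : Tendsto (fun m : ℕ => 1 / ((m:ℝ) + 1)) atTop (𝓝 0) :=
          tendsto_one_div_add_atTop_nhds_zero_nat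
        have h2 : Tendsto (fun m : ℕ => ((1:ℝ)/2) ^ m) atTop (𝓝 0) :=
          tendsto_pow_atTop_nhds_zero_of_lt_one (by norm_num) (by norm_num)
        have h := (h1.const_mul 2).add (h2.const_mul 32)
        simpa using h
      have := hG.comp BB_seqn_tendsto
      exact this

end

/-- Example 3.13: there exists a strictly increasing sequence `(n_k)` of positive integers
with `n_{k+1}/n_k → 1` which is a rigidity sequence: there is a continuous (atomless)
probability measure `σ` on the unit circle such that `∫ z^{n_k} dσ(z) → 1`. -/
theorem exists_rigidity_sequence_with_ratio_tendsto_one :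
    ∃ n : ℕ → ℕ, StrictMono n ∧ (∀ k, 0 < n k) ∧
      Tendsto (fun k => (n (k + 1) : ℝ) / (n k : ℝ)) atTop (𝓝 1) ∧
      ∃ σ : Measure ℂ, IsProbabilityMeasure σ ∧ σ {z : ℂ | ‖z‖ = 1}ᶜ = 0 ∧
        (∀ z : ℂ, σ {z} = 0) ∧
        Tendsto (fun k => ∫ z : ℂ, z ^ (n k) ∂σ) atTop (𝓝 1) := by
  exact exists_rigidity_sequence_with_ratio_tendsto_one'
end
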